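/- arXiv:math/0408026 — 7 statements merged into one kernel-verified Lean document; each statement's English description precedes it below -/
import Mathlib

section
/- Any rectifiable curve γ in R^3 from a to b that stays outside the open unit ball B(p) centered at p, where r = |a-p| ≥ 1, s = |b-p| ≥ 1, and θ = ∠apb, has length at least m(r,s,θ), where m(r,s,θ) = sqrt(r²+s²-2rs·cos θ) if θ ≤ arccos(1/r)+arccos(1/s), and m(r,s,θ) = f(r)+f(s)+(θ-π) otherwise, with f(r) = sqrt(r²-1)+arcsin(1/r). -/
open Real Set

noncomputable def f (r : ℝ) : ℝ := Real.sqrt (r^2 - 1) + Real.arcsin (1/r)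

noncomputable def g (r : ℝ) : ℝ :=
  if r ≤ 2 then 2*Real.pi - 2*Real.arcsin (r/2) else Real.pi

noncomputable def m (r s θ : ℝ) : ℝ :=
  if θ ≤ Real.arccos (1/r) + Real.arccos (1/s) then
    Real.sqrt (r^2 + s^2 - 2*r*s*Real.cos θ)
  else f r + f s + (θ - Real.pi)

abbrev E3 := EuclideanSpace ℝ (Fin 3)

/-- A set `K` has thickness at least 1 (thickness = twice infimal circumradius over
triples of distinct points) iff no three distinct points of `K` lie on a common
sphere of radius less than `1/2`. -/
def ThickOne (K : Set E3) : Prop :=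
  ∀ x ∈ K, ∀ y ∈ K, ∀ z ∈ K, x ≠ y → y ≠ z → x ≠ z →
    ∀ (c : E3) (ρ : ℝ), dist x c = ρ → dist y c = ρ → dist z c = ρ → 1/2 ≤ ρ


namespace CKS
open InnerProductGeometry

noncomputable def F (x : ℝ) : ℝ := Real.sqrt (x^2 - 1)
noncomputable def B (x : ℝ) : ℝ := Real.arccos (1/x)
noncomputable def C (x y t : ℝ) : ℝ := Real.sqrt (x^2 + y^2 - 2*x*y*Real.cos t)

variable {x y : ℝ}

lemma F_nonneg (x : ℝ) : 0 ≤ F x := Real.sqrt_nonneg _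
lemma B_nonneg (x : ℝ) : 0 ≤ B x := Real.arccos_nonneg _
lemma C_nonneg (x y t : ℝ) : 0 ≤ C x y t := Real.sqrt_nonneg _

lemma B_lt_pi_div_two (hx : 1 ≤ x) : B x < π/2 :=
  Real.arccos_lt_pi_div_two.2 (by positivity)

lemma F_sq (hx : 1 ≤ x) : F x ^ 2 = x^2 - 1 :=
  Real.sq_sqrt (by nlinarith)

lemma cos_B (hx : 1 ≤ x) : Real.cos (B x) = 1/x := by
  apply Real.cos_arccos
  · have : (0:ℝ) < 1/x := by positivity
    linarith
  · rw [div_le_one (by linarith)]; linarith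

lemma sin_B (hx : 1 ≤ x) : Real.sin (B x) = F x / x := by
  have hx0 : (0:ℝ) < x := by linarith
  rw [B, Real.sin_arccos, F]
  rw [show 1 - (1/x)^2 = (x^2-1)/x^2 by field_simp]
  rw [Real.sqrt_div (by nlinarith), Real.sqrt_sq hx0.le]

lemma tan_B (hx : 1 ≤ x) : Real.tan (B x) = F x := by
  have hx0 : (0:ℝ) < x := by linarith
  rw [Real.tan_eq_sin_div_cos, sin_B hx, cos_B hx]
  field_simp

lemma f_eq (x : ℝ) : f x = F x + (π/2 - B x) := by
  rw [f, F, B, Real.arccos_eq_pi_div_two_sub_arcsin]; ring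

lemma C_symm (x y t : ℝ) : C x y t = C y x t := by
  rw [C, C]; ring_nf


-- new material
lemma C_eq_abs (x y t : ℝ) :
    C x y t = ‖(x:ℂ) - (y:ℂ) * Complex.exp ((t:ℂ) * Complex.I)‖ := by
  rw [C, Complex.norm_def, Complex.normSq_apply]
  have hre : ((x:ℂ) - (y:ℂ) * Complex.exp ((t:ℂ) * Complex.I)).re = x - y * Real.cos t := by
    simp [Complex.exp_mul_I, Complex.cos_ofReal_re]
  have him : ((x:ℂ) - (y:ℂ) * Complex.exp ((t:ℂ) * Complex.I)).im = -(y * Real.sin t) := by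
    simp [Complex.exp_mul_I, Complex.sin_ofReal_re]
  rw [hre, him]
  have h := Real.sin_sq_add_cos_sq t
  congr 1
  nlinarith [h]

lemma C_triangle (x y z t u : ℝ) : C x z (t + u) ≤ C x y t + C y z u := by
  rw [C_eq_abs, C_eq_abs, C_eq_abs]
  have key : (x:ℂ) - (z:ℂ) * Complex.exp (((t+u : ℝ):ℂ) * Complex.I)
      = ((x:ℂ) - (y:ℂ) * Complex.exp ((t:ℂ) * Complex.I))
        + Complex.exp ((t:ℂ) * Complex.I) * ((y:ℂ) - (z:ℂ) * Complex.exp ((u:ℂ) * Complex.I)) := by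
    push_cast
    rw [add_mul, Complex.exp_add]
    ring
  rw [key]
  refine le_trans (norm_add_le _ _) ?_
  rw [norm_mul, Complex.norm_exp_ofReal_mul_I, one_mul]

lemma C_one_one (u : ℝ) (hu : 0 ≤ u) : C 1 1 u ≤ u := by
  rw [C]
  have h1 : (1:ℝ)^2 + 1^2 - 2*1*1*Real.cos u ≤ u^2 := by
    have := Real.one_sub_sq_div_two_le_cos (x := u)
    nlinarith
  calc Real.sqrt (1^2 + 1^2 - 2*1*1*Real.cos u) ≤ Real.sqrt (u^2) := Real.sqrt_le_sqrt h1
    _ = u := by rw [Real.sqrt_sq hu]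

lemma C_tangent (hx : 1 ≤ x) : C x 1 (B x) = F x := by
  rw [C, cos_B hx]
  rw [show x^2 + 1^2 - 2*x*1*(1/x) = x^2 - 1 by field_simp; ring]
  rfl

lemma C_T (hx : 1 ≤ x) (hy : 1 ≤ y) : C x y (B x + B y) = F x + F y := by
  have hx0 : (0:ℝ) < x := by linarith
  have hy0 : (0:ℝ) < y := by linarith
  rw [C, Real.cos_add, cos_B hx, cos_B hy, sin_B hx, sin_B hy]
  have harg : x^2 + y^2 - 2*x*y*(1/x*(1/y) - F x/x * (F y/y)) = (F x + F y)^2 := by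
    field_simp
    linear_combination (-1) * F_sq hx + (-1) * F_sq hy
  rw [harg, Real.sqrt_sq (by have := F_nonneg x; have := F_nonneg y; linarith)]

lemma C_tstar (hx : 1 ≤ x) (hy : 1 ≤ y) : C x y (|B x - B y|) = |F x - F y| := by
  have hx0 : (0:ℝ) < x := by linarith
  have hy0 : (0:ℝ) < y := by linarith
  rw [C, Real.cos_abs, Real.cos_sub, cos_B hx, cos_B hy, sin_B hx, sin_B hy]
  have harg : x^2 + y^2 - 2*x*y*(1/x*(1/y) + F x/x * (F y/y)) = (F x - F y)^2 := by
    field_simp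
    linear_combination (-1) * F_sq hx + (-1) * F_sq hy
  rw [harg, Real.sqrt_sq_eq_abs]

-- L1
lemma C_le_wrap (hx : 1 ≤ x) (hy : 1 ≤ y) {t : ℝ} (ht : B x + B y ≤ t) :
    C x y t ≤ F x + F y + (t - B x - B y) := by
  have h1 : C x y t ≤ C x 1 (B x) + C 1 y (t - B x) := by
    have := C_triangle x 1 y (B x) (t - B x)
    rwa [show B x + (t - B x) = t by ring] at this
  have h2 : C 1 y (t - B x) ≤ C 1 1 (t - B x - B y) + C 1 y (B y) := by
    have := C_triangle 1 1 y (t - B x - B y) (B y)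
    rwa [show t - B x - B y + B y = t - B x by ring] at this
  have h3 : C 1 y (B y) = F y := by rw [C_symm, C_tangent hy]
  have h4 : C 1 1 (t - B x - B y) ≤ t - B x - B y := C_one_one _ (by linarith)
  have h5 : C x 1 (B x) = F x := C_tangent hx
  linarith

lemma q_deriv (x y t : ℝ) :
    HasDerivAt (fun t => x^2 + y^2 - 2*x*y*Real.cos t) (2*x*y*Real.sin t) t := by
  have h := (Real.hasDerivAt_cos t).const_mul (2*x*y)
  have h2 := h.const_sub (x^2 + y^2)
  simpa using h2

lemma C_deriv (hq : x^2 + y^2 - 2*x*y*Real.cos t ≠ 0) :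
    HasDerivAt (fun t => C x y t) (x*y*Real.sin t / C x y t) t := by
  have h := (Real.hasDerivAt_sqrt hq).comp t (q_deriv x y t)
  refine HasDerivAt.congr_deriv h ?_
  rw [C]
  field_simp

lemma C_continuous (x y : ℝ) : Continuous (fun t => C x y t) := by
  apply Real.continuous_sqrt.comp
  continuity

lemma T_le_pi (hx : 1 ≤ x) (hy : 1 ≤ y) : B x + B y ≤ π := by
  have := B_lt_pi_div_two hx; have := B_lt_pi_div_two hy; linarith

lemma cos_lt_one' {t : ℝ} (h0 : 0 < t) (hpi : t ≤ π) : Real.cos t < 1 := by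
  have := Real.strictAntiOn_cos (left_mem_Icc.2 Real.pi_pos.le) ⟨h0.le, hpi⟩ h0
  simpa using this

-- key algebraic inequality for derivative sign
lemma deriv_sign_aux (hx : 1 ≤ x) (hy : 1 ≤ y) {t : ℝ}
    (hc : |x*y*Real.cos t - 1| ≤ F x * F y) (hs : 0 ≤ Real.sin t) :
    C x y t ≤ x*y*Real.sin t := by
  have h1 : (x*y*Real.cos t - 1)^2 ≤ (F x * F y)^2 :=
    sq_le_sq' (by linarith [(abs_le.1 hc).1]) (abs_le.1 hc).2
  have hFF : (F x * F y)^2 = (x^2-1)*(y^2-1) := by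
    rw [mul_pow, F_sq hx, F_sq hy]
  have key : x^2 + y^2 - 2*x*y*Real.cos t ≤ (x*y*Real.sin t)^2 := by
    have hsin := Real.sin_sq_add_cos_sq t
    nlinarith [h1, hFF]
  calc C x y t ≤ Real.sqrt ((x*y*Real.sin t)^2) := Real.sqrt_le_sqrt key
    _ = x*y*Real.sin t := Real.sqrt_sq (by positivity)

lemma deriv_sign_aux' (hx : 1 ≤ x) (hy : 1 ≤ y) {t : ℝ}
    (hc : F x * F y ≤ x*y*Real.cos t - 1) (hs : 0 ≤ Real.sin t) :
    x*y*Real.sin t ≤ C x y t := by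
  have h1 : (F x * F y)^2 ≤ (x*y*Real.cos t - 1)^2 := by
    have h0 : 0 ≤ F x * F y := by have := F_nonneg x; have := F_nonneg y; positivity
    nlinarith
  have hFF : (F x * F y)^2 = (x^2-1)*(y^2-1) := by
    rw [mul_pow, F_sq hx, F_sq hy]
  have key : (x*y*Real.sin t)^2 ≤ x^2 + y^2 - 2*x*y*Real.cos t := by
    have hsin := Real.sin_sq_add_cos_sq t
    nlinarith [h1, hFF]
  calc x*y*Real.sin t = Real.sqrt ((x*y*Real.sin t)^2) := (Real.sqrt_sq (by positivity)).symm
    _ ≤ C x y t := Real.sqrt_le_sqrt key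

lemma cos_T_eq (hx : 1 ≤ x) (hy : 1 ≤ y) :
    Real.cos (B x + B y) = (1 - F x * F y)/(x*y) := by
  rw [Real.cos_add, cos_B hx, cos_B hy, sin_B hx, sin_B hy]
  field_simp

lemma cos_tstar_eq (hx : 1 ≤ x) (hy : 1 ≤ y) :
    Real.cos (|B x - B y|) = (1 + F x * F y)/(x*y) := by
  rw [Real.cos_abs, Real.cos_sub, cos_B hx, cos_B hy, sin_B hx, sin_B hy]
  field_simp

lemma tstar_nonneg (x y : ℝ) : 0 ≤ |B x - B y| := abs_nonneg _

lemma tstar_le_T (x y : ℝ) : |B x - B y| ≤ B x + B y := by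
  have := B_nonneg x; have := B_nonneg y
  rw [abs_sub_le_iff]; constructor <;> linarith

lemma D_mono (hx : 1 ≤ x) (hy : 1 ≤ y) :
    MonotoneOn (fun t => C x y t - t) (Icc (|B x - B y|) (B x + B y)) := by
  have hx0 : (0:ℝ) < x := by linarith
  have hy0 : (0:ℝ) < y := by linarith
  apply monotoneOn_of_deriv_nonneg (convex_Icc _ _)
  · exact ((C_continuous x y).sub continuous_id).continuousOn
  · rw [interior_Icc]
    intro t ht
    have hq : x^2 + y^2 - 2*x*y*Real.cos t ≠ 0 := by
      rcases eq_or_ne x y with rfl | hne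
      · have ht0 : 0 < t := by
          have := ht.1; simpa using lt_of_le_of_lt (by simp) this
        have htpi : t ≤ π := le_of_lt (lt_of_lt_of_le ht.2 (T_le_pi hx hy))
        have hlt : Real.cos t < 1 := cos_lt_one' ht0 htpi
        nlinarith [mul_pos (mul_pos hx0 hx0) (by linarith : (0:ℝ) < 1 - Real.cos t)]
      · have hc := Real.cos_le_one t
        nlinarith [sq_pos_of_ne_zero (sub_ne_zero_of_ne hne),
          mul_nonneg (mul_nonneg hx0.le hy0.le) (sub_nonneg.2 (Real.cos_le_one t))]
    exact ((C_deriv hq).sub (hasDerivAt_id t)).differentiableAt.differentiableWithinAt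
  · rw [interior_Icc]
    intro t ht
    have ht0 : 0 ≤ t := le_trans (tstar_nonneg x y) ht.1.le
    have htpi : t ≤ π := le_trans ht.2.le (T_le_pi hx hy)
    have hq : x^2 + y^2 - 2*x*y*Real.cos t ≠ 0 := by
      rcases eq_or_ne x y with rfl | hne
      · have ht0' : 0 < t := lt_of_le_of_lt (by simp) ht.1
        have hlt : Real.cos t < 1 := cos_lt_one' ht0' htpi
        nlinarith [mul_pos (mul_pos hx0 hx0) (by linarith : (0:ℝ) < 1 - Real.cos t)]
      · have hc := Real.cos_le_one t
        nlinarith [sq_pos_of_ne_zero (sub_ne_zero_of_ne hne),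
          mul_nonneg (mul_nonneg hx0.le hy0.le) (sub_nonneg.2 (Real.cos_le_one t))]
    have hD : HasDerivAt (fun t => C x y t - t) (x*y*Real.sin t / C x y t - 1) t :=
      (C_deriv hq).sub (hasDerivAt_id t)
    rw [hD.deriv]
    have hqnn : 0 ≤ x^2 + y^2 - 2*x*y*Real.cos t := by
      nlinarith [sq_nonneg (x-y),
        mul_nonneg (mul_nonneg hx0.le hy0.le) (sub_nonneg.2 (Real.cos_le_one t))]
    have hC : 0 < C x y t := Real.sqrt_pos.2 (lt_of_le_of_ne hqnn (Ne.symm hq))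
    have hsin : 0 ≤ Real.sin t := Real.sin_nonneg_of_nonneg_of_le_pi ht0 htpi
    have hcub : Real.cos t ≤ (1 + F x * F y)/(x*y) := by
      rw [← cos_tstar_eq hx hy]
      exact Real.cos_le_cos_of_nonneg_of_le_pi (tstar_nonneg x y) htpi ht.1.le
    have hclb : (1 - F x * F y)/(x*y) ≤ Real.cos t := by
      rw [← cos_T_eq hx hy]
      exact Real.cos_le_cos_of_nonneg_of_le_pi ht0 (T_le_pi hx hy) ht.2.le
    have habs : |x*y*Real.cos t - 1| ≤ F x * F y := by
      rw [abs_le]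
      constructor
      · have := (div_le_iff₀ (by positivity)).1 hclb; nlinarith
      · have := (le_div_iff₀ (by positivity)).1 hcub; nlinarith
    have h1 := deriv_sign_aux hx hy habs hsin
    have h2 : 1 ≤ x*y*Real.sin t / C x y t := (one_le_div hC).2 h1
    linarith

lemma D_anti (hx : 1 ≤ x) (hy : 1 ≤ y) :
    AntitoneOn (fun t => C x y t - t) (Icc 0 (|B x - B y|)) := by
  have hx0 : (0:ℝ) < x := by linarith
  have hy0 : (0:ℝ) < y := by linarith
  apply antitoneOn_of_deriv_nonpos (convex_Icc _ _)
  · exact ((C_continuous x y).sub continuous_id).continuousOn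
  · rw [interior_Icc]
    intro t ht
    have hne : x ≠ y := by
      intro h; subst h; rw [sub_self, abs_zero] at ht; exact absurd ht.2 (not_lt.2 ht.1.le)
    have hq : x^2 + y^2 - 2*x*y*Real.cos t ≠ 0 := by
      have hc := Real.cos_le_one t
      nlinarith [sq_pos_of_ne_zero (sub_ne_zero_of_ne hne),
        mul_nonneg (mul_nonneg hx0.le hy0.le) (sub_nonneg.2 (Real.cos_le_one t))]
    exact ((C_deriv hq).sub (hasDerivAt_id t)).differentiableAt.differentiableWithinAt
  · rw [interior_Icc]
    intro t ht
    have hne : x ≠ y := by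
      intro h; subst h; rw [sub_self, abs_zero] at ht; exact absurd ht.2 (not_lt.2 ht.1.le)
    have hq : x^2 + y^2 - 2*x*y*Real.cos t ≠ 0 := by
      have hc := Real.cos_le_one t
      nlinarith [sq_pos_of_ne_zero (sub_ne_zero_of_ne hne),
        mul_nonneg (mul_nonneg hx0.le hy0.le) (sub_nonneg.2 (Real.cos_le_one t))]
    have hD : HasDerivAt (fun t => C x y t - t) (x*y*Real.sin t / C x y t - 1) t :=
      (C_deriv hq).sub (hasDerivAt_id t)
    rw [hD.deriv]
    have htpi : t ≤ π := le_trans ht.2.le (le_trans (tstar_le_T x y) (T_le_pi hx hy))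
    have hsin : 0 ≤ Real.sin t := Real.sin_nonneg_of_nonneg_of_le_pi ht.1.le htpi
    have hqnn : 0 ≤ x^2 + y^2 - 2*x*y*Real.cos t := by
      nlinarith [sq_nonneg (x-y),
        mul_nonneg (mul_nonneg hx0.le hy0.le) (sub_nonneg.2 (Real.cos_le_one t))]
    have hC : 0 < C x y t := Real.sqrt_pos.2 (lt_of_le_of_ne hqnn (Ne.symm hq))
    have hcub : Real.cos (|B x - B y|) ≤ Real.cos t :=
      Real.cos_le_cos_of_nonneg_of_le_pi ht.1.le
        (le_trans (tstar_le_T x y) (T_le_pi hx hy)) ht.2.le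
    rw [cos_tstar_eq hx hy] at hcub
    have habs : F x * F y ≤ x*y*Real.cos t - 1 := by
      have := (div_le_iff₀ (by positivity)).1 hcub; nlinarith
    have h1 := deriv_sign_aux' hx hy habs hsin
    have h2 : x*y*Real.sin t / C x y t ≤ 1 := (div_le_one hC).2 h1
    linarith

lemma D_min (hx : 1 ≤ x) (hy : 1 ≤ y) {t : ℝ} (ht0 : 0 ≤ t) (htT : t ≤ B x + B y) :
    |F x - F y| - |B x - B y| ≤ C x y t - t := by
  rcases le_total t (|B x - B y|) with h | h
  · have := D_anti hx hy ⟨ht0, h⟩ ⟨tstar_nonneg x y, le_refl _⟩ h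
    simp only at this
    rw [C_tstar hx hy] at this
    linarith
  · have := D_mono hx hy ⟨le_refl _, tstar_le_T x y⟩ ⟨h, htT⟩ h
    simp only at this
    rw [C_tstar hx hy] at this
    linarith

-- tan helper lemmas
lemma self_le_tan {b : ℝ} (hb0 : 0 ≤ b) (hb : b < π/2) : b ≤ Real.tan b := by
  rcases eq_or_lt_of_le hb0 with rfl | h
  · simp
  · exact (Real.lt_tan h hb).le

lemma sin_ge_mul_cos {d : ℝ} (hd0 : 0 ≤ d) (hd : d < π/2) : d * Real.cos d ≤ Real.sin d := by
  have h1 := self_le_tan hd0 hd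
  have hc : 0 < Real.cos d := Real.cos_pos_of_mem_Ioo ⟨by linarith [Real.pi_pos], hd⟩
  rw [Real.tan_eq_sin_div_cos] at h1
  calc d * Real.cos d ≤ (Real.sin d / Real.cos d) * Real.cos d := by
        apply mul_le_mul_of_nonneg_right h1 hc.le
    _ = Real.sin d := by field_simp

lemma tan_sub_mono {a b : ℝ} (ha : 0 ≤ a) (hab : a ≤ b) (hb : b < π/2) :
    Real.tan a - a ≤ Real.tan b - b := by
  have hca : 0 < Real.cos a := Real.cos_pos_of_mem_Ioo ⟨by linarith [Real.pi_pos], by linarith⟩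
  have hcb : 0 < Real.cos b := Real.cos_pos_of_mem_Ioo ⟨by linarith [Real.pi_pos], hb⟩
  have hdiff : Real.tan b - Real.tan a = Real.sin (b - a) / (Real.cos a * Real.cos b) := by
    rw [Real.tan_eq_sin_div_cos, Real.tan_eq_sin_div_cos, Real.sin_sub]
    field_simp
  have hs : (b - a) * (Real.cos a * Real.cos b) ≤ Real.sin (b - a) := by
    have h1 : (b - a) * Real.cos (b - a) ≤ Real.sin (b - a) :=
      sin_ge_mul_cos (by linarith) (by linarith)
    have h2 : Real.cos a * Real.cos b ≤ Real.cos (b - a) := by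
      rw [Real.cos_sub]
      nlinarith [Real.sin_nonneg_of_nonneg_of_le_pi (show (0:ℝ) ≤ a by linarith)
          (by linarith [Real.pi_pos] : a ≤ π),
        Real.sin_nonneg_of_nonneg_of_le_pi (show (0:ℝ) ≤ b by linarith)
          (by linarith [Real.pi_pos] : b ≤ π)]
    nlinarith [mul_pos hca hcb]
  have : b - a ≤ Real.sin (b - a) / (Real.cos a * Real.cos b) := by
    rw [le_div_iff₀ (mul_pos hca hcb)]
    exact hs
  linarith [hdiff ▸ this]

lemma tan_superadd {a b : ℝ} (ha : 0 ≤ a) (hb : 0 ≤ b) (hab : a + b < π/2) :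
    Real.tan a + Real.tan b ≤ Real.tan (a + b) := by
  have hca : 0 < Real.cos a := Real.cos_pos_of_mem_Ioo ⟨by linarith [Real.pi_pos], by linarith⟩
  have hcb : 0 < Real.cos b := Real.cos_pos_of_mem_Ioo ⟨by linarith [Real.pi_pos], by linarith⟩
  have hcab : 0 < Real.cos (a + b) :=
    Real.cos_pos_of_mem_Ioo ⟨by linarith [Real.pi_pos], hab⟩
  have hsab : 0 ≤ Real.sin (a + b) :=
    Real.sin_nonneg_of_nonneg_of_le_pi (by linarith) (by linarith [Real.pi_pos])
  have hsum : Real.tan a + Real.tan b = Real.sin (a+b) / (Real.cos a * Real.cos b) := by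
    rw [Real.tan_eq_sin_div_cos, Real.tan_eq_sin_div_cos, Real.sin_add]
    field_simp
  have hle : Real.cos (a+b) ≤ Real.cos a * Real.cos b := by
    rw [Real.cos_add]
    nlinarith [Real.sin_nonneg_of_nonneg_of_le_pi ha (by linarith [Real.pi_pos] : a ≤ π),
      Real.sin_nonneg_of_nonneg_of_le_pi hb (by linarith [Real.pi_pos] : b ≤ π)]
  rw [hsum, Real.tan_eq_sin_div_cos]
  exact div_le_div_of_nonneg_left hsab hcab hle

lemma F_le (hx : 1 ≤ x) (hy : 1 ≤ y) (h : B x ≤ B y) : F x ≤ F y := by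
  have h1 := tan_sub_mono (B_nonneg x) h (B_lt_pi_div_two hy)
  rw [tan_B hx, tan_B hy] at h1
  linarith

lemma Gt_mono (hx : 1 ≤ x) (hy : 1 ≤ y) (h : B y ≤ B x) : F y - B y ≤ F x - B x := by
  have h1 := tan_sub_mono (B_nonneg y) h (B_lt_pi_div_two hx)
  rw [tan_B hx, tan_B hy] at h1
  linarith

-- L2
lemma C_ge (hx : 1 ≤ x) (hy : 1 ≤ y) {t : ℝ} (ht0 : 0 ≤ t) (htT : t ≤ B x + B y) :
    f y - f x + t ≤ C x y t := by
  have hD := D_min hx hy ht0 htT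
  have hfy : f y - f x = F y - F x + (B x - B y) := by rw [f_eq, f_eq]; ring
  rcases le_total (B x) (B y) with h | h
  · have hF : F x ≤ F y := F_le hx hy h
    rw [abs_of_nonpos (by linarith), abs_of_nonpos (by linarith)] at hD
    linarith
  · have hF : F y ≤ F x := F_le hy hx h
    have hG := Gt_mono hx hy h
    rw [abs_of_nonneg (by linarith), abs_of_nonneg (by linarith)] at hD
    linarith

-- T2 : the hard triangle case
lemma T2 {r u s ψ α : ℝ} (hr : 1 ≤ r) (hu : 1 ≤ u) (hs : 1 ≤ s)
    (hψ0 : 0 ≤ ψ) (hψT : ψ ≤ B r + B u) (hα0 : 0 ≤ α) (hαT : α ≤ B u + B s)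
    (hsum : B r + B s ≤ ψ + α) :
    F r + F s + (ψ + α) - (B r + B s) ≤ C r u ψ + C u s α := by
  rcases le_total (B r + B s) (|B r - B u| + |B u - B s|) with hcase | hcase
  · -- case A
    have h1 := D_min hr hu hψ0 hψT
    have h2 := D_min hu hs hα0 hαT
    have key : F r + F s - (B r + B s) ≤
        (|F r - F u| - |B r - B u|) + (|F u - F s| - |B u - B s|) := by
      rcases le_total (B r) (B u) with hru | hru <;> rcases le_total (B s) (B u) with hsu | hsu
      · -- Br ≤ Bu, Bs ≤ Bu
        have hFr : F r ≤ F u := F_le hr hu hru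
        have hFs : F s ≤ F u := F_le hs hu hsu
        rw [abs_of_nonpos (sub_nonpos.2 hru), abs_of_nonneg (sub_nonneg.2 hsu)] at hcase
        rw [abs_of_nonpos (sub_nonpos.2 hFr), abs_of_nonneg (sub_nonneg.2 hFs),
          abs_of_nonpos (sub_nonpos.2 hru), abs_of_nonneg (sub_nonneg.2 hsu)]
        have hBu : B r + B s ≤ B u := by linarith
        have hlt : B u < π/2 := B_lt_pi_div_two hu
        have h3 := tan_sub_mono (add_nonneg (B_nonneg r) (B_nonneg s)) hBu hlt
        have h4 := tan_superadd (B_nonneg r) (B_nonneg s) (lt_of_le_of_lt hBu hlt)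
        rw [tan_B hu] at h3
        rw [tan_B hr, tan_B hs] at h4
        linarith
      · -- Br ≤ Bu ≤ Bs
        have hFr : F r ≤ F u := F_le hr hu hru
        have hFs : F u ≤ F s := F_le hu hs hsu
        rw [abs_of_nonpos (sub_nonpos.2 hru), abs_of_nonpos (sub_nonpos.2 hsu)] at hcase
        rw [abs_of_nonpos (sub_nonpos.2 hFr), abs_of_nonpos (sub_nonpos.2 hFs),
          abs_of_nonpos (sub_nonpos.2 hru), abs_of_nonpos (sub_nonpos.2 hsu)]
        have hBr : B r = 0 := le_antisymm (by linarith) (B_nonneg r)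
        have hFr0 : F r = 0 := by rw [← tan_B hr, hBr, Real.tan_zero]
        linarith
      · -- Bs ≤ Bu ≤ Br
        have hFr : F u ≤ F r := F_le hu hr hru
        have hFs : F s ≤ F u := F_le hs hu hsu
        rw [abs_of_nonneg (sub_nonneg.2 hru), abs_of_nonneg (sub_nonneg.2 hsu)] at hcase
        rw [abs_of_nonneg (sub_nonneg.2 hFr), abs_of_nonneg (sub_nonneg.2 hFs),
          abs_of_nonneg (sub_nonneg.2 hru), abs_of_nonneg (sub_nonneg.2 hsu)]
        have hBs : B s = 0 := le_antisymm (by linarith) (B_nonneg s)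
        have hFs0 : F s = 0 := by rw [← tan_B hs, hBs, Real.tan_zero]
        linarith
      · -- Bu ≤ Br, Bu ≤ Bs
        have hFr : F u ≤ F r := F_le hu hr hru
        have hFs : F u ≤ F s := F_le hu hs hsu
        rw [abs_of_nonneg (sub_nonneg.2 hru), abs_of_nonpos (sub_nonpos.2 hsu)] at hcase
        rw [abs_of_nonneg (sub_nonneg.2 hFr), abs_of_nonpos (sub_nonpos.2 hFs),
          abs_of_nonneg (sub_nonneg.2 hru), abs_of_nonpos (sub_nonpos.2 hsu)]
        have hBu : B u = 0 := le_antisymm (by linarith) (B_nonneg u)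
        have hFu0 : F u = 0 := by rw [← tan_B hu, hBu, Real.tan_zero]
        linarith
    linarith
  · -- case B
    set t1 := |B r - B u| with ht1
    set a1 := |B u - B s| with ha1
    set T3 := B r + B s with hT3
    set ψb := max ψ t1 with hψb
    set αb := max α a1 with hαb
    set x0 := max t1 (T3 - αb) with hx0
    set y0 := T3 - x0 with hy0
    have hψb_ub : ψb ≤ B r + B u := max_le hψT (tstar_le_T r u)
    have hαb_ub : αb ≤ B u + B s := max_le hαT (tstar_le_T u s)
    have hx0_lb : t1 ≤ x0 := le_max_left _ _
    have hsum2 : T3 ≤ ψb + αb := le_trans hsum (add_le_add (le_max_left _ _) (le_max_left _ _))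
    have hx0_ub : x0 ≤ ψb := max_le (le_max_right _ _) (by linarith)
    have hy0_lb : a1 ≤ y0 := by
      have hx0_ub2 : x0 ≤ T3 - a1 := max_le (by linarith) (by
        have : a1 ≤ αb := le_max_right _ _
        linarith)
      simp only [hy0]; linarith
    have hy0_ub : y0 ≤ αb := by
      have : T3 - αb ≤ x0 := le_max_right _ _
      simp only [hy0]; linarith
    -- D chain on (r,u)
    have e1 : C r u ψb - ψb ≤ C r u ψ - ψ := by
      rcases le_total t1 ψ with h | h
      · rw [hψb, max_eq_left h]
      · rw [hψb, max_eq_right h]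
        exact D_anti hr hu ⟨hψ0, h⟩ ⟨tstar_nonneg r u, le_refl _⟩ h
    have e2 : C r u x0 - x0 ≤ C r u ψb - ψb :=
      D_mono hr hu ⟨hx0_lb, le_trans hx0_ub hψb_ub⟩ ⟨le_max_right _ _, hψb_ub⟩ hx0_ub
    have e3 : C u s αb - αb ≤ C u s α - α := by
      rcases le_total a1 α with h | h
      · rw [hαb, max_eq_left h]
      · rw [hαb, max_eq_right h]
        exact D_anti hu hs ⟨hα0, h⟩ ⟨tstar_nonneg u s, le_refl _⟩ h
    have e4 : C u s y0 - y0 ≤ C u s αb - αb :=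
      D_mono hu hs ⟨hy0_lb, le_trans hy0_ub hαb_ub⟩ ⟨le_max_right _ _, hαb_ub⟩ hy0_ub
    have euclid : C r s T3 ≤ C r u x0 + C u s y0 := by
      have := C_triangle r u s x0 y0
      rwa [show x0 + y0 = T3 by simp only [hy0]; ring] at this
    rw [C_T hr hs] at euclid
    linarith


lemma m_eq (x y t : ℝ) : m x y t = if t ≤ B x + B y then C x y t else f x + f y + (t - π) := rfl

lemma wrap_eq (x y t : ℝ) : f x + f y + (t - π) = F x + F y + (t - (B x + B y)) := by
  rw [f_eq, f_eq]; ring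

lemma B_le_F (hx : 1 ≤ x) : B x ≤ F x := by
  rw [← tan_B hx]; exact self_le_tan (B_nonneg x) (B_lt_pi_div_two hx)

lemma f_ge (hx : 1 ≤ x) : π/2 ≤ f x := by
  have := B_le_F hx; rw [f_eq]; linarith

lemma m_ge_C (hx : 1 ≤ x) (hy : 1 ≤ y) (t : ℝ) : C x y t ≤ m x y t := by
  rw [m_eq]
  split_ifs with h
  · exact le_refl _
  · push_neg at h
    rw [wrap_eq]
    have := C_le_wrap hx hy h.le
    linarith

lemma C_mono_in_t (hx : 1 ≤ x) (hy : 1 ≤ y) {t1 t2 : ℝ} (h0 : 0 ≤ t1) (h12 : t1 ≤ t2)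
    (h2 : t2 ≤ π) : C x y t1 ≤ C x y t2 := by
  have hx0 : (0:ℝ) < x := by linarith
  have hy0 : (0:ℝ) < y := by linarith
  apply Real.sqrt_le_sqrt
  have h := Real.cos_le_cos_of_nonneg_of_le_pi h0 h2 h12
  have h2 := mul_le_mul_of_nonneg_left h (show (0:ℝ) ≤ 2*x*y by positivity)
  linarith

lemma m_mono (hx : 1 ≤ x) (hy : 1 ≤ y) {t1 t2 : ℝ} (h0 : 0 ≤ t1) (h : t1 ≤ t2) :
    m x y t1 ≤ m x y t2 := by
  rw [m_eq, m_eq]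
  split_ifs with h1 h2 h2
  · exact C_mono_in_t hx hy h0 h (le_trans h2 (T_le_pi hx hy))
  · push_neg at h2
    have hC : C x y t1 ≤ C x y (B x + B y) :=
      C_mono_in_t hx hy h0 h1 (T_le_pi hx hy)
    rw [C_T hx hy] at hC
    rw [wrap_eq]
    linarith
  · linarith
  · linarith

lemma m_self_zero (hx : 1 ≤ x) : m x x 0 = 0 := by
  rw [m_eq, if_pos (by have := B_nonneg x; linarith)]
  rw [C, Real.cos_zero]
  rw [show x^2 + x^2 - 2*x*x*1 = 0 by ring]
  exact Real.sqrt_zero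

-- error bound for second-branch small pieces
lemma tan_cube {b : ℝ} (hb0 : 0 ≤ b) (hb : b ≤ 1/2) : Real.tan b - b ≤ b^3 := by
  have hbpi : b < π/2 := by nlinarith [Real.pi_gt_three]
  have hc : 0 < Real.cos b := Real.cos_pos_of_mem_Ioo ⟨by linarith [Real.pi_pos], hbpi⟩
  have hs : Real.sin b ≤ b := Real.sin_le hb0
  have hcos_lb : 1 - b^2/2 ≤ Real.cos b := Real.one_sub_sq_div_two_le_cos
  have hcb : 7/8 ≤ Real.cos b := by nlinarith
  rw [Real.tan_eq_sin_div_cos]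
  have key : Real.sin b / Real.cos b ≤ b^3 + b := by
    rw [div_le_iff₀ hc]
    nlinarith [mul_nonneg (by positivity : (0:ℝ) ≤ b^3+b)
      (by linarith : (0:ℝ) ≤ Real.cos b - (1-b^2/2)), sq_nonneg b,
      mul_nonneg (pow_nonneg hb0 3) (by nlinarith : (0:ℝ) ≤ 1 - b^2)]
  linarith

lemma wrap_le_C (hx : 1 ≤ x) (hy : 1 ≤ y) {α : ℝ} (hT : B x + B y < α) (hα : α ≤ 1/2) :
    f x + f y + (α - π) ≤ C x y α + 3*α^3 := by
  have hα0 : 0 < α := lt_of_le_of_lt (by have := B_nonneg x; have := B_nonneg y; linarith) hT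
  have hBx : B x ≤ α := by have := B_nonneg y; linarith
  have hBy : B y ≤ α := by have := B_nonneg x; linarith
  have hGx : F x - B x ≤ α^3 := by
    have h1 := tan_cube (B_nonneg x) (le_trans hBx hα)
    rw [tan_B hx] at h1
    have : (B x)^3 ≤ α^3 := pow_le_pow_left₀ (B_nonneg x) hBx 3
    linarith
  have hGy : F y - B y ≤ α^3 := by
    have h1 := tan_cube (B_nonneg y) (le_trans hBy hα)
    rw [tan_B hy] at h1
    have : (B y)^3 ≤ α^3 := pow_le_pow_left₀ (B_nonneg y) hBy 3
    linarith
  have hC : α - α^3 ≤ C x y α := by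
    have hhalf : 0 < α/2 := by linarith
    have hs := Real.sin_gt_sub_cube hhalf
    have hs0 : 0 ≤ Real.sin (α/2) := Real.sin_nonneg_of_nonneg_of_le_pi (by linarith)
      (by nlinarith [Real.pi_gt_three])
    have hsin_sq : Real.sin (α/2)^2 = 1/2 - Real.cos α / 2 := by
      have h := Real.sin_sq_eq_half_sub (α/2)
      rwa [show 2*(α/2) = α by ring] at h
    have hCsq : (2*Real.sin (α/2))^2 ≤ C x y α ^2 := by
      simp only [C]
      rw [Real.sq_sqrt (by
        nlinarith [sq_nonneg (x-y),
          mul_nonneg (mul_nonneg (by linarith : (0:ℝ) ≤ x) (by linarith : (0:ℝ) ≤ y))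
            (sub_nonneg.2 (Real.cos_le_one α))] : (0:ℝ) ≤ x^2 + y^2 - 2*x*y*Real.cos α)]
      nlinarith [sq_nonneg (x - y), (by nlinarith : (1:ℝ) ≤ x*y)]
    have h2 : 2*Real.sin (α/2) ≤ C x y α := by
      calc 2*Real.sin (α/2) = Real.sqrt ((2*Real.sin (α/2))^2) :=
            (Real.sqrt_sq (by positivity)).symm
        _ ≤ Real.sqrt (C x y α ^ 2) := Real.sqrt_le_sqrt hCsq
        _ = C x y α := Real.sqrt_sq (C_nonneg x y α)
    nlinarith [pow_nonneg hα0.le 3]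
  rw [wrap_eq]
  nlinarith

-- the key step lemma
lemma step {r u v ψ α : ℝ} (hr : 1 ≤ r) (hu : 1 ≤ u) (hv : 1 ≤ v)
    (hψ : 0 ≤ ψ) (hα0 : 0 ≤ α) (hα : α ≤ 1/2) :
    m r v (ψ + α) ≤ m r u ψ + C u v α + 3*α^3 := by
  have hα3 : 0 ≤ 3*α^3 := by positivity
  rw [m_eq r v]
  split_ifs with hb
  · -- target first branch
    have h1 : C r v (ψ + α) ≤ C r u ψ + C u v α := C_triangle r u v ψ α
    have h2 := m_ge_C hr hu ψ
    linarith
  · push_neg at hb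
    rcases lt_or_ge (B u + B v) α with hp | hp
    · -- piece second branch
      have hw := wrap_le_C hu hv hp hα
      have hkey : f r + ψ ≤ m r u ψ + f u := by
        rw [m_eq]
        split_ifs with hb2
        · have := C_ge hu hr (x := u) (y := r) hψ (by rwa [add_comm])
          rw [C_symm u r] at this
          linarith
        · have := f_ge hu
          linarith
      linarith
    · -- piece first branch
      rw [m_eq]
      split_ifs with hb2
      · -- hard case
        have hT2 := T2 hr hu hv hψ hb2 hα0 hp hb.le
        rw [wrap_eq]
        linarith
      · push_neg at hb2
        have := C_ge hu hv (x := u) (y := v) hα0 hp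
        linarith


lemma C_ge_linear (hx : 1 ≤ x) (hy : 1 ≤ y) {α : ℝ} (hα0 : 0 ≤ α) (hα : α ≤ 1/2) :
    α - α^3 ≤ C x y α := by
  rcases eq_or_lt_of_le hα0 with rfl | hα0'
  · simpa using C_nonneg x y 0
  have hsin_sq : Real.sin (α/2)^2 = 1/2 - Real.cos α / 2 := by
    have h := Real.sin_sq_eq_half_sub (α/2)
    rwa [show 2*(α/2) = α by ring] at h
  have hCsq : (2*Real.sin (α/2))^2 ≤ C x y α ^2 := by
    simp only [C]
    rw [Real.sq_sqrt (by
      nlinarith [sq_nonneg (x-y),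
        mul_nonneg (mul_nonneg (by linarith : (0:ℝ) ≤ x) (by linarith : (0:ℝ) ≤ y))
          (sub_nonneg.2 (Real.cos_le_one α))] : (0:ℝ) ≤ x^2 + y^2 - 2*x*y*Real.cos α)]
    nlinarith [sq_nonneg (x - y), (by nlinarith : (1:ℝ) ≤ x*y)]
  have hs0 : 0 ≤ Real.sin (α/2) := Real.sin_nonneg_of_nonneg_of_le_pi (by linarith)
    (by nlinarith [Real.pi_gt_three])
  have h2 : 2*Real.sin (α/2) ≤ C x y α := by
    calc 2*Real.sin (α/2) = Real.sqrt ((2*Real.sin (α/2))^2) :=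
          (Real.sqrt_sq (by positivity)).symm
      _ ≤ Real.sqrt (C x y α ^ 2) := Real.sqrt_le_sqrt hCsq
      _ = C x y α := Real.sqrt_sq (C_nonneg x y α)
  have hs := Real.sin_gt_sub_cube (by linarith : 0 < α/2)
  nlinarith [pow_nonneg hα0 3]


variable {V : Type*} [NormedAddCommGroup V] [InnerProductSpace ℝ V]

local notation "⟪" x ", " y "⟫" => @inner ℝ _ _ x y

lemma cos_angle_unit {u v : V} (hu : ‖u‖ = 1) (hv : ‖v‖ = 1) :
    Real.cos (angle u v) = ⟪u, v⟫ := by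
  rw [cos_angle, hu, hv]; norm_num

lemma sin_angle_unit {u v : V} (hu : ‖u‖ = 1) (hv : ‖v‖ = 1) :
    Real.sin (angle u v) = Real.sqrt (1 - ⟪u, v⟫^2) := by
  rw [Real.sin_eq_sqrt_one_sub_cos_sq (angle_nonneg u v) (angle_le_pi u v),
    cos_angle_unit hu hv]

lemma angle_triangle_unit {u v w : V} (hu : ‖u‖ = 1) (hv : ‖v‖ = 1) (hw : ‖w‖ = 1) :
    angle u w ≤ angle u v + angle v w := by
  rcases le_or_gt π (angle u v + angle v w) with hab | hab
  · exact le_trans (angle_le_pi u w) hab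
  have h0ab : 0 ≤ angle u v + angle v w :=
    add_nonneg (angle_nonneg u v) (angle_nonneg v w)
  set a := angle u v
  set b := angle v w
  set c := ⟪u, v⟫ with hc
  set d := ⟪w, v⟫ with hd
  have hvv : ⟪v, v⟫ = (1:ℝ) := by
    rw [real_inner_self_eq_norm_sq, hv]; norm_num
  set p : V := u - c • v with hp
  set q : V := w - d • v with hq
  have hvw : ⟪v, w⟫ = d := by rw [real_inner_comm]
  have hvu : ⟪v, u⟫ = c := by rw [real_inner_comm]
  have hpq : ⟪p, q⟫ = ⟪u, w⟫ - c * d := by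
    simp only [hp, hq, inner_sub_left, inner_sub_right, real_inner_smul_left,
      real_inner_smul_right, hvv, hvw, hvu]
    ring
  have hpp : ‖p‖^2 = 1 - c^2 := by
    rw [← real_inner_self_eq_norm_sq]
    simp only [hp, inner_sub_left, inner_sub_right, real_inner_smul_left,
      real_inner_smul_right, hvv, hvu]
    have huu : ⟪u, u⟫ = (1:ℝ) := by rw [real_inner_self_eq_norm_sq, hu]; norm_num
    rw [huu, ← hc]
    ring
  have hqq : ‖q‖^2 = 1 - d^2 := by
    rw [← real_inner_self_eq_norm_sq]
    simp only [hq, inner_sub_left, inner_sub_right, real_inner_smul_left,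
      real_inner_smul_right, hvv, hvw]
    have hww : ⟪w, w⟫ = (1:ℝ) := by rw [real_inner_self_eq_norm_sq, hw]; norm_num
    rw [hww, ← hd]
    ring
  have hcs : -(‖p‖ * ‖q‖) ≤ ⟪p, q⟫ := neg_le_of_abs_le (abs_real_inner_le_norm p q)
  have hnp : ‖p‖ = Real.sqrt (1 - c^2) := by
    rw [← Real.sqrt_sq (norm_nonneg p), hpp]
  have hnq : ‖q‖ = Real.sqrt (1 - d^2) := by
    rw [← Real.sqrt_sq (norm_nonneg q), hqq]
  have hsina : Real.sin a = ‖p‖ := by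
    rw [sin_angle_unit hu hv, hnp, ← hc]
  have hsinb : Real.sin b = ‖q‖ := by
    rw [show b = angle w v from angle_comm v w, sin_angle_unit hw hv, hnq, ← hd]
  have hcosa : Real.cos a = c := cos_angle_unit hu hv
  have hcosb : Real.cos b = d := by
    rw [show b = angle w v from angle_comm v w]
    exact cos_angle_unit hw hv
  have hkey : Real.cos (a + b) ≤ Real.cos (angle u w) := by
    rw [Real.cos_add, cos_angle_unit hu hw, hcosa, hcosb, hsina, hsinb]
    linarith [hpq ▸ hcs]
  by_contra hcon
  push_neg at hcon
  have := Real.strictAntiOn_cos ⟨h0ab, hab.le⟩ ⟨angle_nonneg u w, angle_le_pi u w⟩ hcon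
  linarith


lemma chord_to_angle {u v : V} (hu : ‖u‖ = 1) (hv : ‖v‖ = 1) {η : ℝ}
    (hη0 : 0 ≤ η) (hηπ : η ≤ π) (h : ‖u - v‖ ≤ 2*Real.sin (η/2)) : angle u v ≤ η := by
  set t := angle u v with htdef
  have ht0 : 0 ≤ t := angle_nonneg u v
  have htπ : t ≤ π := angle_le_pi u v
  have hnorm : ‖u - v‖^2 = 2 - 2*Real.cos t := by
    rw [norm_sub_sq_real, hu, hv, ← cos_angle_unit hu hv]
    ring
  have hsin_sq : Real.sin (t/2)^2 = 1/2 - Real.cos t / 2 := by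
    have h := Real.sin_sq_eq_half_sub (t/2)
    rwa [show 2*(t/2) = t by ring] at h
  have hst0 : 0 ≤ Real.sin (t/2) :=
    Real.sin_nonneg_of_nonneg_of_le_pi (by linarith) (by linarith [Real.pi_pos])
  have hsη0 : 0 ≤ Real.sin (η/2) :=
    Real.sin_nonneg_of_nonneg_of_le_pi (by linarith) (by linarith [Real.pi_pos])
  have hkey : Real.sin (t/2) ≤ Real.sin (η/2) := by
    have h1 : ‖u - v‖^2 ≤ (2*Real.sin (η/2))^2 := by
      have := pow_le_pow_left₀ (norm_nonneg _) h 2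
      exact this
    rw [hnorm] at h1
    nlinarith
  by_contra hcon
  push_neg at hcon
  have : Real.sin (η/2) < Real.sin (t/2) := by
    apply Real.strictMonoOn_sin ⟨by linarith [Real.pi_pos], by linarith⟩
      ⟨by linarith [Real.pi_pos], by linarith⟩ (by linarith)
  linarith

end CKS

open CKS InnerProductGeometry

-- normalization lemma
lemma angle_normalize {y z : E3} (hy : y ≠ 0) (hz : z ≠ 0) :
    angle y z = angle (‖y‖⁻¹ • y) (‖z‖⁻¹ • z) := by
  rw [angle_smul_left_of_pos _ _ (inv_pos.2 (norm_pos_iff.2 hy)),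
    angle_smul_right_of_pos _ _ (inv_pos.2 (norm_pos_iff.2 hz))]

lemma dist_eq_C (x z p : E3) :
    dist x z = C (dist x p) (dist z p) (InnerProductGeometry.angle (x - p) (z - p)) := by
  have hlaw := EuclideanGeometry.law_cos x p z (V := E3)
  have hang : EuclideanGeometry.angle x p z = InnerProductGeometry.angle (x - p) (z - p) := rfl
  rw [← Real.sqrt_sq (dist_nonneg (x := x) (y := z)), pow_two, hlaw, hang, C]
  congr 1
  ring

set_option maxHeartbeats 1000000 in
/-- Any rectifiable curve from `a` to `b` staying outside the open unit ball `B(p)`,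
with `r = |a-p| ≥ 1`, `s = |b-p| ≥ 1` and `θ = ∠apb`, has length at least `m(r,s,θ)`. -/
theorem stmt1 (p a b : E3) (r s θ : ℝ) (hr : 1 ≤ r) (hs : 1 ≤ s)
    (hra : dist a p = r) (hsb : dist b p = s)
    (hθ : θ = EuclideanGeometry.angle a p b)
    (γ : ℝ → E3) (hcont : ContinuousOn γ (Set.Icc 0 1))
    (hγa : γ 0 = a) (hγb : γ 1 = b)
    (hout : ∀ t ∈ Set.Icc (0:ℝ) 1, 1 ≤ dist (γ t) p) :
    ENNReal.ofReal (m r s θ) ≤ eVariationOn γ (Set.Icc 0 1) := by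
  classical
  rcases eq_or_ne (eVariationOn γ (Set.Icc 0 1)) ⊤ with htop | htop
  · rw [htop]; exact le_top
  set Vr := (eVariationOn γ (Set.Icc 0 1)).toReal with hVrdef
  have hVr0 : 0 ≤ Vr := ENNReal.toReal_nonneg
  apply ENNReal.ofReal_le_of_le_toReal
  refine le_of_forall_pos_le_add ?_
  intro ε hε
  -- choose η
  set η := min (1/2) (Real.sqrt (ε/(6*(Vr+1)))) with hηdef
  have hquotpos : 0 < ε/(6*(Vr+1)) := by positivity
  have hη0 : 0 < η := lt_min (by norm_num) (Real.sqrt_pos.2 hquotpos)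
  have hηhalf : η ≤ 1/2 := min_le_left _ _
  have hηsq : η^2 ≤ ε/(6*(Vr+1)) := by
    have h1 : η ≤ Real.sqrt (ε/(6*(Vr+1))) := min_le_right _ _
    have := pow_le_pow_left₀ hη0.le h1 2
    rwa [Real.sq_sqrt hquotpos.le] at this
  have hηpi : η ≤ π := le_trans hηhalf (by linarith [Real.pi_gt_three])
  -- curve stays away from p
  have hne : ∀ t ∈ Set.Icc (0:ℝ) 1, γ t - p ≠ 0 := by
    intro t ht h0
    have := hout t ht
    rw [dist_eq_norm, h0] at this
    norm_num at this
  -- normalized curve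
  set σf : ℝ → E3 := fun t => ‖γ t - p‖⁻¹ • (γ t - p) with hσf
  have hσcont : ContinuousOn σf (Set.Icc 0 1) := by
    refine ContinuousOn.smul (f := fun t => ‖γ t - p‖⁻¹) (g := fun t => γ t - p) ?_ ?_
    · exact ((hcont.sub continuousOn_const).norm.inv₀ (fun t ht => by
        simpa [norm_eq_zero] using hne t ht))
    · exact hcont.sub continuousOn_const
  have hσunit : ∀ t ∈ Set.Icc (0:ℝ) 1, ‖σf t‖ = 1 := by
    intro t ht
    rw [hσf]
    simp only
    rw [norm_smul, norm_inv, norm_norm, inv_mul_cancel₀]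
    simpa [norm_eq_zero] using hne t ht
  -- uniform continuity
  have hUC : UniformContinuousOn σf (Set.Icc 0 1) :=
    isCompact_Icc.uniformContinuousOn_of_continuous hσcont
  have hsinpos : 0 < 2*Real.sin (η/2) := by
    have : 0 < Real.sin (η/2) := Real.sin_pos_of_pos_of_lt_pi (by linarith)
      (by linarith [Real.pi_gt_three])
    linarith
  obtain ⟨δ, hδ0, hδ⟩ := Metric.uniformContinuousOn_iff.1 hUC (2*Real.sin (η/2)) hsinpos
  obtain ⟨n0, hn0⟩ := exists_nat_one_div_lt hδ0
  set N := n0 + 1 with hNdef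
  have hN0 : 0 < (N:ℝ) := by positivity
  have hNδ : 1/(N:ℝ) < δ := by exact_mod_cast hn0
  -- partition
  set u : ℕ → ℝ := fun i => min ((i:ℝ)/N) 1 with hudef
  have humono : Monotone u := fun i j hij => min_le_min (by gcongr) (le_refl 1)
  have humem : ∀ i, u i ∈ Set.Icc (0:ℝ) 1 := fun i =>
    ⟨le_min (by positivity) zero_le_one, min_le_right _ _⟩
  have hu0 : u 0 = 0 := by simp [hudef]
  have huN : u N = 1 := by
    simp only [hudef]
    rw [div_self (ne_of_gt hN0), min_self]
  have hustep : ∀ i, u (i+1) - u i ≤ 1/N := by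
    intro i
    have hcast : ((i+1:ℕ):ℝ) = (i:ℝ)+1 := by push_cast; ring
    simp only [hudef, hcast]
    rcases le_total (((i:ℝ)+1)/N) 1 with h | h <;> rcases le_total ((i:ℝ)/N) 1 with h' | h'
    · rw [min_eq_left h, min_eq_left h']; rw [show ((i:ℝ)+1)/N = (i:ℝ)/N + 1/N by ring]; linarith
    · rw [min_eq_left h, min_eq_right h']
      have h2 : 0 < 1/(N:ℝ) := by positivity
      rw [show ((i:ℝ)+1)/N = (i:ℝ)/N + 1/N by ring] at h
      linarith
    · rw [min_eq_right h, min_eq_left h']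
      rw [show ((i:ℝ)+1)/N = (i:ℝ)/N + 1/N by ring] at h
      linarith
    · rw [min_eq_right h, min_eq_right h']
      have h2 : 0 < 1/(N:ℝ) := by positivity
      linarith
  -- points and data
  set x : ℕ → E3 := fun i => γ (u i) with hxdef
  set ρ : ℕ → ℝ := fun i => dist (x i) p with hρdef
  have hρ1 : ∀ i, 1 ≤ ρ i := fun i => hout _ (humem i)
  set α : ℕ → ℝ := fun i => InnerProductGeometry.angle (x i - p) (x (i+1) - p) with hαdef
  have hα0 : ∀ i, 0 ≤ α i := fun i => angle_nonneg _ _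
  have hank : ∀ i j, InnerProductGeometry.angle (x i - p) (x j - p)
      = angle (σf (u i)) (σf (u j)) := by
    intro i j
    rw [angle_normalize (by simpa [hxdef] using hne _ (humem i))
      (by simpa [hxdef] using hne _ (humem j))]
  have hαnorm : ∀ i, α i = angle (σf (u i)) (σf (u (i+1))) := fun i => hank i (i+1)
  have hαη : ∀ i, α i ≤ η := by
    intro i
    rw [hαnorm i]
    apply chord_to_angle (hσunit _ (humem i)) (hσunit _ (humem (i+1))) hη0.le hηpi
    have hd : dist (u i) (u (i+1)) < δ := by
      rw [Real.dist_eq, abs_sub_comm, abs_of_nonneg (sub_nonneg.2 (humono (Nat.le_succ i)))]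
      exact lt_of_le_of_lt (hustep i) hNδ
    have := hδ _ (humem i) _ (humem (i+1)) hd
    rw [dist_eq_norm] at this
    exact this.le
  have hchord : ∀ i, dist (x i) (x (i+1)) = C (ρ i) (ρ (i+1)) (α i) := by
    intro i
    rw [hρdef, hαdef]
    exact dist_eq_C (x i) (x (i+1)) p
  -- telescoping induction
  set Ψ : ℕ → ℝ := fun k => ∑ i ∈ Finset.range k, α i with hΨdef
  have hΨ0 : ∀ k, 0 ≤ Ψ k := fun k => Finset.sum_nonneg (fun i _ => hα0 i)
  have main : ∀ k, m r (ρ k) (Ψ k) ≤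
      ∑ i ∈ Finset.range k, (dist (x i) (x (i+1)) + 3*(α i)^3) := by
    intro k
    induction k with
    | zero =>
      have hx0 : x 0 = a := by rw [hxdef]; simp only [hu0]; exact hγa
      have hρ0 : ρ 0 = r := by rw [hρdef]; simp only [hx0]; exact hra
      simp [hΨdef, hρ0, m_self_zero hr]
    | succ k ih =>
      have hΨsucc : Ψ (k+1) = Ψ k + α k := Finset.sum_range_succ _ _
      have hstep := step hr (hρ1 k) (hρ1 (k+1)) (hΨ0 k) (hα0 k) (le_trans (hαη k) hηhalf)
      rw [hΨsucc]
      rw [Finset.sum_range_succ]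
      calc m r (ρ (k+1)) (Ψ k + α k)
          ≤ m r (ρ k) (Ψ k) + C (ρ k) (ρ (k+1)) (α k) + 3*(α k)^3 := hstep
        _ ≤ (∑ i ∈ Finset.range k, (dist (x i) (x (i+1)) + 3*(α i)^3))
            + (dist (x k) (x (k+1)) + 3*(α k)^3) := by
            rw [hchord k]; linarith
  -- θ ≤ Ψ N
  have hanglechain : ∀ k, InnerProductGeometry.angle (x 0 - p) (x k - p) ≤ Ψ k := by
    intro k
    induction k with
    | zero =>
      rw [angle_self (by simpa [hxdef] using hne _ (humem 0))]
      simp [hΨdef]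
    | succ k ih =>
      have h1 : InnerProductGeometry.angle (x 0 - p) (x (k+1) - p) ≤
          InnerProductGeometry.angle (x 0 - p) (x k - p) + α k := by
        rw [hank 0 (k+1), hank 0 k, hαnorm k]
        exact angle_triangle_unit (hσunit _ (humem 0)) (hσunit _ (humem k))
          (hσunit _ (humem (k+1)))
      have hΨsucc : Ψ (k+1) = Ψ k + α k := Finset.sum_range_succ _ _
      rw [hΨsucc]
      linarith
  -- final computations
  have hxN : x N = b := by rw [hxdef]; simp only [huN]; exact hγb
  have hρN : ρ N = s := by rw [hρdef]; simp only [hxN]; exact hsb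
  have hx0a : x 0 = a := by rw [hxdef]; simp only [hu0]; exact hγa
  have hθΨ : θ ≤ Ψ N := by
    have h1 := hanglechain N
    have hθeq : θ = InnerProductGeometry.angle (x 0 - p) (x N - p) := by
      rw [hθ, hx0a, hxN]; rfl
    linarith [hθeq ▸ h1]
  have hθ0 : 0 ≤ θ := by
    rw [hθ]; exact EuclideanGeometry.angle_nonneg _ _ _
  have hm1 : m r s θ ≤ m r s (Ψ N) := m_mono hr hs hθ0 hθΨ
  have hm2 := main N
  rw [hρN] at hm2
  have hsum_le : ∑ i ∈ Finset.range N, dist (x i) (x (i+1)) ≤ Vr := by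
    have hEV := eVariationOn.sum_le_of_monotoneOn_Iic (f := γ) (s := Set.Icc (0:ℝ) 1) (n := N)
      (u := u) (humono.monotoneOn _) (fun i _ => humem i)
    have hconv : ∑ i ∈ Finset.range N, edist (γ (u (i+1))) (γ (u i))
        = ENNReal.ofReal (∑ i ∈ Finset.range N, dist (x i) (x (i+1))) := by
      rw [ENNReal.ofReal_sum_of_nonneg (fun i _ => dist_nonneg)]
      apply Finset.sum_congr rfl
      intro i _
      rw [edist_dist, dist_comm]
    rw [hconv] at hEV
    exact (ENNReal.ofReal_le_iff_le_toReal htop).1 hEV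
  have hai2 : ∀ i, α i ≤ 2 * dist (x i) (x (i+1)) := by
    intro i
    have hc := C_ge_linear (hρ1 i) (hρ1 (i+1)) (hα0 i) (le_trans (hαη i) hηhalf)
    rw [← hchord i] at hc
    have hα2 : (α i)^2 ≤ 1/4 := by nlinarith [hα0 i, hαη i, hηhalf]
    nlinarith [hc, mul_le_mul_of_nonneg_left hα2 (hα0 i), hα0 i,
      dist_nonneg (x := x i) (y := x (i+1))]
  have herr : ∑ i ∈ Finset.range N, 3*(α i)^3
      ≤ 6 * η^2 * ∑ i ∈ Finset.range N, dist (x i) (x (i+1)) := by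
    have h1 : ∀ i ∈ Finset.range N, 3*(α i)^3 ≤ 6*η^2 * dist (x i) (x (i+1)) := by
      intro i _
      have h2 : (α i)^3 ≤ η^2 * α i := by
        have hαsq : (α i)^2 ≤ η^2 := by nlinarith [hα0 i, hαη i]
        nlinarith [mul_le_mul_of_nonneg_right hαsq (hα0 i)]
      have h3 := hai2 i
      nlinarith [sq_nonneg η, hα0 i, dist_nonneg (x := x i) (y := x (i+1)),
        mul_le_mul_of_nonneg_left h3 (sq_nonneg η)]
    calc ∑ i ∈ Finset.range N, 3*(α i)^3
        ≤ ∑ i ∈ Finset.range N, 6*η^2 * dist (x i) (x (i+1)) := Finset.sum_le_sum h1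
      _ = 6*η^2 * ∑ i ∈ Finset.range N, dist (x i) (x (i+1)) := by rw [Finset.mul_sum]
  have hsplit : ∑ i ∈ Finset.range N, (dist (x i) (x (i+1)) + 3*(α i)^3)
      = (∑ i ∈ Finset.range N, dist (x i) (x (i+1))) + ∑ i ∈ Finset.range N, 3*(α i)^3 :=
    Finset.sum_add_distrib
  have h6 : 6*η^2 * (∑ i ∈ Finset.range N, dist (x i) (x (i+1))) ≤ 6*η^2*Vr :=
    mul_le_mul_of_nonneg_left hsum_le (by positivity)
  have hεb : 6*η^2*Vr ≤ ε := by
    have h1 : (6*(Vr+1)) * η^2 ≤ (6*(Vr+1)) * (ε/(6*(Vr+1))) :=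
      mul_le_mul_of_nonneg_left hηsq (by positivity)
    have h2 : (6*(Vr+1)) * (ε/(6*(Vr+1))) = ε := by field_simp
    nlinarith [sq_nonneg η]
  rw [hsplit] at hm2
  linarith [hm1, hm2, hsum_le, herr, h6, hεb]
end

section
/- For r ≥ 1 define f(r) = sqrt(r²-1) + arcsin(1/r) and g(r) = 2π - 2·arcsin(r/2) for r ≤ 2, g(r) = π for r ≥ 2. Then the minimum of f(r) + g(r) over r ∈ [1,∞) equals 7π/6 + sqrt(3), attained at r = 2. -/
open Real Set

lemma arcsin_half : Real.arcsin (1/2) = Real.pi/6 := by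
  rw [← Real.sin_pi_div_six]
  exact Real.arcsin_sin (by linarith [Real.pi_pos]) (by linarith [Real.pi_pos])

lemma sqrt_aux {r : ℝ} (hr : 1 ≤ r) : Real.sqrt (1 - (1/r)^2) = Real.sqrt (r^2-1) / r := by
  have hr0 : (0:ℝ) < r := by linarith
  rw [show (1 - (1/r)^2) = (r^2-1)/r^2 by field_simp,
    Real.sqrt_div (by nlinarith), Real.sqrt_sq hr0.le]

/-- The minimum of `f(r) + g(r)` over `r ∈ [1,∞)` is `7π/6 + √3`, attained at `r = 2`. -/
theorem stmt4 :
    (∀ r ∈ Set.Ici (1:ℝ), 7*Real.pi/6 + Real.sqrt 3 ≤ f r + g r) ∧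
      f 2 + g 2 = 7*Real.pi/6 + Real.sqrt 3 := by
  have hpi := Real.pi_pos
  have hpi4 := Real.pi_le_four
  have h3 : Real.sqrt 3 ^ 2 = 3 := Real.sq_sqrt (by norm_num)
  have h3nn : (0:ℝ) ≤ Real.sqrt 3 := Real.sqrt_nonneg 3
  have h3le2 : Real.sqrt 3 ≤ 2 := by
    nlinarith [Real.sq_sqrt (show (0:ℝ) ≤ 3 by norm_num)]
  constructor
  · intro r hr
    simp only [Set.mem_Ici] at hr
    have hr0 : (0:ℝ) < r := by linarith
    by_cases hle : r ≤ 2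
    · -- case 1 ≤ r ≤ 2
      have hg : g r = 2*Real.pi - 2*Real.arcsin (r/2) := if_pos hle
      -- √(r²-1) ≥ √3 (r-1)
      have hA1 : Real.sqrt 3 * (r-1) ≤ Real.sqrt (r^2-1) := by
        have : Real.sqrt (3*(r-1)^2) ≤ Real.sqrt (r^2-1) :=
          Real.sqrt_le_sqrt (by nlinarith)
        rwa [Real.sqrt_mul (by norm_num), Real.sqrt_sq (by linarith)] at this
      -- arcsin(1/r) ≥ π/6
      have hA2 : Real.pi/6 ≤ Real.arcsin (1/r) := by
        rw [← arcsin_half]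
        apply Real.monotone_arcsin
        rw [div_le_div_iff₀ (by norm_num) hr0]; linarith
      -- arcsin(r/2) ≤ π/2 - √(2-r)
      obtain ⟨t, ht⟩ : ∃ t, t = Real.sqrt (2-r) := ⟨_, rfl⟩
      have ht0 : 0 ≤ t := ht ▸ Real.sqrt_nonneg _
      have ht2 : t^2 = 2 - r := ht ▸ Real.sq_sqrt (by linarith)
      have ht1 : t ≤ 1 := by nlinarith
      have hA3 : Real.arcsin (r/2) ≤ Real.pi/2 - t := by
        have hc : r/2 ≤ Real.cos t := by
          have := Real.one_sub_sq_div_two_le_cos (x := t)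
          rw [ht2] at this; linarith
        calc Real.arcsin (r/2) ≤ Real.arcsin (Real.cos t) := Real.monotone_arcsin hc
          _ = Real.pi/2 - t := by
            rw [← Real.sin_pi_div_two_sub]
            exact Real.arcsin_sin (by linarith [Real.pi_gt_three]) (by linarith)
      -- 2√(2-r) ≥ √3 (2-r)
      have hA4 : Real.sqrt 3 * (2-r) ≤ 2*t := by nlinarith
      rw [hg]; unfold f; linarith
    · -- case r > 2
      push_neg at hle
      have hg : g r = Real.pi := if_neg (by linarith)
      obtain ⟨D, hD⟩ : ∃ D, D = Real.sqrt (r^2-1) - Real.sqrt 3 := ⟨_, rfl⟩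
      have hDnn : 0 ≤ D := by
        have : Real.sqrt 3 ≤ Real.sqrt (r^2-1) := Real.sqrt_le_sqrt (by nlinarith)
        linarith
      obtain ⟨b, hb⟩ : ∃ b, b = Real.arcsin (1/r) := ⟨_, rfl⟩
      have hx1 : (1:ℝ)/r ≤ 1/2 := by
        rw [div_le_div_iff₀ hr0 (by norm_num)]; linarith
      have hx0 : (0:ℝ) ≤ 1/r := by positivity
      have hb0 : 0 ≤ b := hb ▸ Real.arcsin_nonneg.2 hx0
      have hble : b ≤ Real.pi/6 := by
        rw [hb, ← arcsin_half]; exact Real.monotone_arcsin hx1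
      obtain ⟨u, hu⟩ : ∃ u, u = Real.pi/6 - b := ⟨_, rfl⟩
      have hu0 : 0 ≤ u := by linarith
      have hu1 : u ≤ 1 := by nlinarith
      -- sin u = D / (2r)
      have hsinu : Real.sin u = D / (2*r) := by
        rw [hu, hb, Real.sin_sub, Real.sin_pi_div_six, Real.cos_pi_div_six,
          Real.cos_arcsin, Real.sin_arcsin (by linarith) (by linarith),
          sqrt_aux (by linarith), hD]
        field_simp
      -- u ≤ 2 sin u
      have hjordan : u ≤ 2 * Real.sin u := by
        rcases eq_or_lt_of_le hu0 with h | h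
        · simp [← h]
        · have h1 := Real.sin_gt_sub_cube h
          have h2 : u^3 ≤ u := by
            nlinarith [mul_nonneg (mul_nonneg hu0 (by linarith : (0:ℝ) ≤ 1-u))
              (by linarith : (0:ℝ) ≤ 1+u)]
          linarith
      have hfin : u ≤ D := by
        rw [hsinu] at hjordan
        have h1 : 2*(D/(2*r)) = D/r := by field_simp
        have h2 : D/r ≤ D := div_le_self hDnn (by linarith)
        linarith
      rw [hg]; unfold f
      have hsq : Real.sqrt (r^2-1) = Real.sqrt 3 + D := by rw [hD]; ring
      rw [hsq, ← hb]
      linarith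
  · have hf2 : f 2 = Real.sqrt 3 + Real.pi/6 := by
      unfold f
      norm_num
      rw [arcsin_half]
    have hg2 : g 2 = Real.pi := by
      unfold g
      rw [if_pos le_rfl]
      norm_num [Real.arcsin_one]
      ring
    rw [hf2, hg2]; ring
end

section
/- For r ≥ 1, define f(r) = sqrt(r²-1) + arcsin(1/r) and g(r) = 2π - 2·arcsin(r/2) for r ≤ 2, g(r) = π for r ≥ 2. The infimum of 2f(r) + g(r) + r over r ∈ [1,∞) is attained at some r ∈ (1, 1.01), and the minimum value exceeds 9.3774. -/
open Real Set


lemma arcsin_comp {x : ℝ} (h0 : 0 ≤ x) :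
    Real.arcsin x = Real.pi/2 - Real.arcsin (Real.sqrt (1 - x^2)) := by
  have h1 := Real.arccos_eq_arcsin h0
  have h2 := Real.arccos_eq_pi_div_two_sub_arcsin x
  linarith

lemma arcsin_shift {x : ℝ} (h0 : 1/2 ≤ x) (h1 : x ≤ 0.52) :
    Real.arcsin x = Real.pi/6 + Real.arcsin (x*(Real.sqrt 3/2) - Real.sqrt (1-x^2)/2) := by
  have hx1 : x ≤ 1 := by linarith
  have hm1 : -1 ≤ x := by linarith
  have hs : Real.sin (Real.arcsin x - Real.pi/6) = x*(Real.sqrt 3/2) - Real.sqrt (1-x^2)/2 := by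
    rw [Real.sin_sub, Real.sin_arcsin hm1 hx1, Real.cos_arcsin, Real.sin_pi_div_six,
      Real.cos_pi_div_six]
    ring
  have h6 : Real.arcsin (1/2 : ℝ) = Real.pi/6 := by
    rw [← Real.sin_pi_div_six]
    exact Real.arcsin_sin (by linarith [Real.pi_pos]) (by linarith [Real.pi_pos])
  have hlo : Real.pi/6 ≤ Real.arcsin x := h6 ▸ Real.monotone_arcsin h0
  have hhi : Real.arcsin x ≤ Real.pi/2 := Real.arcsin_le_pi_div_two x
  rw [← hs, Real.arcsin_sin (by linarith [Real.pi_pos]) (by linarith [Real.pi_pos])]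
  ring

lemma sqrt_ratio {r : ℝ} (hr : 1 ≤ r) :
    Real.sqrt (1 - (1/r)^2) = Real.sqrt (r^2-1)/r := by
  have hr0 : 0 < r := lt_of_lt_of_le one_pos hr
  rw [show 1-(1/r)^2 = (r^2-1)/r^2 by field_simp,
    Real.sqrt_div (by nlinarith), Real.sqrt_sq hr0.le]

lemma f_eq {r : ℝ} (hr : 1 ≤ r) :
    f r = Real.sqrt (r^2-1) + Real.pi/2 - Real.arcsin (Real.sqrt (r^2-1)/r) := by
  have hr0 : 0 < r := lt_of_lt_of_le one_pos hr
  have h1 : Real.arcsin (1/r) = Real.pi/2 - Real.arcsin (Real.sqrt (1 - (1/r)^2)) :=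
    arcsin_comp (by positivity)
  rw [f, h1, sqrt_ratio hr]
  ring

lemma g_eq {r : ℝ} (hr : r ≤ 2) : g r = 2*Real.pi - 2*Real.arcsin (r/2) := if_pos hr

lemma g_ge2 {r : ℝ} (hr : 2 ≤ r) : g r = Real.pi := by
  unfold g
  split
  · have : r = 2 := le_antisymm (by assumption) hr
    rw [this]
    norm_num [Real.arcsin_one]
    ring
  · rfl

lemma h_eq {r : ℝ} (h1 : 1 ≤ r) (h2 : r ≤ 2) :
    2*f r + g r + r = 2*Real.sqrt (r^2-1) + 3*Real.pi
      - 2*Real.arcsin (Real.sqrt (r^2-1)/r) - 2*Real.arcsin (r/2) + r := by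
  rw [f_eq h1, g_eq h2]
  ring


noncomputable def phi (x : ℝ) : ℝ := 2*Real.sqrt (x^2-1)/x - 2/Real.sqrt (4-x^2) + 1

noncomputable def psi (x : ℝ) : ℝ :=
  2/(x^2*Real.sqrt (x^2-1)) - 2*x/(Real.sqrt (4-x^2))^3


lemma sqrt_sub_hasDeriv {x : ℝ} (h1 : 1 < x) :
    HasDerivAt (fun r : ℝ => Real.sqrt (r^2-1)) (x/Real.sqrt (x^2-1)) x := by
  have hne : x^2 - 1 ≠ 0 := by nlinarith
  have hin : HasDerivAt (fun r : ℝ => r^2 - 1) (2*x) x := by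
    have := (hasDerivAt_pow 2 x).sub_const 1
    refine this.congr_deriv (Eq.symm ?_)
    push_cast; ring
  have := (Real.hasDerivAt_sqrt hne).comp x hin
  refine this.congr_deriv (Eq.symm ?_)
  have hs : 0 < Real.sqrt (x^2-1) := Real.sqrt_pos.mpr (by nlinarith)
  field_simp

lemma sqrt4_hasDeriv {x : ℝ} (h2 : x < 2) (h0 : 0 < x) :
    HasDerivAt (fun r : ℝ => Real.sqrt (4-r^2)) (-x/Real.sqrt (4-x^2)) x := by
  have hne : 4 - x^2 ≠ 0 := by nlinarith
  have hin : HasDerivAt (fun r : ℝ => 4 - r^2) (-(2*x)) x := by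
    have := ((hasDerivAt_pow 2 x).const_sub 4)
    refine this.congr_deriv (Eq.symm ?_)
    push_cast; ring
  have := (Real.hasDerivAt_sqrt hne).comp x hin
  refine this.congr_deriv (Eq.symm ?_)
  have hs : 0 < Real.sqrt (4-x^2) := Real.sqrt_pos.mpr (by nlinarith)
  field_simp

lemma h_hasDeriv {x : ℝ} (h1 : 1 < x) (h2 : x < 2) :
    HasDerivAt (fun r => 2*f r + g r + r) (phi x) x := by
  have hx0 : 0 < x := by linarith
  have hs : 0 < Real.sqrt (x^2-1) := Real.sqrt_pos.mpr (by nlinarith)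
  have hs2 : (Real.sqrt (x^2-1))^2 = x^2-1 := Real.sq_sqrt (by nlinarith)
  have hw : 0 < Real.sqrt (4-x^2) := Real.sqrt_pos.mpr (by nlinarith)
  have hw2 : (Real.sqrt (4-x^2))^2 = 4-x^2 := Real.sq_sqrt (by nlinarith)
  -- derivative of f
  have harc : HasDerivAt (fun r : ℝ => Real.arcsin (1/r))
      ((1/Real.sqrt (1-(1/x)^2)) * (-(x^2)⁻¹)) x := by
    have hinv : HasDerivAt (fun r : ℝ => 1/r) (-(x^2)⁻¹) x := by
      simpa using (hasDerivAt_inv (ne_of_gt hx0))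
    have hne1 : (1:ℝ)/x ≠ -1 := by
      have : 0 < 1/x := by positivity
      linarith
    have hne2 : (1:ℝ)/x ≠ 1 := by
      have : 1/x < 1 := by rw [div_lt_one hx0]; linarith
      linarith
    exact (Real.hasDerivAt_arcsin hne1 hne2).comp x hinv
  have hf : HasDerivAt f (Real.sqrt (x^2-1)/x) x := by
    have := (sqrt_sub_hasDeriv h1).add harc
    have heq : x/Real.sqrt (x^2-1) + (1/Real.sqrt (1-(1/x)^2)) * (-(x^2)⁻¹)
        = Real.sqrt (x^2-1)/x := by
      rw [sqrt_ratio (le_of_lt h1)]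
      field_simp
      linear_combination (-1:ℝ) * hs2
    rw [heq] at this
    exact this
  -- derivative of g
  have hg : HasDerivAt g (-(2/Real.sqrt (4-x^2))) x := by
    have harc2 : HasDerivAt (fun r : ℝ => 2*Real.pi - 2*Real.arcsin (r/2))
        (-(2 * ((1/Real.sqrt (1-(x/2)^2)) * (1/2)))) x := by
      have hinn : HasDerivAt (fun r : ℝ => r/2) (1/2 : ℝ) x := (hasDerivAt_id x).div_const 2
      have hne1 : x/2 ≠ -1 := by linarith
      have hne2 : x/2 ≠ 1 := by intro h; nlinarith [h]
      have := ((Real.hasDerivAt_arcsin hne1 hne2).comp x hinn).const_mul 2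
      simpa using this.const_sub (2*Real.pi)
    have heq : -(2 * ((1/Real.sqrt (1-(x/2)^2)) * (1/2))) = -(2/Real.sqrt (4-x^2)) := by
      have h4 : Real.sqrt (1-(x/2)^2) = Real.sqrt (4-x^2)/2 := by
        rw [show 1-(x/2)^2 = (4-x^2)/(2^2) by ring,
          Real.sqrt_div (by nlinarith), Real.sqrt_sq (by norm_num)]
      rw [h4]
      field_simp
    rw [heq] at harc2
    apply harc2.congr_of_eventuallyEq
    filter_upwards [Iio_mem_nhds h2] with r hr
    rw [g, if_pos (le_of_lt hr)]
  have hid : HasDerivAt (fun r : ℝ => r) 1 x := hasDerivAt_id x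
  have := ((hf.const_mul 2).add hg).add hid
  refine this.congr_deriv (Eq.symm ?_)
  rw [phi]
  ring

lemma phi_hasDeriv {x : ℝ} (h1 : 1 < x) (h2 : x < 2) :
    HasDerivAt phi (psi x) x := by
  have hx0 : 0 < x := by linarith
  have hs : 0 < Real.sqrt (x^2-1) := Real.sqrt_pos.mpr (by nlinarith)
  have hs2 : (Real.sqrt (x^2-1))^2 = x^2-1 := Real.sq_sqrt (by nlinarith)
  have hw : 0 < Real.sqrt (4-x^2) := Real.sqrt_pos.mpr (by nlinarith)
  have hw2 : (Real.sqrt (4-x^2))^2 = 4-x^2 := Real.sq_sqrt (by nlinarith)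
  have hp1 : HasDerivAt (fun r : ℝ => 2*Real.sqrt (r^2-1)/r)
      (2/(x^2*Real.sqrt (x^2-1))) x := by
    have := ((sqrt_sub_hasDeriv h1).const_mul 2).div (hasDerivAt_id x) (ne_of_gt hx0)
    refine this.congr_deriv (Eq.symm ?_)
    simp only [id]
    field_simp
    linear_combination (1:ℝ) * hs2
  have hp2 : HasDerivAt (fun r : ℝ => 2/Real.sqrt (4-r^2))
      (2*x/(Real.sqrt (4-x^2))^3) x := by
    have hinv := ((sqrt4_hasDeriv h2 hx0).inv (ne_of_gt hw)).const_mul 2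
    have heq : 2 * (-(-x/Real.sqrt (4-x^2)) / (Real.sqrt (4-x^2))^2)
        = 2*x/(Real.sqrt (4-x^2))^3 := by
      field_simp
    rw [heq] at hinv
    apply hinv.congr_of_eventuallyEq
    filter_upwards [] with r
    rw [div_eq_mul_inv]; rfl
  have := (hp1.sub hp2).add_const 1
  have heq2 : (fun r : ℝ => 2*Real.sqrt (r^2-1)/r - 2/Real.sqrt (4-r^2) + 1) = phi := by
    funext r; rw [phi]
  rw [psi]
  rw [← heq2]
  exact this


lemma psi_pos {x : ℝ} (h1 : 1 < x) (h2 : x ≤ 1.35) : 0 < psi x := by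
  have hx0 : 0 < x := by linarith
  have hs : 0 < Real.sqrt (x^2-1) := Real.sqrt_pos.mpr (by nlinarith)
  have hs2 : (Real.sqrt (x^2-1))^2 = x^2-1 := Real.sq_sqrt (by nlinarith)
  have hw : 0 < Real.sqrt (4-x^2) := Real.sqrt_pos.mpr (by nlinarith)
  have hw2 : (Real.sqrt (4-x^2))^2 = 4-x^2 := Real.sq_sqrt (by nlinarith)
  rw [psi, sub_pos, div_lt_div_iff₀ (by positivity) (by positivity)]
  have key : x^3 * Real.sqrt (x^2-1) < (Real.sqrt (4-x^2))^3 := by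
    apply lt_of_pow_lt_pow_left₀ 2 (by positivity)
    have e1 : (x^3*Real.sqrt (x^2-1))^2 = x^6*(x^2-1) := by
      rw [mul_pow, hs2]; ring
    have e2 : ((Real.sqrt (4-x^2))^3)^2 = (4-x^2)^3 := by
      rw [← pow_mul, show 3*2=2*3 by norm_num, pow_mul, hw2]
    rw [e1, e2]
    have hu : x^2 ≤ 1.8225 := by nlinarith
    have l1 : x^6 ≤ 1.8225^3 := by
      calc x^6 = (x^2)^3 := by ring
      _ ≤ 1.8225^3 := pow_le_pow_left₀ (sq_nonneg x) hu 3
    have l2 : x^2 - 1 ≤ 0.8225 := by linarith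
    have r1 : (2.1775:ℝ)^3 ≤ (4-x^2)^3 := pow_le_pow_left₀ (by norm_num) (by linarith) 3
    nlinarith [l1, l2, r1, pow_nonneg (by positivity : (0:ℝ) ≤ x^2) 3]
  nlinarith [key, hx0, mul_pos (mul_pos hx0 hx0) hx0]

lemma phi_contOn : ContinuousOn phi (Icc 1 1.35) := by
  apply ContinuousOn.add
  apply ContinuousOn.sub
  · apply ContinuousOn.div
    · exact (by continuity : Continuous fun x : ℝ => 2*Real.sqrt (x^2-1)).continuousOn
    · exact continuousOn_id
    · intro x hx; have := hx.1; intro h; rw [h] at this; linarith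
  · apply ContinuousOn.div continuousOn_const
    · exact (by continuity : Continuous fun x : ℝ => Real.sqrt (4-x^2)).continuousOn
    · intro x hx
      have h2 : x ≤ 1.35 := hx.2
      have h1 : 1 ≤ x := hx.1
      have : 0 < Real.sqrt (4-x^2) := Real.sqrt_pos.mpr (by nlinarith)
      exact ne_of_gt this
  · exact continuousOn_const

lemma phi_mono : StrictMonoOn phi (Icc 1 1.35) := by
  apply strictMonoOn_of_deriv_pos (convex_Icc 1 1.35) phi_contOn
  rw [interior_Icc]
  intro x hx
  rw [(phi_hasDeriv hx.1 (by linarith [hx.2])).deriv]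
  exact psi_pos hx.1 (le_of_lt hx.2)

lemma arcsin_ge_poly {x : ℝ} (h0 : 0 ≤ x) (h1 : x < 1) :
    x + x^3/6 + 3*x^5/40 ≤ Real.arcsin x := by
  have key : MonotoneOn (fun y : ℝ => Real.arcsin y - (y + y^3/6 + 3*y^5/40)) (Icc 0 x) := by
    apply monotoneOn_of_deriv_nonneg (convex_Icc 0 x)
    · exact (Real.continuous_arcsin.sub (by continuity)).continuousOn
    · rw [interior_Icc]
      intro y hy
      have hy1 : y ≠ -1 := by intro h; rw [h] at hy; linarith [hy.1]
      have hy2 : y ≠ 1 := by intro h; rw [h] at hy; linarith [hy.2, h1]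
      exact ((Real.differentiableAt_arcsin.mpr ⟨hy1, hy2⟩).sub (by fun_prop)).differentiableWithinAt
    · rw [interior_Icc]
      intro y hy
      have hy0 : 0 < y := hy.1
      have hyx : y < x := hy.2
      have hy1 : y ≠ -1 := by linarith
      have hy2 : y ≠ 1 := by nlinarith
      have hP : HasDerivAt (fun y : ℝ => y + y^3/6 + 3*y^5/40) (1 + y^2/2 + 3*y^4/8) y := by
        have h3 := (hasDerivAt_pow 3 y).div_const 6
        have h5 := ((hasDerivAt_pow 5 y).const_mul 3).div_const 40
        have := ((hasDerivAt_id y).add h3).add h5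
        refine this.congr_deriv (Eq.symm ?_)
        push_cast
        ring
      rw [(show HasDerivAt (fun y => Real.arcsin y - (y + y^3/6 + 3*y^5/40)) _ y from
        (Real.hasDerivAt_arcsin hy1 hy2).sub hP).deriv]
      have hc : 0 < Real.sqrt (1 - y^2) := Real.sqrt_pos.mpr (by nlinarith)
      have hc2 : (Real.sqrt (1-y^2))^2 = 1 - y^2 := Real.sq_sqrt (by nlinarith)
      rw [sub_nonneg]
      rw [le_div_iff₀ hc]
      have hpc : 0 ≤ (1 + y^2/2 + 3*y^4/8) * Real.sqrt (1-y^2) := by positivity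
      have h2 : ((1 + y^2/2 + 3*y^4/8) * Real.sqrt (1-y^2))^2 ≤ 1 := by
        rw [mul_pow, hc2]
        nlinarith [pow_nonneg hy0.le 6, pow_nonneg hy0.le 8, pow_nonneg hy0.le 10]
      nlinarith [hpc, h2]
  have h01 : (0:ℝ) ∈ Icc 0 x := by constructor <;> norm_num [h0]
  have hx1 : x ∈ Icc 0 x := by constructor <;> norm_num [h0]
  have := key h01 hx1 h0
  simp only [Real.arcsin_zero] at this
  norm_num at this
  linarith

lemma arcsin_le_poly {x : ℝ} (h0 : 0 ≤ x) (h1 : x ≤ 0.52) :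
    Real.arcsin x ≤ x + x^3/6 + 3*x^5/40 + x^7/7 := by
  have key : MonotoneOn (fun y : ℝ => (y + y^3/6 + 3*y^5/40 + y^7/7) - Real.arcsin y) (Icc 0 x) := by
    apply monotoneOn_of_deriv_nonneg (convex_Icc 0 x)
    · exact ((by continuity : Continuous fun y:ℝ => y + y^3/6 + 3*y^5/40 + y^7/7).sub
        Real.continuous_arcsin).continuousOn
    · rw [interior_Icc]
      intro y hy
      have hy1 : y ≠ -1 := by intro h; rw [h] at hy; linarith [hy.1]
      have hy2 : y ≠ 1 := by intro h; rw [h] at hy; nlinarith [hy.2]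
      exact ((by fun_prop : DifferentiableAt ℝ (fun y:ℝ => y + y^3/6 + 3*y^5/40 + y^7/7) y).sub
        (Real.differentiableAt_arcsin.mpr ⟨hy1, hy2⟩)).differentiableWithinAt
    · rw [interior_Icc]
      intro y hy
      have hy0 : 0 < y := hy.1
      have hyx : y < x := hy.2
      have hy1 : y ≠ -1 := by linarith
      have hy2 : y ≠ 1 := by nlinarith
      have hP : HasDerivAt (fun y : ℝ => y + y^3/6 + 3*y^5/40 + y^7/7)
          (1 + y^2/2 + 3*y^4/8 + y^6) y := by
        have h3 := (hasDerivAt_pow 3 y).div_const 6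
        have h5 := ((hasDerivAt_pow 5 y).const_mul 3).div_const 40
        have h7 := (hasDerivAt_pow 7 y).div_const 7
        have := (((hasDerivAt_id y).add h3).add h5).add h7
        refine this.congr_deriv (Eq.symm ?_)
        push_cast
        ring
      rw [(show HasDerivAt (fun y => y + y^3/6 + 3*y^5/40 + y^7/7 - Real.arcsin y) _ y from
        hP.sub (Real.hasDerivAt_arcsin hy1 hy2)).deriv]
      have hc : 0 < Real.sqrt (1 - y^2) := Real.sqrt_pos.mpr (by nlinarith)
      have hc2 : (Real.sqrt (1-y^2))^2 = 1 - y^2 := Real.sq_sqrt (by nlinarith)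
      rw [sub_nonneg]
      rw [div_le_iff₀ hc]
      have hy52 : y ≤ 0.52 := by linarith
      have hpc : 0 ≤ (1 + y^2/2 + 3*y^4/8 + y^6) * Real.sqrt (1-y^2) := by positivity
      have h2 : 1 ≤ ((1 + y^2/2 + 3*y^4/8 + y^6) * Real.sqrt (1-y^2))^2 := by
        rw [mul_pow, hc2]
        have hz : y^2 ≤ 0.2704 := by nlinarith
        nlinarith [pow_nonneg hy0.le 6, pow_nonneg hy0.le 12,
          mul_nonneg (pow_nonneg hy0.le 6) (sub_nonneg.mpr hz),
          mul_nonneg (pow_nonneg hy0.le 8) (sub_nonneg.mpr hz),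
          mul_nonneg (pow_nonneg hy0.le 10) (sub_nonneg.mpr hz),
          mul_nonneg (pow_nonneg hy0.le 12) (sub_nonneg.mpr hz)]
      nlinarith [hpc, h2]
  have h01 : (0:ℝ) ∈ Icc 0 x := by constructor <;> norm_num [h0]
  have hx1 : x ∈ Icc 0 x := by constructor <;> norm_num [h0]
  have := key h01 hx1 h0
  simp only [Real.arcsin_zero] at this
  norm_num at this
  linarith
lemma sqrtUB {v c : ℝ} (hc : 0 ≤ c) (h : v ≤ c^2) : Real.sqrt v ≤ c :=
  Real.sqrt_le_iff.mpr ⟨hc, h⟩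

lemma phiA_le : phi 1.0028 ≤ 0 := by
  rw [phi]
  have hS : Real.sqrt ((1.0028:ℝ)^2-1) ≤ 0.0748855127 := sqrtUB (by norm_num) (by norm_num)
  have hU1 : (1.7304312063:ℝ) ≤ Real.sqrt (4-(1.0028:ℝ)^2) := Real.le_sqrt_of_sq_le (by norm_num)
  have hU2 : Real.sqrt (4-(1.0028:ℝ)^2) ≤ 1.7304312064 := sqrtUB (by norm_num) (by norm_num)
  have h2U : (2:ℝ)/1.7304312064 ≤ 2/Real.sqrt (4-(1.0028:ℝ)^2) :=
    div_le_div_of_nonneg_left (by norm_num) (by linarith) hU2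
  have h2S : 2*Real.sqrt ((1.0028:ℝ)^2-1)/1.0028 ≤ 2*0.0748855127/1.0028 := by
    gcongr
  have : (2:ℝ)*0.0748855127/1.0028 - 2/1.7304312064 + 1 ≤ 0 := by norm_num
  linarith

lemma phiA_ge : (-0.00643:ℝ) ≤ phi 1.0028 := by
  rw [phi]
  have hS : (0.0748855126:ℝ) ≤ Real.sqrt ((1.0028:ℝ)^2-1) := Real.le_sqrt_of_sq_le (by norm_num)
  have hU1 : (1.7304312063:ℝ) ≤ Real.sqrt (4-(1.0028:ℝ)^2) := Real.le_sqrt_of_sq_le (by norm_num)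
  have h2U : 2/Real.sqrt (4-(1.0028:ℝ)^2) ≤ (2:ℝ)/1.7304312063 :=
    div_le_div_of_nonneg_left (by norm_num) (by norm_num) hU1
  have h2S : 2*(0.0748855126:ℝ)/1.0028 ≤ 2*Real.sqrt ((1.0028:ℝ)^2-1)/1.0028 := by
    gcongr
  have : (-0.00643:ℝ) ≤ 2*0.0748855126/1.0028 - 2/1.7304312063 + 1 := by norm_num
  linarith

lemma phiB_pos : 0 < phi 1.0034 := by
  rw [phi]
  have hS : (0.0825321755:ℝ) ≤ Real.sqrt ((1.0034:ℝ)^2-1) := Real.le_sqrt_of_sq_le (by norm_num)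
  have hU1 : (1.7300833621:ℝ) ≤ Real.sqrt (4-(1.0034:ℝ)^2) := Real.le_sqrt_of_sq_le (by norm_num)
  have h2U : 2/Real.sqrt (4-(1.0034:ℝ)^2) ≤ (2:ℝ)/1.7300833621 :=
    div_le_div_of_nonneg_left (by norm_num) (by norm_num) hU1
  have h2S : 2*(0.0825321755:ℝ)/1.0034 ≤ 2*Real.sqrt ((1.0034:ℝ)^2-1)/1.0034 := by
    gcongr
  have : (0:ℝ) < 2*0.0825321755/1.0034 - 2/1.7300833621 + 1 := by norm_num
  linarith

lemma phi_pos_mid {x : ℝ} (h1 : 1.35 ≤ x) (h2 : x ≤ 1.8) : 0 < phi x := by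
  have hx0 : (0:ℝ) < x := by linarith
  have hU : 0 < Real.sqrt (4-x^2) := Real.sqrt_pos.mpr (by nlinarith)
  have hS : 0 ≤ Real.sqrt (x^2-1) := Real.sqrt_nonneg _
  have key : 2*x < (2*Real.sqrt (x^2-1)+x) * Real.sqrt (4-x^2) := by
    rcases le_or_gt x 1.6 with hc | hc
    · have hSb : (0.9:ℝ) ≤ Real.sqrt (x^2-1) := Real.le_sqrt_of_sq_le (by nlinarith)
      have hUb : (1.2:ℝ) ≤ Real.sqrt (4-x^2) := Real.le_sqrt_of_sq_le (by nlinarith)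
      have hm := mul_le_mul (by linarith : (1.8:ℝ)+x ≤ 2*Real.sqrt (x^2-1)+x) hUb
        (by norm_num) (by linarith)
      nlinarith [hm]
    · have hSb : (1.24:ℝ) ≤ Real.sqrt (x^2-1) := Real.le_sqrt_of_sq_le (by nlinarith)
      have hUb : (0.87:ℝ) ≤ Real.sqrt (4-x^2) := Real.le_sqrt_of_sq_le (by nlinarith)
      have hm := mul_le_mul (by linarith : (2.48:ℝ)+x ≤ 2*Real.sqrt (x^2-1)+x) hUb
        (by norm_num) (by linarith)
      nlinarith [hm]
  rw [phi]
  have e : 2*Real.sqrt (x^2-1)/x - 2/Real.sqrt (4-x^2) + 1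
      = ((2*Real.sqrt (x^2-1)+x)*Real.sqrt (4-x^2) - 2*x)/(x*Real.sqrt (4-x^2)) := by
    field_simp
    ring
  rw [e]
  exact div_pos (by linarith) (by positivity)

lemma f_contOn : ContinuousOn f (Icc 1 2) := by
  apply ContinuousOn.add
  · exact (by continuity : Continuous fun r : ℝ => Real.sqrt (r^2-1)).continuousOn
  · apply Real.continuous_arcsin.comp_continuousOn
    apply ContinuousOn.div continuousOn_const continuousOn_id
    intro x hx
    have h1 := hx.1
    intro h
    simp only [id_eq] at h
    rw [h] at h1
    norm_num at h1

lemma h_contOn : ContinuousOn (fun x => 2*f x + g x + x) (Icc 1 2) := by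
  apply ContinuousOn.add
  apply ContinuousOn.add
  · exact continuousOn_const.mul f_contOn
  · apply ContinuousOn.congr
      ((continuous_const.sub (continuous_const.mul
        (Real.continuous_arcsin.comp (continuous_id.div_const 2)))).continuousOn :
        ContinuousOn (fun x : ℝ => 2*Real.pi - 2*Real.arcsin (x/2)) (Icc 1 2))
    intro x hx
    exact g_eq hx.2
  · exact continuousOn_id

lemma h_anti : StrictAntiOn (fun x => 2*f x + g x + x) (Icc 1 1.0028) := by
  apply strictAntiOn_of_deriv_neg (convex_Icc _ _)
  · exact h_contOn.mono (Icc_subset_Icc le_rfl (by norm_num))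
  · rw [interior_Icc]
    intro x hx
    rw [(h_hasDeriv hx.1 (by linarith [hx.2] : x < 2)).deriv]
    have hlt : phi x < phi 1.0028 :=
      phi_mono ⟨hx.1.le, by linarith [hx.2]⟩ ⟨by norm_num, by norm_num⟩ hx.2
    linarith [phiA_le]

lemma h_mono : StrictMonoOn (fun x => 2*f x + g x + x) (Icc 1.0034 1.8) := by
  apply strictMonoOn_of_deriv_pos (convex_Icc _ _)
  · exact h_contOn.mono (Icc_subset_Icc (by norm_num) (by norm_num))
  · rw [interior_Icc]
    intro x hx
    rw [(h_hasDeriv (by linarith [hx.1] : (1:ℝ) < x) (by linarith [hx.2] : x < 2)).deriv]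
    rcases le_or_gt x 1.35 with hc | hc
    · have hlt : phi 1.0034 < phi x :=
        phi_mono ⟨by norm_num, by norm_num⟩ ⟨by linarith [hx.1], hc⟩ hx.1
      linarith [phiB_pos]
    · exact phi_pos_mid hc.le (by linarith [hx.2])

lemma ha_lb : (9.3774227:ℝ) ≤ 2*f 1.0028 + g 1.0028 + 1.0028 := by
  have hS_lb : (0.0748855126:ℝ) ≤ Real.sqrt ((1.0028:ℝ)^2-1) := Real.le_sqrt_of_sq_le (by norm_num)
  have hS_ub : Real.sqrt ((1.0028:ℝ)^2-1) ≤ 0.0748855127 := sqrtUB (by norm_num) (by norm_num)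
  have hr3 : Real.sqrt 3 ≤ 1.7320508076 := sqrtUB (by norm_num) (by norm_num)
  have hY : (0.8652156031:ℝ) ≤ Real.sqrt (1-(1.0028/2:ℝ)^2) := Real.le_sqrt_of_sq_le (by norm_num)
  have hT : Real.arcsin (Real.sqrt ((1.0028:ℝ)^2-1)/1.0028) ≤ 0.07474609 := by
    have h1 : Real.sqrt ((1.0028:ℝ)^2-1)/1.0028 ≤ 0.0746765 := by
      rw [div_le_iff₀ (by norm_num)]
      nlinarith [hS_ub]
    calc Real.arcsin (Real.sqrt ((1.0028:ℝ)^2-1)/1.0028) ≤ Real.arcsin 0.0746765 :=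
          Real.monotone_arcsin h1
      _ ≤ 0.0746765 + (0.0746765:ℝ)^3/6 + 3*0.0746765^5/40 + 0.0746765^7/7 :=
          arcsin_le_poly (by norm_num) (by norm_num)
      _ ≤ 0.07474609 := by norm_num
  have hD : Real.arcsin (1.0028/2*(Real.sqrt 3/2) - Real.sqrt (1-(1.0028/2:ℝ)^2)/2)
      ≤ 0.00161737 := by
    have h1 : 1.0028/2*(Real.sqrt 3/2) - Real.sqrt (1-(1.0028/2:ℝ)^2)/2 ≤ 0.00161736 := by
      nlinarith [hr3, hY]
    calc Real.arcsin (1.0028/2*(Real.sqrt 3/2) - Real.sqrt (1-(1.0028/2:ℝ)^2)/2)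
        ≤ Real.arcsin 0.00161736 := Real.monotone_arcsin h1
      _ ≤ 0.00161736 + (0.00161736:ℝ)^3/6 + 3*0.00161736^5/40 + 0.00161736^7/7 :=
          arcsin_le_poly (by norm_num) (by norm_num)
      _ ≤ 0.00161737 := by norm_num
  have hpi := Real.pi_gt_d6
  have he : 2*f 1.0028 + g 1.0028 + 1.0028 = 2*Real.sqrt ((1.0028:ℝ)^2-1) + 8*Real.pi/3
      - 2*Real.arcsin (Real.sqrt ((1.0028:ℝ)^2-1)/1.0028)
      - 2*Real.arcsin (1.0028/2*(Real.sqrt 3/2) - Real.sqrt (1-(1.0028/2:ℝ)^2)/2)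
      + 1.0028 := by
    rw [f_eq (by norm_num), g_eq (by norm_num),
      arcsin_shift (x := (1.0028:ℝ)/2) (by norm_num) (by norm_num)]
    ring
  rw [he]
  linarith

lemma hb_lb : (9.3774234:ℝ) ≤ 2*f 1.0034 + g 1.0034 + 1.0034 := by
  have hS_lb : (0.0825321755:ℝ) ≤ Real.sqrt ((1.0034:ℝ)^2-1) := Real.le_sqrt_of_sq_le (by norm_num)
  have hS_ub : Real.sqrt ((1.0034:ℝ)^2-1) ≤ 0.0825321756 := sqrtUB (by norm_num) (by norm_num)
  have hr3 : Real.sqrt 3 ≤ 1.7320508076 := sqrtUB (by norm_num) (by norm_num)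
  have hY : (0.8650416810:ℝ) ≤ Real.sqrt (1-(1.0034/2:ℝ)^2) := Real.le_sqrt_of_sq_le (by norm_num)
  have hT : Real.arcsin (Real.sqrt ((1.0034:ℝ)^2-1)/1.0034) ≤ 0.08234564 := by
    have h1 : Real.sqrt ((1.0034:ℝ)^2-1)/1.0034 ≤ 0.0822526 := by
      rw [div_le_iff₀ (by norm_num)]
      nlinarith [hS_ub]
    calc Real.arcsin (Real.sqrt ((1.0034:ℝ)^2-1)/1.0034) ≤ Real.arcsin 0.0822526 :=
          Real.monotone_arcsin h1
      _ ≤ 0.0822526 + (0.0822526:ℝ)^3/6 + 3*0.0822526^5/40 + 0.0822526^7/7 :=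
          arcsin_le_poly (by norm_num) (by norm_num)
      _ ≤ 0.08234564 := by norm_num
  have hD : Real.arcsin (1.0034/2*(Real.sqrt 3/2) - Real.sqrt (1-(1.0034/2:ℝ)^2)/2)
      ≤ 0.00196412 := by
    have h1 : 1.0034/2*(Real.sqrt 3/2) - Real.sqrt (1-(1.0034/2:ℝ)^2)/2 ≤ 0.00196411 := by
      nlinarith [hr3, hY]
    calc Real.arcsin (1.0034/2*(Real.sqrt 3/2) - Real.sqrt (1-(1.0034/2:ℝ)^2)/2)
        ≤ Real.arcsin 0.00196411 := Real.monotone_arcsin h1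
      _ ≤ 0.00196411 + (0.00196411:ℝ)^3/6 + 3*0.00196411^5/40 + 0.00196411^7/7 :=
          arcsin_le_poly (by norm_num) (by norm_num)
      _ ≤ 0.00196412 := by norm_num
  have hpi := Real.pi_gt_d6
  have he : 2*f 1.0034 + g 1.0034 + 1.0034 = 2*Real.sqrt ((1.0034:ℝ)^2-1) + 8*Real.pi/3
      - 2*Real.arcsin (Real.sqrt ((1.0034:ℝ)^2-1)/1.0034)
      - 2*Real.arcsin (1.0034/2*(Real.sqrt 3/2) - Real.sqrt (1-(1.0034/2:ℝ)^2)/2)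
      + 1.0034 := by
    rw [f_eq (by norm_num), g_eq (by norm_num),
      arcsin_shift (x := (1.0034:ℝ)/2) (by norm_num) (by norm_num)]
    ring
  rw [he]
  linarith

lemma hb_ub : 2*f 1.0034 + g 1.0034 + 1.0034 ≤ 9.3775 := by
  have hS_lb : (0.0825321755:ℝ) ≤ Real.sqrt ((1.0034:ℝ)^2-1) := Real.le_sqrt_of_sq_le (by norm_num)
  have hS_ub : Real.sqrt ((1.0034:ℝ)^2-1) ≤ 0.0825321756 := sqrtUB (by norm_num) (by norm_num)
  have hr3 : (1.7320508075:ℝ) ≤ Real.sqrt 3 := Real.le_sqrt_of_sq_le (by norm_num)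
  have hY : Real.sqrt (1-(1.0034/2:ℝ)^2) ≤ 0.8650416811 := sqrtUB (by norm_num) (by norm_num)
  have hT : (0.08234540:ℝ) ≤ Real.arcsin (Real.sqrt ((1.0034:ℝ)^2-1)/1.0034) := by
    have h1 : (0.0822525:ℝ) ≤ Real.sqrt ((1.0034:ℝ)^2-1)/1.0034 := by
      rw [le_div_iff₀ (by norm_num)]
      nlinarith [hS_lb]
    calc (0.08234540:ℝ) ≤ 0.0822525 + (0.0822525:ℝ)^3/6 + 3*0.0822525^5/40 := by norm_num
      _ ≤ Real.arcsin 0.0822525 := arcsin_ge_poly (by norm_num) (by norm_num)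
      _ ≤ Real.arcsin (Real.sqrt ((1.0034:ℝ)^2-1)/1.0034) := Real.monotone_arcsin h1
  have hD : (0.00196410:ℝ) ≤ Real.arcsin (1.0034/2*(Real.sqrt 3/2)
      - Real.sqrt (1-(1.0034/2:ℝ)^2)/2) := by
    have h1 : (0.00196410:ℝ) ≤ 1.0034/2*(Real.sqrt 3/2) - Real.sqrt (1-(1.0034/2:ℝ)^2)/2 := by
      nlinarith [hr3, hY]
    calc (0.00196410:ℝ) ≤ 0.00196410 + (0.00196410:ℝ)^3/6 + 3*0.00196410^5/40 := by norm_num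
      _ ≤ Real.arcsin 0.00196410 := arcsin_ge_poly (by norm_num) (by norm_num)
      _ ≤ Real.arcsin (1.0034/2*(Real.sqrt 3/2) - Real.sqrt (1-(1.0034/2:ℝ)^2)/2) :=
          Real.monotone_arcsin h1
  have hpi := Real.pi_lt_d6
  have he : 2*f 1.0034 + g 1.0034 + 1.0034 = 2*Real.sqrt ((1.0034:ℝ)^2-1) + 8*Real.pi/3
      - 2*Real.arcsin (Real.sqrt ((1.0034:ℝ)^2-1)/1.0034)
      - 2*Real.arcsin (1.0034/2*(Real.sqrt 3/2) - Real.sqrt (1-(1.0034/2:ℝ)^2)/2)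
      + 1.0034 := by
    rw [f_eq (by norm_num), g_eq (by norm_num),
      arcsin_shift (x := (1.0034:ℝ)/2) (by norm_num) (by norm_num)]
    ring
  rw [he]
  linarith

lemma h_tangent : ∀ r ∈ Icc (1.0028:ℝ) 1.0034, (9.37741:ℝ) ≤ 2*f r + g r + r := by
  have hmono : MonotoneOn (fun x => 2*f x + g x + x - phi 1.0028 * x) (Icc 1.0028 1.0034) := by
    apply monotoneOn_of_deriv_nonneg (convex_Icc _ _)
    · apply ContinuousOn.sub
      · exact h_contOn.mono (Icc_subset_Icc (by norm_num) (by norm_num))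
      · exact (continuous_const.mul continuous_id).continuousOn
    · rw [interior_Icc]
      intro x hx
      have hd : HasDerivAt (fun x : ℝ => 2*f x + g x + x - phi 1.0028 * x)
          (phi x - phi 1.0028 * 1) x :=
        (h_hasDeriv (by linarith [hx.1] : (1:ℝ) < x) (by linarith [hx.2] : x < 2)).sub
          ((hasDerivAt_id x).const_mul (phi 1.0028))
      exact hd.differentiableAt.differentiableWithinAt
    · rw [interior_Icc]
      intro x hx
      have hd : HasDerivAt (fun x : ℝ => 2*f x + g x + x - phi 1.0028 * x)
          (phi x - phi 1.0028 * 1) x :=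
        (h_hasDeriv (by linarith [hx.1] : (1:ℝ) < x) (by linarith [hx.2] : x < 2)).sub
          ((hasDerivAt_id x).const_mul (phi 1.0028))
      rw [hd.deriv]
      have hle : phi 1.0028 ≤ phi x := phi_mono.monotoneOn ⟨by norm_num, by norm_num⟩
        ⟨by linarith [hx.1], by linarith [hx.2]⟩ (le_of_lt hx.1)
      linarith
  intro r hr
  have hkey : 2*f 1.0028 + g 1.0028 + 1.0028 - phi 1.0028 * 1.0028
      ≤ 2*f r + g r + r - phi 1.0028 * r :=
    hmono ⟨le_refl _, by norm_num⟩ hr hr.1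
  have h1 := phiA_ge
  have h2 := phiA_le
  have h3 := ha_lb
  nlinarith [mul_nonneg (by linarith : (0:ℝ) ≤ phi 1.0028 + 0.00643)
    (by linarith [hr.1] : (0:ℝ) ≤ r - 1.0028), hr.2]

lemma cell1 {r : ℝ} (hr : r ∈ Icc (1.8:ℝ) 1.88) : (9.3775:ℝ) ≤ 2*f r + g r + r := by
  obtain ⟨hp, hq⟩ := hr
  have hr0 : (0:ℝ) < r := by linarith
  rw [f, g_eq (by linarith)]
  have hS : (1.4966629547:ℝ) ≤ Real.sqrt (r^2-1) := Real.le_sqrt_of_sq_le (by nlinarith)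
  have hA1 : (0.56019:ℝ) ≤ Real.arcsin (1/r) := by
    have h1 : (1/1.88:ℝ) ≤ 1/r := by
      rw [div_le_div_iff₀ (by norm_num) hr0]
      linarith
    have h2 := arcsin_ge_poly (x := (1/1.88:ℝ)) (by norm_num) (by norm_num)
    have h3 := Real.monotone_arcsin h1
    have h4 : (0.56019:ℝ) ≤ (1/1.88:ℝ) + (1/1.88)^3/6 + 3*(1/1.88)^5/40 := by norm_num
    linarith
  have hA2 : Real.arcsin (r/2) ≤ 3.141593/2 - 0.34813 := by
    have h1 : Real.arcsin (r/2) ≤ Real.arcsin ((1.88:ℝ)/2) := Real.monotone_arcsin (by linarith)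
    rw [arcsin_comp (by norm_num : (0:ℝ) ≤ (1.88:ℝ)/2)] at h1
    have hY : (0.3411744421:ℝ) ≤ Real.sqrt (1-((1.88:ℝ)/2)^2) := Real.le_sqrt_of_sq_le (by norm_num)
    have h2 := arcsin_ge_poly (x := (0.3411744421:ℝ)) (by norm_num) (by norm_num)
    have h3 := Real.monotone_arcsin hY
    have hpi := Real.pi_lt_d6
    have h4 : (0.34813:ℝ) ≤ (0.3411744421:ℝ) + 0.3411744421^3/6 + 3*0.3411744421^5/40 := by
      norm_num
    linarith
  have hpi := Real.pi_gt_d6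
  linarith

lemma cell2 {r : ℝ} (hr : r ∈ Icc (1.88:ℝ) 1.94) : (9.3775:ℝ) ≤ 2*f r + g r + r := by
  obtain ⟨hp, hq⟩ := hr
  have hr0 : (0:ℝ) < r := by linarith
  rw [f, g_eq (by linarith)]
  have hS : (1.5919798993:ℝ) ≤ Real.sqrt (r^2-1) := Real.le_sqrt_of_sq_le (by nlinarith)
  have hA1 : (0.54101:ℝ) ≤ Real.arcsin (1/r) := by
    have h1 : (1/1.94:ℝ) ≤ 1/r := by
      rw [div_le_div_iff₀ (by norm_num) hr0]
      linarith
    have h2 := arcsin_ge_poly (x := (1/1.94:ℝ)) (by norm_num) (by norm_num)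
    have h3 := Real.monotone_arcsin h1
    have h4 : (0.54101:ℝ) ≤ (1/1.94:ℝ) + (1/1.94)^3/6 + 3*(1/1.94)^5/40 := by norm_num
    linarith
  have hA2 : Real.arcsin (r/2) ≤ 3.141593/2 - 0.24556 := by
    have h1 : Real.arcsin (r/2) ≤ Real.arcsin ((1.94:ℝ)/2) := Real.monotone_arcsin (by linarith)
    rw [arcsin_comp (by norm_num : (0:ℝ) ≤ (1.94:ℝ)/2)] at h1
    have hY : (0.2431049156:ℝ) ≤ Real.sqrt (1-((1.94:ℝ)/2)^2) := Real.le_sqrt_of_sq_le (by norm_num)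
    have h2 := arcsin_ge_poly (x := (0.2431049156:ℝ)) (by norm_num) (by norm_num)
    have h3 := Real.monotone_arcsin hY
    have hpi := Real.pi_lt_d6
    have h4 : (0.24556:ℝ) ≤ (0.2431049156:ℝ) + 0.2431049156^3/6 + 3*0.2431049156^5/40 := by
      norm_num
    linarith
  have hpi := Real.pi_gt_d6
  linarith

lemma cell3 {r : ℝ} (hr : r ∈ Icc (1.94:ℝ) 2) : (9.3775:ℝ) ≤ 2*f r + g r + r := by
  obtain ⟨hp, hq⟩ := hr
  have hr0 : (0:ℝ) < r := by linarith
  rw [f, g_eq (by linarith)]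
  have hS : (1.6624078921:ℝ) ≤ Real.sqrt (r^2-1) := Real.le_sqrt_of_sq_le (by nlinarith)
  have hA1 : (0.52317:ℝ) ≤ Real.arcsin (1/r) := by
    have h1 : (1/2:ℝ) ≤ 1/r := by
      rw [div_le_div_iff₀ (by norm_num) hr0]
      linarith
    have h2 := arcsin_ge_poly (x := (1/2:ℝ)) (by norm_num) (by norm_num)
    have h3 := Real.monotone_arcsin h1
    have h4 : (0.52317:ℝ) ≤ (1/2:ℝ) + (1/2)^3/6 + 3*(1/2)^5/40 := by norm_num
    linarith
  have hA2 : Real.arcsin (r/2) ≤ 3.141593/2 := by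
    have := Real.arcsin_le_pi_div_two (r/2)
    have hpi := Real.pi_lt_d6
    linarith
  have hpi := Real.pi_gt_d6
  linarith

lemma h_tail {r : ℝ} (hr : 2 ≤ r) : (9.3775:ℝ) ≤ 2*f r + g r + r := by
  have hr0 : (0:ℝ) < r := by linarith
  rw [f, g_ge2 hr]
  have hS : (1.7320508075:ℝ) ≤ Real.sqrt (r^2-1) := Real.le_sqrt_of_sq_le (by nlinarith)
  have hA : 1/r ≤ Real.arcsin (1/r) := by
    have h1 := arcsin_ge_poly (x := 1/r) (by positivity) (by rw [div_lt_one hr0]; linarith)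
    nlinarith [pow_pos (by positivity : (0:ℝ) < 1/r) 3, pow_pos (by positivity : (0:ℝ) < 1/r) 5]
  have h3 : (3:ℝ) ≤ 2*(1/r) + r := by
    have e : 2*(1/r) + r - 3 = ((r-1)*(r-2))/r := by
      field_simp
      ring
    have : (0:ℝ) ≤ ((r-1)*(r-2))/r :=
      div_nonneg (mul_nonneg (by linarith) (by linarith)) hr0.le
    linarith
  have hpi := Real.pi_gt_d6
  linarith

/-- The infimum of `2f(r) + g(r) + r` over `r ∈ [1,∞)` is attained at some
`r ∈ (1, 1.01)`, and the minimum value exceeds `9.3774`. -/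
theorem stmt6 :
    (∃ r ∈ Set.Ioo (1:ℝ) 1.01,
        IsMinOn (fun x => 2 * f x + g x + x) (Set.Ici 1) r) ∧
      ∀ r ∈ Set.Ici (1:ℝ), (9.3774 : ℝ) < 2 * f r + g r + r := by
  constructor
  · obtain ⟨r₀, hr₀, hmin⟩ := (isCompact_Icc : IsCompact (Icc (1:ℝ) 1.01)).exists_isMinOn
      ⟨1, by norm_num⟩ (h_contOn.mono (Icc_subset_Icc le_rfl (by norm_num)))
    have hm : ∀ x ∈ Icc (1:ℝ) 1.01, 2*f r₀ + g r₀ + r₀ ≤ 2*f x + g x + x := isMinOn_iff.mp hmin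
    have hra : 2*f r₀ + g r₀ + r₀ ≤ 2*f 1.0028 + g 1.0028 + 1.0028 :=
      hm 1.0028 ⟨by norm_num, by norm_num⟩
    have hrb : 2*f r₀ + g r₀ + r₀ ≤ 2*f 1.0034 + g 1.0034 + 1.0034 :=
      hm 1.0034 ⟨by norm_num, by norm_num⟩
    have hr01 : 1 < r₀ := by
      rcases eq_or_lt_of_le hr₀.1 with he | h
      · exfalso
        have hlt : 2*f 1.0028 + g 1.0028 + 1.0028 < 2*f 1 + g 1 + 1 :=
          h_anti ⟨le_refl 1, by norm_num⟩ ⟨by norm_num, le_refl _⟩ (by norm_num)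
        rw [← he] at hra
        linarith
      · exact h
    have hr02 : r₀ < 1.01 := by
      rcases eq_or_lt_of_le hr₀.2 with he | h
      · exfalso
        have hlt : 2*f 1.0034 + g 1.0034 + 1.0034 < 2*f 1.01 + g 1.01 + 1.01 :=
          h_mono ⟨le_refl _, by norm_num⟩ ⟨by norm_num, by norm_num⟩ (by norm_num)
        rw [he] at hrb
        linarith
      · exact h
    refine ⟨r₀, ⟨hr01, hr02⟩, ?_⟩
    rw [isMinOn_iff]
    intro x hx
    show 2*f r₀ + g r₀ + r₀ ≤ 2*f x + g x + x
    rw [mem_Ici] at hx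
    rcases le_or_gt x 1.01 with h1 | h1
    · exact hm x ⟨hx, h1⟩
    rcases le_or_gt x 1.8 with h2 | h2
    · have hmx : 2*f 1.0034 + g 1.0034 + 1.0034 ≤ 2*f x + g x + x :=
        h_mono.monotoneOn ⟨le_refl _, by norm_num⟩ ⟨by linarith, h2⟩ (by linarith)
      linarith
    have hub := hb_ub
    rcases le_or_gt x 1.88 with h3 | h3
    · linarith [cell1 ⟨by linarith, h3⟩]
    rcases le_or_gt x 1.94 with h4 | h4
    · linarith [cell2 ⟨by linarith, h4⟩]
    rcases le_or_gt x 2 with h5 | h5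
    · linarith [cell3 ⟨by linarith, h5⟩]
    · linarith [h_tail (by linarith : (2:ℝ) ≤ x)]
  · intro r hr
    rw [mem_Ici] at hr
    rcases le_or_gt r 1.0028 with h1 | h1
    · have hle : 2*f 1.0028 + g 1.0028 + 1.0028 ≤ 2*f r + g r + r :=
        h_anti.antitoneOn ⟨hr, h1⟩ ⟨by norm_num, le_refl _⟩ h1
      linarith [ha_lb]
    rcases le_or_gt r 1.0034 with h2 | h2
    · have := h_tangent r ⟨h1.le, h2⟩
      linarith
    rcases le_or_gt r 1.8 with h3 | h3
    · have hle : 2*f 1.0034 + g 1.0034 + 1.0034 ≤ 2*f r + g r + r :=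
        h_mono.monotoneOn ⟨le_refl _, by norm_num⟩ ⟨h2.le, h3⟩ h2.le
      linarith [hb_lb]
    rcases le_or_gt r 1.88 with h4 | h4
    · linarith [cell1 ⟨by linarith, h4⟩]
    rcases le_or_gt r 1.94 with h5 | h5
    · linarith [cell2 ⟨by linarith, h5⟩]
    rcases le_or_gt r 2 with h6 | h6
    · linarith [cell3 ⟨by linarith, h6⟩]
    · linarith [h_tail (by linarith : (2:ℝ) ≤ r)]
end

section
/- Let K be a closed C^{1,1} curve in R^3 of thickness at least 1 (thickness defined as twice the infimal circumradius over all triples of distinct points of K). Then for any point a on K, the radial projection of K ∖ {a} to the unit sphere centered at a, x ↦ a + (x-a)/|x-a|, is 1-Lipschitz with respect to arclength on K, i.e., it does not increase the length of any subarc of K avoiding a. -/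
open Real Set

open InnerProductGeometry RealInnerProductSpace

lemma chord_sq_eq (u v : E3) (hu : ‖u‖ = 1) (hv : ‖v‖ = 1) :
    ‖u - v‖ ^ 2 = 2 - 2 * Real.cos (angle u v) := by
  have h := cos_angle_mul_norm_mul_norm u v
  rw [hu, hv] at h
  rw [norm_sub_sq_real, hu, hv]
  nlinarith [h]

lemma angle_triangle_unit (u v w : E3) (hu : ‖u‖ = 1) (hv : ‖v‖ = 1) (hw : ‖w‖ = 1) :
    angle u w ≤ angle u v + angle v w := by
  by_cases hab : angle u v + angle v w ≤ π
  swap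
  · exact (angle_le_pi u w).trans (not_le.1 hab).le
  set a := angle u v with ha
  set b := angle v w with hb
  have hca : Real.cos a = ⟪u, v⟫ := by rw [ha, cos_angle, hu, hv]; simp
  have hcb : Real.cos b = ⟪v, w⟫ := by rw [hb, cos_angle, hv, hw]; simp
  have hcw : Real.cos (angle u w) = ⟪u, w⟫ := by rw [cos_angle, hu, hw]; simp
  set p := u - ⟪u, v⟫ • v with hp
  set q := w - ⟪v, w⟫ • v with hq
  have hv2 : ⟪v, v⟫ = (1:ℝ) := by
    rw [real_inner_self_eq_norm_sq, hv]; norm_num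
  have hnp : ‖p‖ = Real.sin a := by
    have h1 : ‖p‖ ^ 2 = 1 - ⟪u, v⟫ ^ 2 := by
      rw [hp, norm_sub_sq_real, hu, real_inner_smul_right, norm_smul, hv,
        Real.norm_eq_abs, mul_one, sq_abs]
      ring
    have h2 : Real.sin a ^ 2 = 1 - ⟪u, v⟫ ^ 2 := by
      rw [Real.sin_sq, hca]
    have hs : 0 ≤ Real.sin a := Real.sin_nonneg_of_nonneg_of_le_pi (angle_nonneg _ _) (angle_le_pi _ _)
    rw [← Real.sqrt_sq (norm_nonneg p), h1, ← h2, Real.sqrt_sq hs]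
  have hnq : ‖q‖ = Real.sin b := by
    have h1 : ‖q‖ ^ 2 = 1 - ⟪v, w⟫ ^ 2 := by
      rw [hq, norm_sub_sq_real, hw, real_inner_smul_right, norm_smul, hv,
        Real.norm_eq_abs, mul_one, sq_abs, real_inner_comm w v]
      ring
    have h2 : Real.sin b ^ 2 = 1 - ⟪v, w⟫ ^ 2 := by
      rw [Real.sin_sq, hcb]
    have hs : 0 ≤ Real.sin b := Real.sin_nonneg_of_nonneg_of_le_pi (angle_nonneg _ _) (angle_le_pi _ _)
    rw [← Real.sqrt_sq (norm_nonneg q), h1, ← h2, Real.sqrt_sq hs]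
  have hpq : ⟪p, q⟫ = ⟪u, w⟫ - ⟪u, v⟫ * ⟪v, w⟫ := by
    rw [hp, hq, inner_sub_left, inner_sub_right, inner_sub_right,
      real_inner_smul_left, real_inner_smul_left, real_inner_smul_right, real_inner_smul_right,
      hv2]
    ring
  have hCS : -(‖p‖ * ‖q‖) ≤ ⟪p, q⟫ := by
    have := abs_real_inner_le_norm p q
    have := neg_abs_le (⟪p, q⟫ : ℝ)
    linarith
  have hkey : Real.cos (a + b) ≤ ⟪u, w⟫ := by
    rw [Real.cos_add, hca, hcb]
    rw [hnp, hnq, hpq] at hCS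
    linarith
  by_contra hcon
  push_neg at hcon
  have h1 : Real.cos (angle u w) < Real.cos (a + b) :=
    Real.strictAntiOn_cos ⟨add_nonneg (angle_nonneg _ _) (angle_nonneg _ _), hab⟩
      ⟨angle_nonneg _ _, angle_le_pi _ _⟩ hcon
  rw [hcw] at h1
  linarith

lemma proj_lip {d : ℝ} (hd : 0 < d) {u v : E3} (hu : d ≤ ‖u‖) (hv : d ≤ ‖v‖) :
    d * ‖‖u‖⁻¹ • u - ‖v‖⁻¹ • v‖ ≤ ‖u - v‖ := by
  have hA : 0 < ‖u‖ := hd.trans_le hu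
  have hB : 0 < ‖v‖ := hd.trans_le hv
  have hC : ⟪u, v⟫ ≤ ‖u‖ * ‖v‖ := real_inner_le_norm u v
  have h1 : ‖‖u‖⁻¹ • u - ‖v‖⁻¹ • v‖ ^ 2 = 2 - 2 * (⟪u, v⟫ / (‖u‖ * ‖v‖)) := by
    rw [norm_sub_sq_real, real_inner_smul_left, real_inner_smul_right, norm_smul, norm_smul,
      Real.norm_eq_abs, Real.norm_eq_abs, abs_of_pos (inv_pos.2 hA), abs_of_pos (inv_pos.2 hB)]
    field_simp
    ring
  have h2 : ‖u - v‖ ^ 2 = ‖u‖ ^ 2 - 2 * ⟪u, v⟫ + ‖v‖ ^ 2 := norm_sub_sq_real u v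
  have hD : d ^ 2 ≤ ‖u‖ * ‖v‖ := by nlinarith
  have key : (d * ‖‖u‖⁻¹ • u - ‖v‖⁻¹ • v‖) ^ 2 ≤ ‖u - v‖ ^ 2 := by
    rw [mul_pow, h1, h2]
    have h3 : 2 - 2 * (⟪u, v⟫ / (‖u‖ * ‖v‖)) = (2 * (‖u‖ * ‖v‖) - 2 * ⟪u, v⟫) / (‖u‖ * ‖v‖) := by
      field_simp
    rw [h3, ← mul_div_assoc, div_le_iff₀ (mul_pos hA hB)]
    nlinarith [mul_nonneg (mul_nonneg hA.le hB.le) (sq_nonneg (‖u‖ - ‖v‖)),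
      mul_nonneg (sub_nonneg.2 hC) (sub_nonneg.2 hD)]
  calc d * ‖‖u‖⁻¹ • u - ‖v‖⁻¹ • v‖ = √((d * ‖‖u‖⁻¹ • u - ‖v‖⁻¹ • v‖) ^ 2) :=
        (Real.sqrt_sq (by positivity)).symm
    _ ≤ √(‖u - v‖ ^ 2) := Real.sqrt_le_sqrt key
    _ = ‖u - v‖ := Real.sqrt_sq (norm_nonneg _)

lemma chord_le_angle (u v : E3) (hu : ‖u‖ = 1) (hv : ‖v‖ = 1) : ‖u - v‖ ≤ angle u v := by
  have h := chord_sq_eq u v hu hv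
  have h2 : ‖u - v‖ ^ 2 ≤ (angle u v) ^ 2 := by
    rw [h]; nlinarith [Real.one_sub_sq_div_two_le_cos (x := angle u v)]
  calc ‖u - v‖ = √(‖u - v‖ ^ 2) := (Real.sqrt_sq (norm_nonneg _)).symm
    _ ≤ √((angle u v) ^ 2) := Real.sqrt_le_sqrt h2
    _ = angle u v := Real.sqrt_sq (angle_nonneg _ _)

lemma angle_chain (w : ℕ → E3) (hw : ∀ i, ‖w i‖ = 1) (n : ℕ) :
    angle (w n) (w 0) ≤ ∑ i ∈ Finset.range n, angle (w (i + 1)) (w i) := by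
  induction n with
  | zero =>
    have : w 0 ≠ 0 := by intro h; have := hw 0; rw [h] at this; simp at this
    simp [angle_self this]
  | succ n ih =>
    rw [Finset.sum_range_succ]
    have h3 := angle_triangle_unit (w (n + 1)) (w n) (w 0) (hw _) (hw _) (hw _)
    linarith
set_option maxHeartbeats 1000000 in
lemma thick_sin {K : Set E3} (hthick : ThickOne K) {a x y : E3}
    (haK : a ∈ K) (hx : x ∈ K) (hy : y ∈ K) (hxa : x ≠ a) (hya : y ≠ a) :
    Real.sin (angle (x - a) (y - a)) ≤ dist x y := by
  set u := x - a with hu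
  set v := y - a with hv
  have hu0 : u ≠ 0 := sub_ne_zero.2 hxa
  have hv0 : v ≠ 0 := sub_ne_zero.2 hya
  set A := (⟪u, u⟫ : ℝ) with hA
  set B := (⟪v, v⟫ : ℝ) with hB
  set C := (⟪u, v⟫ : ℝ) with hC
  set D := A * B - C * C with hD
  have hAn : A = ‖u‖ ^ 2 := real_inner_self_eq_norm_sq u
  have hBn : B = ‖v‖ ^ 2 := real_inner_self_eq_norm_sq v
  have hApos : 0 < A := by rw [hAn]; exact pow_pos (norm_pos_iff.2 hu0) 2
  have hBpos : 0 < B := by rw [hBn]; exact pow_pos (norm_pos_iff.2 hv0) 2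
  have hab : 0 < ‖u‖ * ‖v‖ := mul_pos (norm_pos_iff.2 hu0) (norm_pos_iff.2 hv0)
  have hsin := sin_angle_mul_norm_mul_norm u v
  have hD0 : 0 ≤ D := by
    have := real_inner_mul_inner_self_le u v
    rw [hD]; linarith
  have hdxy : dist x y = ‖u - v‖ := by
    rw [dist_eq_norm, hu, hv]; congr 1; abel
  rcases eq_or_lt_of_le hD0 with hDz | hDpos
  · have h0 : Real.sin (angle u v) * (‖u‖ * ‖v‖) = 0 := by
      rw [hsin, ← hD, ← hDz, Real.sqrt_zero]
    have : Real.sin (angle u v) = 0 := by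
      rcases mul_eq_zero.1 h0 with h | h
      · exact h
      · exact absurd h hab.ne'
    rw [this]
    exact dist_nonneg
  · -- nondegenerate triangle: construct the circumcenter
    have hxy : x ≠ y := by
      rintro rfl
      have hBA : B = A := rfl
      have hCA : C = A := rfl
      rw [hD, hBA, hCA] at hDpos
      simp at hDpos
    set β := B * (A - C) / (2 * D) with hβ
    set δ := A * (B - C) / (2 * D) with hδ
    set w := β • u + δ • v with hw
    have hvu : (⟪v, u⟫ : ℝ) = C := by rw [real_inner_comm]
    have hD2 : D ≠ 0 := hDpos.ne'
    have hwu : ⟪u, w⟫ = A / 2 := by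
      simp only [hw, inner_add_right, real_inner_smul_right]
      rw [← hA, ← hC, hβ, hδ]
      field_simp [hD2]
      ring
    have hwv : ⟪v, w⟫ = B / 2 := by
      simp only [hw, inner_add_right, real_inner_smul_right]
      rw [hvu, ← hB, hβ, hδ]
      field_simp [hD2]
      ring
    have hw2 : ‖w‖ ^ 2 = β ^ 2 * A + 2 * β * δ * C + δ ^ 2 * B := by
      rw [← real_inner_self_eq_norm_sq]
      simp only [hw, inner_add_left, inner_add_right, real_inner_smul_left,
        real_inner_smul_right]
      rw [hvu, ← hA, ← hB, ← hC]
      ring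
    have hxc : dist x (a + w) = ‖w‖ := by
      have hx' : x = a + u := by rw [hu]; abel
      rw [hx', dist_add_left, dist_eq_norm]
      have h1 : ‖u - w‖ ^ 2 = ‖w‖ ^ 2 := by
        rw [norm_sub_sq_real, hwu, ← hAn]
        ring
      rw [← Real.sqrt_sq (norm_nonneg (u - w)), h1, Real.sqrt_sq (norm_nonneg w)]
    have hyc : dist y (a + w) = ‖w‖ := by
      have hy' : y = a + v := by rw [hv]; abel
      rw [hy', dist_add_left, dist_eq_norm]
      have h1 : ‖v - w‖ ^ 2 = ‖w‖ ^ 2 := by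
        rw [norm_sub_sq_real, hwv, ← hBn]
        ring
      rw [← Real.sqrt_sq (norm_nonneg (v - w)), h1, Real.sqrt_sq (norm_nonneg w)]
    have hac : dist a (a + w) = ‖w‖ := by
      simp [dist_eq_norm]
    have hρ : 1 / 2 ≤ ‖w‖ :=
      hthick x hx y hy a haK hxy hya hxa (a + w) ‖w‖ hxc hyc hac
    -- ρ² · 4D = A·B·(A+B-2C)
    have hform : ‖w‖ ^ 2 * (4 * D) = A * B * (A + B - 2 * C) := by
      rw [hw2, hβ, hδ]
      field_simp [hD2]
      ring
    have huv2 : ‖u - v‖ ^ 2 = A + B - 2 * C := by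
      rw [norm_sub_sq_real, ← hAn, ← hBn, ← hC]; ring
    have hkey : D ≤ A * B * ‖u - v‖ ^ 2 := by
      have h14 : (1:ℝ)/4 ≤ ‖w‖ ^ 2 := by nlinarith
      have hmid : D ≤ ‖w‖ ^ 2 * (4 * D) := by nlinarith [mul_nonneg hDpos.le (by linarith : (0:ℝ) ≤ 4 * ‖w‖ ^ 2 - 1)]
      rw [hform] at hmid
      rw [huv2]
      linarith
    have hsqrtD : Real.sqrt D ≤ ‖u‖ * ‖v‖ * ‖u - v‖ := by
      have hABn : A * B * ‖u - v‖ ^ 2 = (‖u‖ * ‖v‖ * ‖u - v‖) ^ 2 := by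
        rw [hAn, hBn]; ring
      calc Real.sqrt D ≤ Real.sqrt (A * B * ‖u - v‖ ^ 2) := Real.sqrt_le_sqrt hkey
        _ = ‖u‖ * ‖v‖ * ‖u - v‖ := by rw [hABn, Real.sqrt_sq (by positivity)]
    have hfin : Real.sin (angle u v) * (‖u‖ * ‖v‖) ≤ (‖u‖ * ‖v‖) * ‖u - v‖ := by
      rw [hsin, ← hA, ← hB, ← hC, ← hD]
      linarith
    rw [hdxy]
    have := le_of_mul_le_mul_right (by linarith : Real.sin (angle u v) * (‖u‖ * ‖v‖) ≤ ‖u - v‖ * (‖u‖ * ‖v‖)) hab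
    exact this
set_option maxHeartbeats 1000000 in
lemma key_lemma (γ : ℝ → E3) (hcont : Continuous γ) (hthick : ThickOne (Set.range γ))
    (a : E3) (ha : a ∈ Set.range γ) (s t : ℝ) (havoid : a ∉ γ '' Set.Icc s t)
    (p q : ℝ) (hp : p ∈ Set.Icc s t) (hq : q ∈ Set.Icc s t) (hpq : p ≤ q) :
    edist (a + (dist (γ q) a)⁻¹ • (γ q - a)) (a + (dist (γ p) a)⁻¹ • (γ p - a))
      ≤ eVariationOn γ (Set.Icc p q) := by
  classical
  have hIcc : Set.Icc p q ⊆ Set.Icc s t := Set.Icc_subset_Icc hp.1 hq.2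
  have hne : ∀ u ∈ Set.Icc s t, γ u ≠ a := fun u hu h => havoid ⟨u, hu, h⟩
  have hst : s ≤ t := hp.1.trans hp.2
  -- positive distance to a
  set K : Set E3 := γ '' Set.Icc s t with hK
  have hKc : IsCompact K := (isCompact_Icc).image hcont
  have hKne : K.Nonempty := ⟨γ s, ⟨s, ⟨le_refl s, hst⟩, rfl⟩⟩
  set d0 := Metric.infDist a K with hd0def
  have hd0 : 0 < d0 := (hKc.isClosed.notMem_iff_infDist_pos hKne).1 havoid
  have hd0le : ∀ u ∈ Set.Icc s t, d0 ≤ ‖γ u - a‖ := by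
    intro u hu
    have : d0 ≤ dist a (γ u) := Metric.infDist_le_dist_of_mem ⟨u, hu, rfl⟩
    rwa [dist_comm, dist_eq_norm] at this
  -- the normalized secant map
  set ν : ℝ → E3 := fun u => ‖γ u - a‖⁻¹ • (γ u - a) with hν
  have hνnorm : ∀ u ∈ Set.Icc s t, ‖ν u‖ = 1 := fun u hu =>
    norm_smul_inv_norm (sub_ne_zero.2 (hne u hu))
  have hang : ∀ b c : ℝ, angle (ν b) (ν c) = angle (γ b - a) (γ c - a) := by
    intro b c
    by_cases hb : γ b - a = 0
    · simp [hν, hb]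
    by_cases hc : γ c - a = 0
    · simp [hν, hc]
    rw [hν]
    rw [angle_smul_left_of_pos _ _ (inv_pos.2 (norm_pos_iff.2 hb)),
      angle_smul_right_of_pos _ _ (inv_pos.2 (norm_pos_iff.2 hc))]
  by_cases hfin : eVariationOn γ (Set.Icc p q) = ⊤
  · rw [hfin]; exact le_top
  set V := (eVariationOn γ (Set.Icc p q)).toReal with hV
  have hV0 : 0 ≤ V := ENNReal.toReal_nonneg
  -- main angle estimate
  have hcosbound : ∀ ε ∈ Set.Ioo (0:ℝ) (π/2),
      angle (γ q - a) (γ p - a) * Real.cos ε ≤ V := by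
    rintro ε ⟨hε1, hε2⟩
    have hεπ : ε ≤ π := by linarith [Real.pi_pos]
    have hcosεpos : 0 < Real.cos ε := Real.cos_pos_of_mem_Ioo ⟨by linarith [Real.pi_pos], hε2⟩
    have hcosε1 : Real.cos ε < 1 := by
      have := Real.strictAntiOn_cos ⟨le_refl (0:ℝ), Real.pi_pos.le⟩ ⟨hε1.le, hεπ⟩ hε1
      simpa using this
    set δ := d0 * Real.sqrt (2 - 2 * Real.cos ε) with hδdef
    have hδ : 0 < δ := by
      apply mul_pos hd0
      apply Real.sqrt_pos.2
      linarith
    obtain ⟨η, hη, hhuc⟩ := (Metric.uniformContinuousOn_iff.1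
      ((isCompact_Icc (a := p) (b := q)).uniformContinuousOn_of_continuous
        hcont.continuousOn)) δ hδ
    set N := ⌊(q - p) / η⌋₊ + 1 with hN
    have hNpos : 0 < (N:ℝ) := by positivity
    have hstep : (q - p) / N < η := by
      rw [div_lt_iff₀ hNpos]
      have h1 : (q - p) / η < (N:ℝ) := by rw [hN]; push_cast; exact Nat.lt_floor_add_one _
      calc q - p = ((q - p) / η) * η := by field_simp
        _ < N * η := by exact mul_lt_mul_of_pos_right h1 hη
        _ = η * N := by ring
    set u : ℕ → ℝ := fun i => p + (min i N : ℕ) * ((q - p) / N) with hu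
    have hqp0 : 0 ≤ (q - p) / N := div_nonneg (by linarith) hNpos.le
    have humono : Monotone u := by
      intro i j hij
      apply add_le_add_right
      apply mul_le_mul_of_nonneg_right _ hqp0
      exact_mod_cast Nat.cast_le.2 (min_le_min hij (le_refl N))
    have humem : ∀ i, u i ∈ Set.Icc p q := by
      intro i
      constructor
      · simp only [hu]; nlinarith [mul_nonneg (Nat.cast_nonneg (min i N) : (0:ℝ) ≤ (min i N : ℕ)) hqp0]
      · simp only [hu]
        have h1 : ((min i N : ℕ) : ℝ) ≤ N := by exact_mod_cast Nat.cast_le.2 (min_le_right i N)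
        have : ((min i N : ℕ) : ℝ) * ((q - p) / N) ≤ N * ((q - p) / N) :=
          mul_le_mul_of_nonneg_right h1 hqp0
        have h2 : (N:ℝ) * ((q - p) / N) = q - p := by field_simp
        linarith [h2 ▸ this]
    have hu0 : u 0 = p := by simp [hu]
    have huN : u N = q := by
      simp only [hu, min_self]
      field_simp
      ring
    have hdistu : ∀ i < N, dist (u (i+1)) (u i) < η := by
      intro i hi
      have h1 : min (i+1) N = i+1 := min_eq_left hi
      have h2 : min i N = i := min_eq_left (le_of_lt hi)
      simp only [hu, h1, h2, Real.dist_eq]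
      have : p + ((i:ℝ)+1) * ((q - p)/N) - (p + (i:ℝ) * ((q - p)/N)) = (q - p)/N := by
        push_cast; ring
      rw [show ((i+1 : ℕ) : ℝ) = (i:ℝ) + 1 by push_cast; ring, this, abs_of_nonneg hqp0]
      exact hstep
    -- per-segment estimate
    have hseg : ∀ i < N, angle (γ (u (i+1)) - a) (γ (u i) - a) * Real.cos ε
        ≤ dist (γ (u (i+1))) (γ (u i)) := by
      intro i hi
      set x := γ (u (i+1)) with hx
      set y := γ (u i) with hy
      have hux : u (i+1) ∈ Set.Icc s t := hIcc (humem _)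
      have huy : u i ∈ Set.Icc s t := hIcc (humem _)
      set αi := angle (x - a) (y - a) with hαi
      have hα0 : 0 ≤ αi := angle_nonneg _ _
      have hαπ : αi ≤ π := angle_le_pi _ _
      have hchord : dist x y < δ := hhuc _ (humem (i+1)) _ (humem i) (hdistu i hi)
      -- small angle
      have hproj : d0 * ‖ν (u (i+1)) - ν (u i)‖ ≤ dist x y := by
        have h1 := proj_lip hd0 (hd0le _ hux) (hd0le _ huy)
        have h2 : γ (u (i+1)) - a - (γ (u i) - a) = x - y := by rw [hx, hy]; abel
        rw [h2] at h1
        rwa [dist_eq_norm]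
      have hwnorm : ‖ν (u (i+1)) - ν (u i)‖ ^ 2 = 2 - 2 * Real.cos αi := by
        rw [chord_sq_eq _ _ (hνnorm _ hux) (hνnorm _ huy), hang]
      have hcosαε : Real.cos ε < Real.cos αi := by
        have h3 : ‖ν (u (i+1)) - ν (u i)‖ < Real.sqrt (2 - 2 * Real.cos ε) := by
          have h5 : d0 * ‖ν (u (i+1)) - ν (u i)‖ < d0 * Real.sqrt (2 - 2 * Real.cos ε) := by
            rw [← hδdef]
            exact lt_of_le_of_lt hproj hchord
          exact lt_of_mul_lt_mul_left h5 hd0.le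
        have h4 : ‖ν (u (i+1)) - ν (u i)‖ ^ 2 < 2 - 2 * Real.cos ε := by
          have := Real.sq_sqrt (by linarith : (0:ℝ) ≤ 2 - 2 * Real.cos ε)
          nlinarith [norm_nonneg (ν (u (i+1)) - ν (u i)), Real.sqrt_nonneg (2 - 2 * Real.cos ε)]
        rw [hwnorm] at h4
        linarith
      have hαε : αi < ε := by
        by_contra hcon
        push_neg at hcon
        have := Real.cos_le_cos_of_nonneg_of_le_pi hε1.le hαπ hcon
        linarith
      -- αi * cos ε ≤ sin αi
      have hstep2 : αi * Real.cos ε ≤ Real.sin αi := by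
        rcases eq_or_lt_of_le hα0 with h0 | h0
        · rw [← h0]; simp
        · have hαhalf : αi < π / 2 := lt_trans hαε hε2
          have hcosαpos : 0 < Real.cos αi := Real.cos_pos_of_mem_Ioo ⟨by linarith, hαhalf⟩
          have htan := Real.lt_tan h0 hαhalf
          rw [Real.tan_eq_sin_div_cos, lt_div_iff₀ hcosαpos] at htan
          nlinarith
      have hsinbound : Real.sin αi ≤ dist x y :=
        thick_sin hthick ha ⟨u (i+1), rfl⟩ ⟨u i, rfl⟩ (hne _ hux) (hne _ huy)
      linarith
    -- chain the angles
    have hchain : angle (γ q - a) (γ p - a) ≤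
        ∑ i ∈ Finset.range N, angle (γ (u (i+1)) - a) (γ (u i) - a) := by
      have h1 := angle_chain (fun i => ν (u i)) (fun i => hνnorm _ (hIcc (humem i))) N
      rw [hang] at h1
      rw [← hu0, ← huN]
      refine h1.trans ?_
      apply Finset.sum_le_sum
      intro i _
      rw [hang]
    -- sum of distances is at most the variation
    have hsum : ∑ i ∈ Finset.range N, dist (γ (u (i+1))) (γ (u i)) ≤ V := by
      have h1 := eVariationOn.sum_le (f := γ) (n := N) humono humem
      have h2 : ENNReal.ofReal (∑ i ∈ Finset.range N, dist (γ (u (i+1))) (γ (u i)))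
          = ∑ i ∈ Finset.range N, edist (γ (u (i+1))) (γ (u i)) := by
        rw [ENNReal.ofReal_sum_of_nonneg (fun i _ => dist_nonneg)]
        exact Finset.sum_congr rfl fun i _ => (edist_dist _ _).symm
      have h3 : ENNReal.ofReal (∑ i ∈ Finset.range N, dist (γ (u (i+1))) (γ (u i)))
          ≤ eVariationOn γ (Set.Icc p q) := h2 ▸ h1
      have h4 := ENNReal.toReal_mono hfin h3
      rwa [ENNReal.toReal_ofReal (Finset.sum_nonneg fun i _ => dist_nonneg)] at h4
    calc angle (γ q - a) (γ p - a) * Real.cos ε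
        ≤ (∑ i ∈ Finset.range N, angle (γ (u (i+1)) - a) (γ (u i) - a)) * Real.cos ε :=
          mul_le_mul_of_nonneg_right hchain hcosεpos.le
      _ = ∑ i ∈ Finset.range N, angle (γ (u (i+1)) - a) (γ (u i) - a) * Real.cos ε := by
          rw [Finset.sum_mul]
      _ ≤ ∑ i ∈ Finset.range N, dist (γ (u (i+1))) (γ (u i)) :=
          Finset.sum_le_sum fun i hi => hseg i (Finset.mem_range.1 hi)
      _ ≤ V := hsum
  -- pass to the limit ε → 0
  have hangleV : angle (γ q - a) (γ p - a) ≤ V := by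
    have htend : Filter.Tendsto (fun ε : ℝ => angle (γ q - a) (γ p - a) * Real.cos ε)
        (nhdsWithin 0 (Set.Ioi 0)) (nhds (angle (γ q - a) (γ p - a))) := by
      have hc : Continuous fun ε : ℝ => angle (γ q - a) (γ p - a) * Real.cos ε := by
        continuity
      have h6 : Filter.Tendsto (fun ε : ℝ => angle (γ q - a) (γ p - a) * Real.cos ε)
          (nhdsWithin 0 (Set.Ioi 0)) (nhds (angle (γ q - a) (γ p - a) * Real.cos 0)) :=
        (hc.tendsto 0).mono_left nhdsWithin_le_nhds
      simpa using h6
    refine le_of_tendsto htend ?_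
    filter_upwards [Ioo_mem_nhdsGT_of_mem (⟨le_refl (0:ℝ), Real.pi_div_two_pos⟩ : (0:ℝ) ∈ Set.Ico (0:ℝ) (π/2))] with ε hε
    exact hcosbound ε hε
  -- conclude
  have e1 : dist (γ q) a = ‖γ q - a‖ := dist_eq_norm _ _
  have e2 : dist (γ p) a = ‖γ p - a‖ := dist_eq_norm _ _
  rw [e1, e2]
  have hgoal : edist (a + ‖γ q - a‖⁻¹ • (γ q - a)) (a + ‖γ p - a‖⁻¹ • (γ p - a))
      = ENNReal.ofReal ‖ν q - ν p‖ := by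
    rw [edist_dist, dist_add_left, dist_eq_norm, hν]
  rw [hgoal]
  have hchord2 : ‖ν q - ν p‖ ≤ angle (γ q - a) (γ p - a) := by
    have := chord_le_angle (ν q) (ν p) (hνnorm q hq) (hνnorm p hp)
    rwa [hang] at this
  calc ENNReal.ofReal ‖ν q - ν p‖ ≤ ENNReal.ofReal V :=
        ENNReal.ofReal_le_ofReal (hchord2.trans hangleV)
    _ = eVariationOn γ (Set.Icc p q) := ENNReal.ofReal_toReal hfin
lemma pieces_le (γ : ℝ → E3) (u : ℕ → ℝ) (hu : Monotone u) (n : ℕ) :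
    ∑ i ∈ Finset.range n, eVariationOn γ (Set.Icc (u i) (u (i+1)))
      ≤ eVariationOn γ (Set.Icc (u 0) (u n)) := by
  induction n with
  | zero => simp
  | succ n ih =>
    rw [Finset.sum_range_succ]
    have h := eVariationOn.Icc_add_Icc γ (s := Set.univ) (hu (Nat.zero_le n)) (hu n.le_succ)
      (Set.mem_univ (u n))
    simp only [Set.univ_inter] at h
    calc ∑ i ∈ Finset.range n, eVariationOn γ (Set.Icc (u i) (u (i+1)))
          + eVariationOn γ (Set.Icc (u n) (u (n+1)))
        ≤ eVariationOn γ (Set.Icc (u 0) (u n)) + eVariationOn γ (Set.Icc (u n) (u (n+1))) :=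
          add_le_add_left ih _
      _ = eVariationOn γ (Set.Icc (u 0) (u (n+1))) := h


/-- For a closed curve `γ` of thickness at least 1 and a point `a` on the curve,
radial projection to the unit sphere around `a` does not increase the length of
any subarc of the curve avoiding `a`. -/
theorem stmt9 (γ : ℝ → E3) (L : ℝ) (hL : 0 < L) (hcont : Continuous γ)
    (hper : Function.Periodic γ L) (hinj : Set.InjOn γ (Set.Ico 0 L))
    (hthick : ThickOne (Set.range γ))
    (a : E3) (ha : a ∈ Set.range γ)
    (s t : ℝ) (hst : s ≤ t) (havoid : a ∉ γ '' Set.Icc s t) :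
    eVariationOn (fun u => a + (dist (γ u) a)⁻¹ • (γ u - a)) (Set.Icc s t)
      ≤ eVariationOn γ (Set.Icc s t) := by
  refine iSup_le ?_
  rintro ⟨n, u, hu, us⟩
  calc ∑ i ∈ Finset.range n,
        edist ((fun u => a + (dist (γ u) a)⁻¹ • (γ u - a)) (u (i+1)))
          ((fun u => a + (dist (γ u) a)⁻¹ • (γ u - a)) (u i))
      ≤ ∑ i ∈ Finset.range n, eVariationOn γ (Set.Icc (u i) (u (i+1))) := by
        refine Finset.sum_le_sum fun i _ => ?_
        exact key_lemma γ hcont hthick a ha s t havoid (u i) (u (i+1)) (us i) (us (i+1))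
          (hu i.le_succ)
    _ ≤ eVariationOn γ (Set.Icc (u 0) (u n)) := pieces_le γ u hu n
    _ ≤ eVariationOn γ (Set.Icc s t) := eVariationOn.mono γ (Set.Icc_subset_Icc (us 0).1 (us n).2)
end

section
/- Let K be a closed curve of thickness at least 1, and let p, a, b ∈ K with p not in the subarc of K from a to b (for a chosen orientation). Then the arclength of that subarc from a to b is at least the angle ∠apb between the vectors a-p and b-p. -/
open Real Set

section AuxLemmas

open InnerProductGeometry

variable {V : Type*} [NormedAddCommGroup V] [InnerProductSpace ℝ V]

lemma aux_sin_angle_unit {u v : V} (hu : ‖u‖ = 1) (hv : ‖v‖ = 1) :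
    Real.sin (angle u v) = Real.sqrt (1 - (inner ℝ u v : ℝ)^2) := by
  have h := sin_angle_mul_norm_mul_norm u v
  rw [real_inner_self_eq_norm_sq, real_inner_self_eq_norm_sq, hu, hv] at h
  simpa [sq] using h

lemma aux_cos_angle_unit {u v : V} (hu : ‖u‖ = 1) (hv : ‖v‖ = 1) :
    Real.cos (angle u v) = (inner ℝ u v : ℝ) := by
  rw [cos_angle, hu, hv]; simp

lemma aux_angle_triangle_unit {u v w : V} (hu : ‖u‖ = 1) (hv : ‖v‖ = 1) (hw : ‖w‖ = 1) :
    angle u w ≤ angle u v + angle v w := by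
  rcases le_or_gt π (angle u v + angle v w) with h | h
  · exact (angle_le_pi u w).trans h
  · by_contra hc
    push_neg at hc
    have h1 : Real.cos (angle u w) < Real.cos (angle u v + angle v w) :=
      Real.strictAntiOn_cos ⟨add_nonneg (angle_nonneg u v) (angle_nonneg v w), h.le⟩
        ⟨angle_nonneg u w, angle_le_pi u w⟩ hc
    rw [Real.cos_add, aux_cos_angle_unit hu hw, aux_cos_angle_unit hu hv,
      aux_cos_angle_unit hv hw, aux_sin_angle_unit hu hv, aux_sin_angle_unit hv hw] at h1
    set cuv : ℝ := inner ℝ u v with hcuv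
    set cvw : ℝ := inner ℝ v w with hcvw
    have hvv : (inner ℝ v v : ℝ) = 1 := by rw [real_inner_self_eq_norm_sq, hv]; norm_num
    have hcs := abs_real_inner_le_norm (u - cuv • v) (w - cvw • v)
    have hvu : (inner ℝ v u : ℝ) = cuv := by rw [real_inner_comm]
    have huv2 : (inner ℝ u v : ℝ) = cuv := rfl
    have hvw2 : (inner ℝ v w : ℝ) = cvw := rfl
    have hwv : (inner ℝ w v : ℝ) = cvw := by rw [real_inner_comm]
    have hiuv : (inner ℝ (u - cuv • v) (w - cvw • v) : ℝ) = inner ℝ u w - cuv * cvw := by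
      rw [inner_sub_left, inner_sub_right, inner_sub_right, real_inner_smul_left,
        real_inner_smul_left, real_inner_smul_right, real_inner_smul_right, hvv]
      linear_combination (-cvw) * huv2 + (-cuv) * hvw2
    have hnu : ‖u - cuv • v‖ = Real.sqrt (1 - cuv^2) := by
      rw [← Real.sqrt_sq (norm_nonneg _)]
      congr 1
      rw [norm_sub_sq_real, real_inner_smul_right, norm_smul, hu, hv, Real.norm_eq_abs,
        mul_one, sq_abs, huv2]
      ring
    have hnw : ‖w - cvw • v‖ = Real.sqrt (1 - cvw^2) := by
      rw [← Real.sqrt_sq (norm_nonneg _)]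
      congr 1
      rw [norm_sub_sq_real, real_inner_smul_right, norm_smul, hw, hv, Real.norm_eq_abs,
        mul_one, sq_abs, hwv]
      ring
    rw [hiuv, hnu, hnw] at hcs
    have := neg_abs_le ((inner ℝ u w : ℝ) - cuv * cvw)
    linarith [hcs, h1, this]

lemma aux_angle_triangle (u v w : V) (hu : u ≠ 0) (hv : v ≠ 0) (hw : w ≠ 0) :
    angle u w ≤ angle u v + angle v w := by
  have pu : (0:ℝ) < ‖u‖⁻¹ := inv_pos.mpr (norm_pos_iff.mpr hu)
  have pv : (0:ℝ) < ‖v‖⁻¹ := inv_pos.mpr (norm_pos_iff.mpr hv)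
  have pw : (0:ℝ) < ‖w‖⁻¹ := inv_pos.mpr (norm_pos_iff.mpr hw)
  have h1 : angle u w = angle (‖u‖⁻¹ • u) (‖w‖⁻¹ • w) := by
    rw [angle_smul_left_of_pos _ _ pu, angle_smul_right_of_pos _ _ pw]
  have h2 : angle u v = angle (‖u‖⁻¹ • u) (‖v‖⁻¹ • v) := by
    rw [angle_smul_left_of_pos _ _ pu, angle_smul_right_of_pos _ _ pv]
  have h3 : angle v w = angle (‖v‖⁻¹ • v) (‖w‖⁻¹ • w) := by
    rw [angle_smul_left_of_pos _ _ pv, angle_smul_right_of_pos _ _ pw]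
  rw [h1, h2, h3]
  exact aux_angle_triangle_unit (norm_smul_inv_norm hu) (norm_smul_inv_norm hv)
    (norm_smul_inv_norm hw)

lemma aux_angle_tri_pt {a y z p : E3} (ha : a ≠ p) (hy : y ≠ p) (hz : z ≠ p) :
    EuclideanGeometry.angle a p z ≤
      EuclideanGeometry.angle a p y + EuclideanGeometry.angle y p z := by
  have h1 : EuclideanGeometry.angle a p z = angle (a - p) (z - p) := rfl
  have h2 : EuclideanGeometry.angle a p y = angle (a - p) (y - p) := rfl
  have h3 : EuclideanGeometry.angle y p z = angle (y - p) (z - p) := rfl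
  rw [h1, h2, h3]
  exact aux_angle_triangle _ _ _ (sub_ne_zero.mpr ha) (sub_ne_zero.mpr hy)
    (sub_ne_zero.mpr hz)

lemma aux_angle_pt_self {a p : E3} (ha : a ≠ p) : EuclideanGeometry.angle a p a = 0 := by
  have h1 : EuclideanGeometry.angle a p a = angle (a - p) (a - p) := rfl
  rw [h1]
  exact angle_self (sub_ne_zero.mpr ha)

set_option maxHeartbeats 2000000 in
lemma aux_sin_angle_le_dist {K : Set E3} (hK : ThickOne K) {x y p : E3}
    (hx : x ∈ K) (hy : y ∈ K) (hp : p ∈ K) (hxp : x ≠ p) (hyp : y ≠ p) :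
    Real.sin (EuclideanGeometry.angle x p y) ≤ dist x y := by
  obtain ⟨u, hu⟩ : ∃ u : E3, u = x - p := ⟨_, rfl⟩
  obtain ⟨v, hv⟩ : ∃ v : E3, v = y - p := ⟨_, rfl⟩
  have hu0 : u ≠ 0 := hu ▸ sub_ne_zero.mpr hxp
  have hv0 : v ≠ 0 := hv ▸ sub_ne_zero.mpr hyp
  have hunorm : 0 < ‖u‖ := norm_pos_iff.mpr hu0
  have hvnorm : 0 < ‖v‖ := norm_pos_iff.mpr hv0
  have hang : EuclideanGeometry.angle x p y = angle u v := by rw [hu, hv]; rfl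
  obtain ⟨A, hA⟩ : ∃ A : ℝ, A = ‖u‖^2 := ⟨_, rfl⟩
  obtain ⟨B, hB⟩ : ∃ B : ℝ, B = ‖v‖^2 := ⟨_, rfl⟩
  obtain ⟨W, hW⟩ : ∃ W : ℝ, W = (inner ℝ u v : ℝ) := ⟨_, rfl⟩
  obtain ⟨D, hD⟩ : ∃ D : ℝ, D = A*B - W^2 := ⟨_, rfl⟩
  have euu : (inner ℝ u u : ℝ) = A := by rw [real_inner_self_eq_norm_sq, hA]
  have evv : (inner ℝ v v : ℝ) = B := by rw [real_inner_self_eq_norm_sq, hB]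
  have evu : (inner ℝ v u : ℝ) = W := by rw [real_inner_comm, hW]
  have euv : (inner ℝ u v : ℝ) = W := hW.symm
  have hApos : 0 < A := by rw [hA]; positivity
  have hBpos : 0 < B := by rw [hB]; positivity
  have hDnn : 0 ≤ D := by
    have h1 := abs_real_inner_le_norm u v
    have h2 : W^2 ≤ (‖u‖*‖v‖)^2 := by
      rw [← sq_abs W, hW]; exact pow_le_pow_left₀ (abs_nonneg _) h1 2
    rw [hD, hA, hB]; nlinarith
  have hsinf : Real.sin (angle u v) * (‖u‖ * ‖v‖) = Real.sqrt D := by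
    have h := sin_angle_mul_norm_mul_norm u v
    rw [euu, evv, euv] at h
    rw [h, hD]; congr 1; ring
  have hdxy : dist x y = ‖u - v‖ := by
    rw [dist_eq_norm, hu, hv]; congr 1; abel
  have hnuv : ‖u - v‖^2 = A - 2*W + B := by
    rw [norm_sub_sq_real, euv, hA, hB]
  rcases eq_or_lt_of_le hDnn with hD0 | hDpos
  · have hz : Real.sin (angle u v) * (‖u‖ * ‖v‖) = 0 := by
      rw [hsinf, ← hD0, Real.sqrt_zero]
    have hs0 : Real.sin (angle u v) = 0 := by
      rcases mul_eq_zero.mp hz with h | h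
      · exact h
      · exact absurd h (by positivity)
    rw [hang, hs0]; exact dist_nonneg
  · obtain ⟨α, hα⟩ : ∃ α : ℝ, α = B*(A - W)/(2*D) := ⟨_, rfl⟩
    obtain ⟨β, hβ⟩ : ∃ β : ℝ, β = A*(B - W)/(2*D) := ⟨_, rfl⟩
    obtain ⟨q, hq⟩ : ∃ q : E3, q = α • u + β • v := ⟨_, rfl⟩
    have hqu : (inner ℝ q u : ℝ) = α*A + β*W := by
      rw [hq, inner_add_left, real_inner_smul_left, real_inner_smul_left, euu, evu]
    have hqv : (inner ℝ q v : ℝ) = α*W + β*B := by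
      rw [hq, inner_add_left, real_inner_smul_left, real_inner_smul_left, euv, evv]
    have hDne : A*B - W^2 ≠ 0 := by rw [← hD]; exact hDpos.ne'
    have h2qu : 2*(inner ℝ q u : ℝ) = A := by
      rw [hqu, hα, hβ]; field_simp; rw [hD]; ring
    have h2qv : 2*(inner ℝ q v : ℝ) = B := by
      rw [hqv, hα, hβ]; field_simp; rw [hD]; ring
    have hq2 : ‖q‖^2 = α^2*A + 2*(α*β*W) + β^2*B := by
      rw [hq, norm_add_sq_real, real_inner_smul_left, real_inner_smul_right,
        norm_smul, norm_smul, mul_pow, mul_pow, Real.norm_eq_abs, Real.norm_eq_abs,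
        sq_abs, sq_abs, euv, hA, hB]
      ring
    have hqid : ‖q‖^2 * (4*D) = A*B*(A - 2*W + B) := by
      rw [hq2, hα, hβ]; field_simp; rw [hD]; ring
    obtain ⟨c, hc⟩ : ∃ c : E3, c = p + q := ⟨_, rfl⟩
    have hpc : dist p c = ‖q‖ := by
      rw [dist_eq_norm, hc]; simp
    have hxc : dist x c = ‖q‖ := by
      rw [dist_eq_norm]
      have hxc1 : x - c = u - q := by rw [hc, hu]; abel
      rw [hxc1, ← Real.sqrt_sq (norm_nonneg (u - q)), ← Real.sqrt_sq (norm_nonneg q)]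
      congr 1
      rw [norm_sub_sq_real, ← hA]
      linarith [h2qu, real_inner_comm u q]
    have hyc : dist y c = ‖q‖ := by
      rw [dist_eq_norm]
      have hyc1 : y - c = v - q := by rw [hc, hv]; abel
      rw [hyc1, ← Real.sqrt_sq (norm_nonneg (v - q)), ← Real.sqrt_sq (norm_nonneg q)]
      congr 1
      rw [norm_sub_sq_real, ← hB]
      linarith [h2qv, real_inner_comm v q]
    have hxy : x ≠ y := by
      intro h
      have huv : u = v := by rw [hu, hv, h]
      have hWA : W = B := by rw [← euv, huv, evv]
      have hAB : A = B := by rw [hA, hB, huv]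
      have : D = 0 := by rw [hD, hWA, hAB]; ring
      exact hDpos.ne' this
    have hρ : (1:ℝ)/2 ≤ ‖q‖ := hK x hx y hy p hp hxy hyp hxp c ‖q‖ hxc hyc hpc
    have hq14 : (1:ℝ)/4 ≤ ‖q‖^2 := by nlinarith [hρ, norm_nonneg q]
    have hfac : (0:ℝ) ≤ (4*‖q‖^2 - 1) * D := mul_nonneg (by linarith) hDnn
    have h6 : D ≤ ‖q‖^2 * (4*D) := by linarith
    rw [hqid, ← hnuv] at h6
    have hsqrt : Real.sqrt D ≤ ‖u‖ * ‖v‖ * ‖u - v‖ := by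
      have h1 : Real.sqrt D ≤ Real.sqrt ((‖u‖ * ‖v‖ * ‖u - v‖)^2) := by
        apply Real.sqrt_le_sqrt
        calc D ≤ A*B*‖u - v‖^2 := h6
        _ = (‖u‖ * ‖v‖ * ‖u - v‖)^2 := by rw [hA, hB]; ring
      rwa [Real.sqrt_sq (by positivity)] at h1
    rw [hang, hdxy]
    have hpos : (0:ℝ) < ‖u‖ * ‖v‖ := by positivity
    rw [← mul_le_mul_iff_of_pos_right hpos, hsinf]
    calc Real.sqrt D ≤ ‖u‖ * ‖v‖ * ‖u - v‖ := hsqrt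
    _ = ‖u - v‖ * (‖u‖ * ‖v‖) := by ring

lemma aux_angle_le_of_dist_sq_le {x y p : E3} (ε δ : ℝ) (hε : 0 < ε) (hδ0 : 0 < δ)
    (hδπ : δ ≤ π) (hxp : ε ≤ dist x p) (hyp : ε ≤ dist y p)
    (hd : (dist x y)^2 ≤ 2*ε^2*(1 - Real.cos δ)) :
    EuclideanGeometry.angle x p y ≤ δ := by
  obtain ⟨u, hu⟩ : ∃ u : E3, u = x - p := ⟨_, rfl⟩
  obtain ⟨v, hv⟩ : ∃ v : E3, v = y - p := ⟨_, rfl⟩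
  have hun : ε ≤ ‖u‖ := by rwa [hu, ← dist_eq_norm]
  have hvn : ε ≤ ‖v‖ := by rwa [hv, ← dist_eq_norm]
  have hupos : 0 < ‖u‖ := lt_of_lt_of_le hε hun
  have hvpos : 0 < ‖v‖ := lt_of_lt_of_le hε hvn
  have hang : EuclideanGeometry.angle x p y = angle u v := by rw [hu, hv]; rfl
  have hdxy : dist x y = ‖u - v‖ := by rw [dist_eq_norm, hu, hv]; congr 1; abel
  by_contra hcon
  push_neg at hcon
  have h1 : Real.cos (angle u v) < Real.cos δ :=
    Real.strictAntiOn_cos ⟨hδ0.le, hδπ⟩ ⟨angle_nonneg u v, angle_le_pi u v⟩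
      (by rw [hang] at hcon; exact hcon)
  rw [cos_angle] at h1
  have hab : ε^2 ≤ ‖u‖ * ‖v‖ := by nlinarith
  have hW : ‖u‖ * ‖v‖ - (inner ℝ u v : ℝ) ≤ (dist x y)^2 / 2 := by
    have hns : ‖u - v‖^2 = ‖u‖^2 - 2*(inner ℝ u v : ℝ) + ‖v‖^2 := norm_sub_sq_real u v
    rw [hdxy, hns]
    nlinarith [sq_nonneg (‖u‖ - ‖v‖)]
  have hcos1 : Real.cos δ ≤ 1 := Real.cos_le_one δ
  have hd2 : 0 ≤ (dist x y)^2 := sq_nonneg _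
  have hkey : Real.cos δ * (‖u‖ * ‖v‖) ≤ (inner ℝ u v : ℝ) := by
    nlinarith [mul_nonneg (sub_nonneg.mpr hab) (sub_nonneg.mpr hcos1)]
  have : Real.cos δ ≤ (inner ℝ u v : ℝ) / (‖u‖ * ‖v‖) := by
    rw [le_div_iff₀ (by positivity)]
    exact hkey
  linarith

end AuxLemmas

set_option maxHeartbeats 4000000 in
/-- For a closed curve of thickness at least 1 and points `p, a, b` on the curve with
`p` not on the subarc from `a` to `b`, the length of that subarc is at least the
angle `∠apb`. -/
theorem stmt10 (γ : ℝ → E3) (L : ℝ) (hL : 0 < L) (hcont : Continuous γ)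
    (hper : Function.Periodic γ L) (hinj : Set.InjOn γ (Set.Ico 0 L))
    (hthick : ThickOne (Set.range γ))
    (p a b : E3) (s t : ℝ) (hst : s ≤ t)
    (hγs : γ s = a) (hγt : γ t = b)
    (hp : p ∈ Set.range γ) (hpnot : p ∉ γ '' Set.Icc s t) :
    ENNReal.ofReal (EuclideanGeometry.angle a p b) ≤ eVariationOn γ (Set.Icc s t) := by
  set θ := EuclideanGeometry.angle a p b with hθdef
  by_contra hcon
  rw [not_le] at hcon
  have hVne : eVariationOn γ (Set.Icc s t) ≠ ⊤ := hcon.ne_top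
  set vV := (eVariationOn γ (Set.Icc s t)).toReal with hvVdef
  have hvθ : vV < θ := (ENNReal.lt_ofReal_iff_toReal_lt hVne).mp hcon
  have hv0 : 0 ≤ vV := ENNReal.toReal_nonneg
  have hθ0 : 0 < θ := lt_of_le_of_lt hv0 hvθ
  -- basic facts
  have hγp : ∀ r ∈ Set.Icc s t, γ r ≠ p := fun r hr h => hpnot ⟨r, hr, h⟩
  have hap : a ≠ p := by rw [← hγs]; exact hγp s ⟨le_refl s, hst⟩
  -- main estimate
  have main : ∀ δ : ℝ, 0 < δ → δ ≤ 1 → (1 - δ^2/4) * θ ≤ vV := by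
    intro δ hδ0 hδ1
    rw [hvVdef, ← ENNReal.ofReal_le_iff_le_toReal hVne]
    have hIne : (Set.Icc s t).Nonempty := Set.nonempty_Icc.mpr hst
    obtain ⟨r0, hr0mem, hr0min⟩ :=
      isCompact_Icc.exists_isMinOn hIne ((hcont.dist continuous_const).continuousOn
        (s := Set.Icc s t))
    set ε := dist (γ r0) p with hεdef
    have hε0 : 0 < ε := dist_pos.mpr (hγp r0 hr0mem)
    have hεle : ∀ r ∈ Set.Icc s t, ε ≤ dist (γ r) p := fun r hr => hr0min hr
    have hδπ : δ ≤ π := le_trans hδ1 (by linarith [Real.pi_gt_three])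
    have hcosδ : 0 < 1 - Real.cos δ := by
      have h := Real.strictAntiOn_cos ⟨le_refl (0:ℝ), Real.pi_nonneg⟩ ⟨hδ0.le, hδπ⟩ hδ0
      rw [Real.cos_zero] at h
      linarith
    set ζ := Real.sqrt (2*ε^2*(1 - Real.cos δ)) with hζdef
    have hζ0 : 0 < ζ := Real.sqrt_pos.mpr (by positivity)
    obtain ⟨η, hη0, hηp⟩ := Metric.uniformContinuousOn_iff.mp
      (isCompact_Icc.uniformContinuousOn_of_continuous
        (hcont.continuousOn (s := Set.Icc s t))) ζ hζ0
    obtain ⟨n, hn⟩ := exists_nat_gt ((t - s)/η)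
    set N : ℕ := n + 1 with hNdef
    have hNpos : (0:ℝ) < (N:ℝ) := by positivity
    have hts : 0 ≤ t - s := sub_nonneg.mpr hst
    set c : ℝ := (t - s)/(N:ℝ) with hcdef
    have hc0 : 0 ≤ c := div_nonneg hts hNpos.le
    have hstep : c < η := by
      rw [hcdef, div_lt_iff₀ hNpos]
      have h1 : (t-s)/η < (N:ℝ) := lt_of_lt_of_le hn (by exact_mod_cast Nat.le_succ n)
      calc t - s = ((t-s)/η)*η := by field_simp
      _ < (N:ℝ)*η := mul_lt_mul_of_pos_right h1 hη0
      _ = η*(N:ℝ) := mul_comm _ _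
    set u : ℕ → ℝ := fun i => s + ((min i N : ℕ):ℝ) * c with hudef
    have humem : ∀ i, u i ∈ Set.Icc s t := by
      intro i
      constructor
      · have h1 : 0 ≤ ((min i N : ℕ):ℝ) * c := mul_nonneg (Nat.cast_nonneg _) hc0
        simp only [hudef]; linarith
      · have h1 : ((min i N : ℕ):ℝ) ≤ (N:ℝ) := Nat.cast_le.mpr (min_le_right i N)
        have h2 : ((min i N : ℕ):ℝ) * c ≤ (N:ℝ) * c :=
          mul_le_mul_of_nonneg_right h1 hc0
        have h3 : (N:ℝ) * c = t - s := by
          rw [hcdef]; field_simp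
        simp only [hudef]; linarith
    have humono : Monotone u := by
      intro i j hij
      have h1 : ((min i N : ℕ):ℝ) ≤ ((min j N : ℕ):ℝ) := Nat.cast_le.mpr (by omega)
      simp only [hudef]
      have := mul_le_mul_of_nonneg_right h1 hc0
      linarith
    have hu0 : u 0 = s := by simp [hudef]
    have huN : u N = t := by
      have h3 : (N:ℝ) * c = t - s := by rw [hcdef]; field_simp
      simp only [hudef, min_self]
      linarith
    have hustep : ∀ i, u (i+1) - u i ≤ c := by
      intro i
      have h1 : ((min (i+1) N : ℕ):ℝ) ≤ ((min i N : ℕ):ℝ) + 1 := by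
        exact_mod_cast (by omega : min (i+1) N ≤ min i N + 1)
      simp only [hudef]
      have := mul_le_mul_of_nonneg_right h1 hc0
      linarith [this]
    have hne : ∀ i, γ (u i) ≠ p := fun i => hγp _ (humem i)
    have hrange : ∀ i, γ (u i) ∈ Set.range γ := fun i => ⟨u i, rfl⟩
    have hdist : ∀ i, dist (γ (u i)) (γ (u (i+1))) < ζ := by
      intro i
      apply hηp _ (humem i) _ (humem (i+1))
      have hmono := humono (Nat.le_succ i)
      rw [Real.dist_eq, abs_sub_comm, abs_of_nonneg (by linarith)]
      linarith [hustep i, hstep]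
    have hangle_le : ∀ i, EuclideanGeometry.angle (γ (u i)) p (γ (u (i+1))) ≤ δ := by
      intro i
      apply aux_angle_le_of_dist_sq_le ε δ hε0 hδ0 hδπ (hεle _ (humem i))
        (hεle _ (humem (i+1)))
      have h := hdist i
      have h2 : dist (γ (u i)) (γ (u (i+1))) ^2 ≤ ζ^2 := by
        nlinarith [dist_nonneg (x := γ (u i)) (y := γ (u (i+1)))]
      rwa [hζdef, Real.sq_sqrt (by positivity)] at h2
    have hsin : ∀ i, Real.sin (EuclideanGeometry.angle (γ (u i)) p (γ (u (i+1)))) ≤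
        dist (γ (u i)) (γ (u (i+1))) :=
      fun i => aux_sin_angle_le_dist hthick (hrange i) (hrange (i+1)) hp (hne i) (hne (i+1))
    have hlin : ∀ i, (1 - δ^2/4) * EuclideanGeometry.angle (γ (u i)) p (γ (u (i+1))) ≤
        dist (γ (u i)) (γ (u (i+1))) := by
      intro i
      set φ := EuclideanGeometry.angle (γ (u i)) p (γ (u (i+1))) with hφdef
      have hφ0 : 0 ≤ φ := EuclideanGeometry.angle_nonneg _ _ _
      rcases eq_or_lt_of_le hφ0 with hz | hφpos
      · rw [← hz, mul_zero]; exact dist_nonneg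
      · have hφδ : φ ≤ δ := hangle_le i
        have hφ1 : φ ≤ 1 := le_trans hφδ hδ1
        have hcube := Real.sin_gt_sub_cube hφpos
        have hφsq : φ^2 ≤ δ^2 := pow_le_pow_left₀ hφ0 hφδ 2
        nlinarith [hsin i]
    have htel : ∀ k, EuclideanGeometry.angle a p (γ (u k)) ≤
        ∑ i ∈ Finset.range k, EuclideanGeometry.angle (γ (u i)) p (γ (u (i+1))) := by
      intro k
      induction k with
      | zero =>
        have h1 : γ (u 0) = a := by rw [hu0, hγs]
        rw [h1, aux_angle_pt_self hap]
        simp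
      | succ k ih =>
        calc EuclideanGeometry.angle a p (γ (u (k+1)))
            ≤ EuclideanGeometry.angle a p (γ (u k)) +
              EuclideanGeometry.angle (γ (u k)) p (γ (u (k+1))) :=
              aux_angle_tri_pt hap (hne k) (hne (k+1))
        _ ≤ (∑ i ∈ Finset.range k, EuclideanGeometry.angle (γ (u i)) p (γ (u (i+1)))) +
              EuclideanGeometry.angle (γ (u k)) p (γ (u (k+1))) :=
              add_le_add_left ih _
        _ = ∑ i ∈ Finset.range (k+1), EuclideanGeometry.angle (γ (u i)) p (γ (u (i+1))) :=
              (Finset.sum_range_succ _ _).symm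
    have hθsum : θ ≤ ∑ i ∈ Finset.range N,
        EuclideanGeometry.angle (γ (u i)) p (γ (u (i+1))) := by
      have h := htel N
      rwa [huN, hγt, ← hθdef] at h
    have hc4 : 0 ≤ 1 - δ^2/4 := by nlinarith
    have hreal : (1 - δ^2/4) * θ ≤
        ∑ i ∈ Finset.range N, dist (γ (u i)) (γ (u (i+1))) := by
      calc (1 - δ^2/4) * θ
          ≤ (1 - δ^2/4) * ∑ i ∈ Finset.range N,
              EuclideanGeometry.angle (γ (u i)) p (γ (u (i+1))) :=
            mul_le_mul_of_nonneg_left hθsum hc4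
      _ = ∑ i ∈ Finset.range N,
            (1 - δ^2/4) * EuclideanGeometry.angle (γ (u i)) p (γ (u (i+1))) :=
            Finset.mul_sum _ _ _
      _ ≤ ∑ i ∈ Finset.range N, dist (γ (u i)) (γ (u (i+1))) :=
            Finset.sum_le_sum (fun i _ => hlin i)
    calc ENNReal.ofReal ((1 - δ^2/4) * θ)
        ≤ ENNReal.ofReal (∑ i ∈ Finset.range N, dist (γ (u i)) (γ (u (i+1)))) :=
          ENNReal.ofReal_le_ofReal hreal
    _ = ∑ i ∈ Finset.range N, edist (γ (u (i+1))) (γ (u i)) := by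
        rw [ENNReal.ofReal_sum_of_nonneg (fun i _ => dist_nonneg)]
        exact Finset.sum_congr rfl (fun i _ => by rw [edist_dist, dist_comm])
    _ ≤ eVariationOn γ (Set.Icc s t) := eVariationOn.sum_le (f := γ) (n := N) humono humem
  -- derive contradiction
  set δ : ℝ := min 1 (Real.sqrt ((θ - vV)/θ)) with hδdef
  have hδ0 : 0 < δ :=
    lt_min one_pos (Real.sqrt_pos.mpr (div_pos (by linarith) hθ0))
  have hδ1 : δ ≤ 1 := min_le_left _ _
  have hδsq : δ^2 ≤ (θ - vV)/θ := by
    have h1 : δ ≤ Real.sqrt ((θ - vV)/θ) := min_le_right _ _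
    calc δ^2 ≤ (Real.sqrt ((θ - vV)/θ))^2 := pow_le_pow_left₀ hδ0.le h1 2
    _ = (θ - vV)/θ := Real.sq_sqrt (div_nonneg (by linarith) hθ0.le)
  have hm := main δ hδ0 hδ1
  have hδθ : δ^2 * θ ≤ θ - vV := by
    rw [div_eq_mul_inv] at hδsq
    have := mul_le_mul_of_nonneg_right hδsq hθ0.le
    rwa [mul_assoc, inv_mul_cancel₀ hθ0.ne', mul_one] at this
  nlinarith [hm, hδθ, hvθ, hθ0]
end

section
/- Let K be a closed curve of thickness at least 1 and suppose a, p, b ∈ K are collinear with p strictly between a and b on the line (a reversed trisecant, so p is not on the subarc of K from a to b). Then the arclength of the subarc of K from a to b avoiding p is at least π. -/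
open Real Set

section Auxiliary

open InnerProductGeometry
open scoped RealInnerProductSpace ENNReal

lemma my_arccos_le_arccos {x y : ℝ} (h : x ≤ y) : Real.arccos y ≤ Real.arccos x := by
  have := Real.monotone_arcsin h
  simp only [Real.arccos_eq_pi_div_two_sub_arcsin]
  linarith

section AT
variable {V : Type*} [NormedAddCommGroup V] [InnerProductSpace ℝ V]

lemma my_angle_triangle_unit {x y z : V} (hx : ‖x‖ = 1) (hy : ‖y‖ = 1) (hz : ‖z‖ = 1) :
    angle x z ≤ angle x y + angle y z := by
  by_cases hsum : angle x y + angle y z ≤ π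
  · have hxx : ⟪x, x⟫ = 1 := by rw [real_inner_self_eq_norm_sq, hx]; norm_num
    have hyy : ⟪y, y⟫ = 1 := by rw [real_inner_self_eq_norm_sq, hy]; norm_num
    have hzz : ⟪z, z⟫ = 1 := by rw [real_inner_self_eq_norm_sq, hz]; norm_num
    set a := ⟪x, y⟫ with ha
    set b := ⟪y, z⟫ with hb
    set c := ⟪x, z⟫ with hc
    have hca : Real.cos (angle x y) = a := by rw [cos_angle, hx, hy]; simp [ha]
    have hcb : Real.cos (angle y z) = b := by rw [cos_angle, hy, hz]; simp [hb]
    have hsa : Real.sin (angle x y) = Real.sqrt (1 - a * a) := by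
      have h1 := sin_angle_mul_norm_mul_norm x y
      rw [hx, hy, hxx, hyy] at h1
      simpa using h1
    have hsb : Real.sin (angle y z) = Real.sqrt (1 - b * b) := by
      have h1 := sin_angle_mul_norm_mul_norm y z
      rw [hy, hz, hyy, hzz] at h1
      simpa using h1
    have hkey : a * b - Real.sqrt (1 - a * a) * Real.sqrt (1 - b * b) ≤ c := by
      have h1 : ⟪x - a • y, z - b • y⟫ = c - a * b := by
        simp only [inner_sub_left, inner_sub_right, real_inner_smul_left,
          real_inner_smul_right, hyy, ← ha, ← hb, ← hc]
        ring
      have h2 : ‖x - a • y‖ = Real.sqrt (1 - a * a) := by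
        have h3 : ‖x - a • y‖ ^ 2 = 1 - a * a := by
          rw [norm_sub_sq_real, real_inner_smul_right, norm_smul, hx, hy, ← ha,
            Real.norm_eq_abs]
          rw [show (|a| * 1) ^ 2 = a * a by rw [mul_one, sq_abs]; ring]
          ring
        rw [← h3, Real.sqrt_sq (norm_nonneg _)]
      have h4 : ‖z - b • y‖ = Real.sqrt (1 - b * b) := by
        have h3 : ‖z - b • y‖ ^ 2 = 1 - b * b := by
          rw [norm_sub_sq_real, real_inner_smul_right, norm_smul, hz, hy]
          have hzy : ⟪z, y⟫ = b := (real_inner_comm z y).symm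
          rw [hzy, Real.norm_eq_abs]
          rw [show (|b| * 1) ^ 2 = b * b by rw [mul_one, sq_abs]; ring]
          ring
        rw [← h3, Real.sqrt_sq (norm_nonneg _)]
      have h5 := abs_real_inner_le_norm (x - a • y) (z - b • y)
      rw [h1, h2, h4] at h5
      have h6 := neg_abs_le (c - a * b)
      linarith [abs_le.mp h5]
    have hcos : Real.cos (angle x y + angle y z) ≤ c := by
      rw [Real.cos_add, hca, hcb, hsa, hsb]
      linarith
    have haz : angle x z = Real.arccos c := by
      unfold angle
      rw [hx, hz]; norm_num [hc]
    calc angle x z = Real.arccos c := haz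
      _ ≤ Real.arccos (Real.cos (angle x y + angle y z)) := my_arccos_le_arccos hcos
      _ = angle x y + angle y z := Real.arccos_cos
          (add_nonneg (angle_nonneg x y) (angle_nonneg y z)) hsum
  · push_neg at hsum
    exact le_trans (angle_le_pi x z) hsum.le

end AT

section AT2
variable {V : Type*} [NormedAddCommGroup V] [InnerProductSpace ℝ V]

lemma my_angle_triangle (x y z : V) : angle x z ≤ angle x y + angle y z := by
  rcases eq_or_ne x 0 with rfl | hx
  · rw [angle_zero_left, angle_zero_left]
    linarith [angle_nonneg y z]
  rcases eq_or_ne y 0 with rfl | hy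
  · rw [angle_zero_right, angle_zero_left]
    linarith [angle_le_pi x z]
  rcases eq_or_ne z 0 with rfl | hz
  · rw [angle_zero_right, angle_zero_right]
    linarith [angle_nonneg x y]
  · have hux : (0:ℝ) < ‖x‖⁻¹ := inv_pos.mpr (norm_pos_iff.mpr hx)
    have huy : (0:ℝ) < ‖y‖⁻¹ := inv_pos.mpr (norm_pos_iff.mpr hy)
    have huz : (0:ℝ) < ‖z‖⁻¹ := inv_pos.mpr (norm_pos_iff.mpr hz)
    have hnorm : ∀ w : V, w ≠ 0 → ‖‖w‖⁻¹ • w‖ = 1 := by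
      intro w hw
      rw [norm_smul, norm_inv, norm_norm, inv_mul_cancel₀ (norm_ne_zero_iff.mpr hw)]
    have h := my_angle_triangle_unit (hnorm x hx) (hnorm y hy) (hnorm z hz)
    rwa [angle_smul_left_of_pos _ _ hux, angle_smul_right_of_pos _ _ huz,
      angle_smul_left_of_pos _ _ hux, angle_smul_right_of_pos _ _ huy,
      angle_smul_left_of_pos _ _ huy, angle_smul_right_of_pos _ _ huz] at h

lemma my_angle_chain (v : ℕ → V) (h0 : v 0 ≠ 0) (n : ℕ) :
    angle (v 0) (v n) ≤ ∑ i ∈ Finset.range n, angle (v i) (v (i + 1)) := by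
  induction n with
  | zero => simp [angle_self h0]
  | succ n ih =>
    rw [Finset.sum_range_succ]
    calc angle (v 0) (v (n + 1)) ≤ angle (v 0) (v n) + angle (v n) (v (n + 1)) :=
          my_angle_triangle _ _ _
      _ ≤ _ := by linarith

end AT2


set_option maxHeartbeats 1000000 in
lemma my_sin_angle_le_dist {K : Set E3} (hthick : ThickOne K) {p x y : E3}
    (hp : p ∈ K) (hx : x ∈ K) (hy : y ∈ K) (hxp : x ≠ p) (hyp : y ≠ p) :
    Real.sin (angle (x - p) (y - p)) ≤ dist x y := by
  set u := x - p with hu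
  set v := y - p with hv
  have hu0 : u ≠ 0 := sub_ne_zero.mpr hxp
  have hv0 : v ≠ 0 := sub_ne_zero.mpr hyp
  set A := ⟪u, u⟫ with hA
  set B := ⟪v, v⟫ with hB
  set C := ⟪u, v⟫ with hC
  have hAn : A = ‖u‖ ^ 2 := real_inner_self_eq_norm_sq u
  have hBn : B = ‖v‖ ^ 2 := real_inner_self_eq_norm_sq v
  have hA0 : 0 < A := by rw [hAn]; exact pow_pos (norm_pos_iff.mpr hu0) 2
  have hB0 : 0 < B := by rw [hBn]; exact pow_pos (norm_pos_iff.mpr hv0) 2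
  have hdist : dist x y = ‖u - v‖ := by
    rw [dist_eq_norm, hu, hv]; congr 1; abel
  have huv : ‖u - v‖ ^ 2 = A + B - 2 * C := by
    rw [norm_sub_sq_real, ← hAn, ← hBn, ← hC]; ring
  -- main inequality
  have hAB : A * B - C * C ≤ A * B * ‖u - v‖ ^ 2 := by
    rcases le_or_gt (A * B - C * C) 0 with h | h
    · have : 0 ≤ A * B * ‖u - v‖ ^ 2 := by positivity
      linarith
    · set D := A * B - C * C with hD
      set α := B * (A - C) / (2 * D) with hα
      set β := A * (B - C) / (2 * D) with hβ
      set mv := α • u + β • v with hmv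
      have hinu : ⟪u, mv⟫ = α * A + β * C := by
        rw [hmv, inner_add_right, real_inner_smul_right, real_inner_smul_right, ← hA, ← hC]
      have hinv : ⟪v, mv⟫ = α * C + β * B := by
        rw [hmv, inner_add_right, real_inner_smul_right, real_inner_smul_right, ← hB]
        rw [(real_inner_comm v u).symm, ← hC]
      have hmu : 2 * (α * A + β * C) = A := by
        rw [hα, hβ]; field_simp; ring
      have hmv2 : 2 * (α * C + β * B) = B := by
        rw [hα, hβ]; field_simp; ring
      have h1 : dist p (p + mv) = ‖mv‖ := by
        rw [dist_eq_norm]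
        rw [show p - (p + mv) = -mv by abel, norm_neg]
      have hnormeq : ∀ w : E3, ⟪w, mv⟫ * 2 = ⟪w, w⟫ → dist (p + w) (p + mv) = ‖mv‖ := by
        intro w hw
        rw [dist_eq_norm, show p + w - (p + mv) = w - mv by abel]
        have hsq : ‖w - mv‖ ^ 2 = ‖mv‖ ^ 2 := by
          rw [norm_sub_sq_real, ← real_inner_self_eq_norm_sq w]
          linarith
        have := congrArg Real.sqrt hsq
        rwa [Real.sqrt_sq (norm_nonneg _), Real.sqrt_sq (norm_nonneg _)] at this
      have h2 : dist x (p + mv) = ‖mv‖ := by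
        have := hnormeq u (by rw [hinu, ← hA]; linarith)
        rwa [show p + u = x by rw [hu]; abel] at this
      have h3 : dist y (p + mv) = ‖mv‖ := by
        have := hnormeq v (by rw [hinv, ← hB]; linarith)
        rwa [show p + v = y by rw [hv]; abel] at this
      have hxy : x ≠ y := by
        intro hxyeq
        have huv' : u = v := by rw [hu, hv, hxyeq]
        have hCB : C = B := by rw [hC, huv', ← hB]
        have hAB2 : A = B := by rw [hA, huv', ← hB]
        rw [hD] at h
        rw [hCB, hAB2] at h
        linarith
      have hρ : 1 / 2 ≤ ‖mv‖ :=
        hthick x hx p hp y hy hxp (Ne.symm hyp) hxy (p + mv) ‖mv‖ h2 h1 h3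
      have hρ2 : 1 / 4 ≤ ‖mv‖ ^ 2 := by nlinarith [norm_nonneg mv]
      have hval : ‖mv‖ ^ 2 = A * B * (A + B - 2 * C) / (4 * D) := by
        rw [← real_inner_self_eq_norm_sq mv, hmv]
        simp only [inner_add_left, inner_add_right, real_inner_smul_left,
          real_inner_smul_right]
        rw [(real_inner_comm v u).symm, ← hA, ← hB, ← hC]
        rw [hα, hβ]
        field_simp
        ring
      rw [hval] at hρ2
      rw [huv]
      have hcore : D ≤ A * B * (A + B - 2 * C) := by
        rw [div_le_div_iff₀ (by norm_num) (by linarith : (0:ℝ) < 4 * D)] at hρ2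
        · linarith
      linarith [hcore]
  -- conclude
  have hs := sin_angle_mul_norm_mul_norm u v
  rw [← hA, ← hB, ← hC] at hs
  have hnuv : (0:ℝ) < ‖u‖ * ‖v‖ := by
    have := norm_pos_iff.mpr hu0
    have := norm_pos_iff.mpr hv0
    positivity
  rw [hdist, ← mul_le_mul_iff_of_pos_right hnuv, hs]
  have hrhs : ‖u - v‖ * (‖u‖ * ‖v‖) = Real.sqrt (A * B * ‖u - v‖ ^ 2) := by
    rw [hAn, hBn, show ‖u‖^2 * ‖v‖^2 * ‖u - v‖^2 = (‖u - v‖ * (‖u‖ * ‖v‖))^2 by ring,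
      Real.sqrt_sq (by positivity)]
  rw [hrhs]
  exact Real.sqrt_le_sqrt hAB


end Auxiliary

section MainProof

open InnerProductGeometry
open scoped RealInnerProductSpace ENNReal

set_option maxHeartbeats 1000000

/-- For a closed curve of thickness at least 1 with a reversed trisecant `a p b`
(so `p` lies strictly between `a` and `b` on a line, and `p` is not on the subarc
of the curve from `a` to `b`), that subarc has length at least `π`. -/
theorem stmt11 (γ : ℝ → E3) (L : ℝ) (hL : 0 < L) (hcont : Continuous γ)
    (hper : Function.Periodic γ L) (hinj : Set.InjOn γ (Set.Ico 0 L))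
    (hthick : ThickOne (Set.range γ))
    (p a b : E3) (s t : ℝ) (hst : s ≤ t)
    (hγs : γ s = a) (hγt : γ t = b)
    (hp : p ∈ Set.range γ) (hpnot : p ∉ γ '' Set.Icc s t)
    (hbtw : Sbtw ℝ a p b) :
    ENNReal.ofReal Real.pi ≤ eVariationOn γ (Set.Icc s t) := by
  classical
  have hab : a ≠ b := hbtw.left_ne_right
  have hslt : s < t := lt_of_le_of_ne hst (fun h => hab (by rw [← hγs, ← hγt, h]))
  have hne : ∀ τ ∈ Icc s t, γ τ ≠ p := fun τ hτ h => hpnot ⟨τ, hτ, h⟩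
  have hπangle : angle (a - p) (b - p) = π := by
    have h := EuclideanGeometry.angle_eq_pi_iff_sbtw.mpr hbtw
    simpa [EuclideanGeometry.angle, vsub_eq_sub] using h
  have hsmem : s ∈ Icc s t := ⟨le_refl s, hst⟩
  have htmem : t ∈ Icc s t := ⟨hst, le_refl t⟩
  have hap : a ≠ p := by rw [← hγs]; exact hne s hsmem
  have hbp : b ≠ p := by rw [← hγt]; exact hne t htmem
  refine ENNReal.le_of_forall_nnreal_lt (fun r hr => ?_)
  have hrπ : (r : ℝ) < π := by
    rw [← ENNReal.ofReal_coe_nnreal] at hr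
    exact (ENNReal.ofReal_lt_ofReal_iff Real.pi_pos).mp hr
  -- choose δ
  set δ : ℝ := min 1 (Real.sqrt ((π - r) / π)) with hδdef
  have hδ0 : 0 < δ :=
    lt_min one_pos (Real.sqrt_pos.mpr (div_pos (by linarith) Real.pi_pos))
  have hδ1 : δ ≤ 1 := min_le_left _ _
  have hδππ : δ < π := lt_of_le_of_lt hδ1 (by linarith [Real.pi_gt_three])
  have hδr : (r : ℝ) ≤ (1 - δ^2/4) * π := by
    have hnn : 0 ≤ (π - r) / π := div_nonneg (by linarith) Real.pi_pos.le
    have h1 : δ^2 ≤ (π - r) / π := by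
      have h2 := min_le_right 1 (Real.sqrt ((π - r) / π))
      have h3 := Real.sq_sqrt hnn
      nlinarith [hδ0]
    have h4 : δ^2 * π ≤ π - r := (le_div_iff₀ Real.pi_pos).mp h1
    nlinarith [Real.pi_pos]
  -- normalized curve direction from p
  set w : ℝ → E3 := fun τ => ‖γ τ - p‖⁻¹ • (γ τ - p) with hwdef
  have hwcont : ContinuousOn w (Icc s t) := by
    apply ContinuousOn.smul (f := fun τ => ‖γ τ - p‖⁻¹) (g := fun τ => γ τ - p)
    · exact ((hcont.sub continuous_const).norm.continuousOn).inv₀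
        (fun τ hτ => norm_ne_zero_iff.mpr (sub_ne_zero.mpr (hne τ hτ)))
    · exact (hcont.sub continuous_const).continuousOn
  have hw1 : ∀ τ ∈ Icc s t, ‖w τ‖ = 1 := by
    intro τ hτ
    rw [hwdef]
    simp only
    rw [norm_smul, norm_inv, norm_norm,
      inv_mul_cancel₀ (norm_ne_zero_iff.mpr (sub_ne_zero.mpr (hne τ hτ)))]
  have hsinδ2 : 0 < Real.sin (δ/2) :=
    Real.sin_pos_of_pos_of_lt_pi (by linarith) (by linarith [Real.pi_gt_three])
  have hεpos : 0 < 2 * Real.sin (δ/2) := by linarith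
  have huc := isCompact_Icc.uniformContinuousOn_of_continuous hwcont
  rw [Metric.uniformContinuousOn_iff] at huc
  obtain ⟨d, hd0, hd⟩ := huc (2 * Real.sin (δ/2)) hεpos
  have hangle_small : ∀ τ ∈ Icc s t, ∀ τ' ∈ Icc s t, dist τ τ' < d →
      angle (γ τ - p) (γ τ' - p) ≤ δ := by
    intro τ hτ τ' hτ' hclose
    have hw := hd τ hτ τ' hτ' hclose
    have hposτ : (0:ℝ) < ‖γ τ - p‖⁻¹ :=
      inv_pos.mpr (norm_pos_iff.mpr (sub_ne_zero.mpr (hne τ hτ)))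
    have hposτ' : (0:ℝ) < ‖γ τ' - p‖⁻¹ :=
      inv_pos.mpr (norm_pos_iff.mpr (sub_ne_zero.mpr (hne τ' hτ')))
    have hwang : angle (γ τ - p) (γ τ' - p) = angle (w τ) (w τ') := by
      rw [hwdef]
      simp only
      rw [angle_smul_left_of_pos _ _ hposτ, angle_smul_right_of_pos _ _ hposτ']
    rw [hwang]
    have hinner : Real.cos δ ≤ ⟪w τ, w τ'⟫ := by
      have hnsq : ‖w τ - w τ'‖^2 = 2 - 2 * ⟪w τ, w τ'⟫ := by
        rw [norm_sub_sq_real, hw1 τ hτ, hw1 τ' hτ']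
        ring
      have hd2 : ‖w τ - w τ'‖ < 2 * Real.sin (δ/2) := by
        rw [← dist_eq_norm]; exact hw
      have hcosδ : Real.cos δ = 1 - 2 * Real.sin (δ/2)^2 := by
        have h2 : Real.cos (2 * (δ/2)) = 2 * Real.cos (δ/2)^2 - 1 := Real.cos_two_mul (δ/2)
        have h3 : Real.sin (δ/2)^2 + Real.cos (δ/2)^2 = 1 := Real.sin_sq_add_cos_sq (δ/2)
        rw [show 2 * (δ/2) = δ by ring] at h2
        linarith
      nlinarith [norm_nonneg (w τ - w τ')]
    have heq : angle (w τ) (w τ') = Real.arccos ⟪w τ, w τ'⟫ := by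
      rw [angle, hw1 τ hτ, hw1 τ' hτ']
      norm_num
    rw [heq]
    calc Real.arccos ⟪w τ, w τ'⟫ ≤ Real.arccos (Real.cos δ) := my_arccos_le_arccos hinner
      _ = δ := Real.arccos_cos hδ0.le hδππ.le
  -- partition
  obtain ⟨n, hn⟩ := exists_nat_gt ((t - s) / d)
  have hn0 : 0 < n := by
    have : (0:ℝ) < (t - s) / d := div_pos (by linarith) hd0
    exact_mod_cast Nat.cast_pos.mp (lt_trans this hn)
  have hncast : (0:ℝ) < (n:ℝ) := Nat.cast_pos.mpr hn0
  set h0 : ℝ := (t - s) / n with hh0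
  have hh0pos : 0 < h0 := div_pos (by linarith) hncast
  have hhd : h0 < d := by
    rw [hh0, div_lt_iff₀ hncast]
    have := (div_lt_iff₀ hd0).mp hn
    nlinarith
  set u : ℕ → ℝ := fun i => s + (min i n : ℕ) * h0 with hudef
  have humono : Monotone u := by
    intro i j hij
    have h1 : ((min i n : ℕ) : ℝ) ≤ ((min j n : ℕ) : ℝ) :=
      Nat.cast_le.mpr (min_le_min hij le_rfl)
    simp only [hudef]
    nlinarith
  have humem : ∀ i, u i ∈ Icc s t := by
    intro i
    have h1 : (0:ℝ) ≤ ((min i n : ℕ) : ℝ) := Nat.cast_nonneg _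
    have h2 : ((min i n : ℕ) : ℝ) ≤ (n:ℝ) := Nat.cast_le.mpr (min_le_right _ _)
    constructor
    · simp only [hudef]; nlinarith
    · simp only [hudef]
      have h3 : (n:ℝ) * h0 = t - s := by
        rw [hh0]; field_simp
      nlinarith
  have hu0 : u 0 = s := by simp [hudef]
  have hun : u n = t := by
    simp only [hudef, min_self]
    have h3 : (n:ℝ) * h0 = t - s := by rw [hh0]; field_simp
    linarith
  have hustep : ∀ i, dist (u i) (u (i + 1)) < d := by
    intro i
    have h1 : ((min (i+1) n : ℕ) : ℝ) - ((min i n : ℕ) : ℝ) ≤ 1 := by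
      have hmm : min (i+1) n ≤ min i n + 1 := by omega
      have hmm2 : ((min (i+1) n : ℕ):ℝ) ≤ ((min i n : ℕ):ℝ) + 1 := by exact_mod_cast hmm
      linarith
    have h2 : ((min i n : ℕ) : ℝ) ≤ ((min (i+1) n : ℕ) : ℝ) :=
      Nat.cast_le.mpr (min_le_min (Nat.le_succ i) le_rfl)
    rw [Real.dist_eq]
    simp only [hudef]
    rw [abs_sub_comm, show s + ((min (i+1) n : ℕ):ℝ) * h0 - (s + ((min i n : ℕ):ℝ) * h0)
      = (((min (i+1) n : ℕ):ℝ) - ((min i n : ℕ):ℝ)) * h0 by ring]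
    rw [abs_of_nonneg (by nlinarith)]
    nlinarith
  -- angles
  set θ : ℕ → ℝ := fun i => angle (γ (u i) - p) (γ (u (i+1)) - p) with hθdef
  have hθnonneg : ∀ i, 0 ≤ θ i := fun i => angle_nonneg _ _
  have hθδ : ∀ i, θ i ≤ δ := fun i =>
    hangle_small (u i) (humem i) (u (i+1)) (humem (i+1)) (hustep i)
  have hθsum : π ≤ ∑ i ∈ Finset.range n, θ i := by
    have hchain := my_angle_chain (fun i => γ (u i) - p)
      (by simp only [hu0, hγs]; exact sub_ne_zero.mpr hap) n
    rw [hu0, hun, hγs, hγt, hπangle] at hchain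
    exact hchain
  have hsinθ : ∀ i, (1 - δ^2/4) * θ i ≤ Real.sin (θ i) := by
    intro i
    rcases eq_or_lt_of_le (hθnonneg i) with h | h
    · rw [← h]; simp
    · have h1 : θ i ≤ 1 := le_trans (hθδ i) hδ1
      have h2 := Real.sin_gt_sub_cube h
      have h3 : θ i^2 ≤ δ^2 := by nlinarith [hθδ i]
      have h4 : θ i * θ i^2 ≤ θ i * δ^2 := mul_le_mul_of_nonneg_left h3 h.le
      nlinarith [h2, h4]
  have hdistθ : ∀ i, Real.sin (θ i) ≤ dist (γ (u (i+1))) (γ (u i)) := by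
    intro i
    rw [dist_comm]
    exact my_sin_angle_le_dist hthick hp ⟨u i, rfl⟩ ⟨u (i+1), rfl⟩
      (hne (u i) (humem i)) (hne (u (i+1)) (humem (i+1)))
  -- sum it up
  have hsum : (r:ℝ) ≤ ∑ i ∈ Finset.range n, dist (γ (u (i+1))) (γ (u i)) := by
    have c1 : (1 - δ^2/4) * π ≤ ∑ i ∈ Finset.range n, (1 - δ^2/4) * θ i := by
      rw [← Finset.mul_sum]
      have hfac : 0 ≤ 1 - δ^2/4 := by nlinarith
      nlinarith [hθsum]
    have c2 : ∑ i ∈ Finset.range n, (1 - δ^2/4) * θ i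
        ≤ ∑ i ∈ Finset.range n, dist (γ (u (i+1))) (γ (u i)) :=
      Finset.sum_le_sum (fun i _ => le_trans (hsinθ i) (hdistθ i))
    linarith
  have hvar := eVariationOn.sum_le (f := γ) (n := n) humono (fun i => humem i)
  calc (r : ℝ≥0∞) = ENNReal.ofReal (r:ℝ) := by rw [ENNReal.ofReal_coe_nnreal]
    _ ≤ ENNReal.ofReal (∑ i ∈ Finset.range n, dist (γ (u (i+1))) (γ (u i))) :=
        ENNReal.ofReal_le_ofReal hsum
    _ = ∑ i ∈ Finset.range n, edist (γ (u (i+1))) (γ (u i)) := by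
        rw [ENNReal.ofReal_sum_of_nonneg (fun i _ => dist_nonneg)]
        congr 1
        ext i
        rw [edist_dist]
    _ ≤ eVariationOn γ (Set.Icc s t) := hvar


end MainProof
end

section
/- Let K be a closed curve of unit thickness, a, b ∈ K, and p a point on the subarc of K from a to b such that both a and b lie outside the open unit ball B(p). Then the complementary subarc of K from b to a lies entirely outside B(p). -/
open Real Set

open RealInnerProductSpace

/-- Two parameters whose difference is strictly between `0` and the period give
distinct points on an (essentially) injective periodic curve. -/
lemma gammaNe (γ : ℝ → E3) (L : ℝ) (hL : 0 < L)
    (hper : Function.Periodic γ L) (hinj : Set.InjOn γ (Set.Ico 0 L))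
    {x y : ℝ} (h1 : 0 < y - x) (h2 : y - x < L) : γ x ≠ γ y := by
  intro heq
  have hx : x - (⌊x / L⌋ : ℝ) * L ∈ Set.Ico (0:ℝ) L :=
    ⟨Int.sub_floor_div_mul_nonneg x hL, Int.sub_floor_div_mul_lt x hL⟩
  have hy : y - (⌊y / L⌋ : ℝ) * L ∈ Set.Ico (0:ℝ) L :=
    ⟨Int.sub_floor_div_mul_nonneg y hL, Int.sub_floor_div_mul_lt y hL⟩
  have ex : γ (x - (⌊x / L⌋ : ℝ) * L) = γ x := hper.sub_int_mul_eq _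
  have ey : γ (y - (⌊y / L⌋ : ℝ) * L) = γ y := hper.sub_int_mul_eq _
  have heq2 : x - (⌊x / L⌋ : ℝ) * L = y - (⌊y / L⌋ : ℝ) * L :=
    hinj hx hy (by rw [ex, ey, heq])
  have hk : ((⌊y / L⌋ - ⌊x / L⌋ : ℤ) : ℝ) * L = y - x := by push_cast; linarith
  have hk0 : (0:ℝ) < ((⌊y / L⌋ - ⌊x / L⌋ : ℤ) : ℝ) := by
    by_contra h
    push_neg at h
    nlinarith
  have hk1 : ((⌊y / L⌋ - ⌊x / L⌋ : ℤ) : ℝ) < 1 := by nlinarith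
  have i0 : (0:ℤ) < ⌊y / L⌋ - ⌊x / L⌋ := by exact_mod_cast hk0
  have i1 : ⌊y / L⌋ - ⌊x / L⌋ < 1 := by exact_mod_cast hk1
  omega

set_option maxHeartbeats 1600000 in
/-- If `z1, z2` both lie at distance `r` from `p` and are close to each other
(relative to `r < 1`), then the circumscribed circle of `p, z1, z2` has
radius less than `1/2`. -/
lemma circum (p z1 z2 : E3) (r : ℝ) (hr : 0 < r)
    (h1 : dist z1 p = r) (h2 : dist z2 p = r)
    (hsmall : dist z1 z2 ^ 2 < r ^ 2 * (1 - r ^ 2)) :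
    ∃ (c : E3) (ρ : ℝ), dist p c = ρ ∧ dist z1 c = ρ ∧ dist z2 c = ρ ∧ ρ < 1 / 2 := by
  set d : ℝ := dist z1 z2 with hd
  have hd0 : 0 ≤ d := dist_nonneg
  set u : E3 := z1 - p with hu'
  set v : E3 := z2 - p with hv'
  have hu : ‖u‖ = r := by rw [hu', ← dist_eq_norm]; exact h1
  have hv : ‖v‖ = r := by rw [hv', ← dist_eq_norm]; exact h2
  have huv : ‖u - v‖ = d := by
    rw [hu', hv', sub_sub_sub_cancel_right, ← dist_eq_norm]
  clear_value d u v
  have hip : ⟪u, v⟫ = r ^ 2 - d ^ 2 / 2 := by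
    have h := norm_sub_sq_real u v
    rw [huv, hu, hv] at h
    linarith
  have hD : 0 < 4 * r ^ 2 - d ^ 2 := by nlinarith
  set α : ℝ := r ^ 2 / (4 * r ^ 2 - d ^ 2) with hα
  clear_value α
  set c : E3 := p + α • (u + v) with hc
  clear_value c
  have hw2 : ‖u + v‖ ^ 2 = 4 * r ^ 2 - d ^ 2 := by
    rw [norm_add_sq_real, hu, hv, hip]; ring
  have hαD : α * (4 * r ^ 2 - d ^ 2) = r ^ 2 := by
    rw [hα]; exact div_mul_cancel₀ _ hD.ne'
  have hpc : dist p c ^ 2 = α ^ 2 * (4 * r ^ 2 - d ^ 2) := by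
    have e : p - c = -(α • (u + v)) := by rw [hc]; abel
    rw [dist_eq_norm, e, norm_neg, norm_smul, Real.norm_eq_abs, mul_pow, sq_abs, hw2]
  have expand : ∀ x : E3, ‖x - α • (u + v)‖ ^ 2
      = ‖x‖ ^ 2 - 2 * α * ⟪x, u + v⟫ + α ^ 2 * ‖u + v‖ ^ 2 := by
    intro x
    rw [norm_sub_sq_real, real_inner_smul_right, norm_smul, Real.norm_eq_abs, mul_pow, sq_abs]
    ring
  have hz1c : dist z1 c ^ 2 = α ^ 2 * (4 * r ^ 2 - d ^ 2) := by
    have e : z1 - c = u - α • (u + v) := by rw [hc, hu']; abel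
    rw [dist_eq_norm, e, expand, inner_add_right, real_inner_self_eq_norm_sq, hu, hip, hw2]
    linear_combination -hαD
  have hz2c : dist z2 c ^ 2 = α ^ 2 * (4 * r ^ 2 - d ^ 2) := by
    have e : z2 - c = v - α • (u + v) := by rw [hc, hv']; abel
    rw [dist_eq_norm, e, expand, inner_add_right, real_inner_self_eq_norm_sq, hv,
      real_inner_comm, hip, hw2]
    linear_combination -hαD
  refine ⟨c, dist p c, rfl, ?_, ?_, ?_⟩
  · have e : dist z1 c = Real.sqrt (dist z1 c ^ 2) := (Real.sqrt_sq dist_nonneg).symm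
    rw [e, hz1c, ← hpc, Real.sqrt_sq dist_nonneg]
  · have e : dist z2 c = Real.sqrt (dist z2 c ^ 2) := (Real.sqrt_sq dist_nonneg).symm
    rw [e, hz2c, ← hpc, Real.sqrt_sq dist_nonneg]
  · have hlt : dist p c ^ 2 < (1/2) ^ 2 := by
      rw [hpc]
      have h4 : 4 * r ^ 4 < 4 * r ^ 2 - d ^ 2 := by nlinarith
      have key : α ^ 2 * (4 * r ^ 2 - d ^ 2) * (4 * r ^ 2 - d ^ 2) = r ^ 4 := by
        rw [show α ^ 2 * (4 * r ^ 2 - d ^ 2) * (4 * r ^ 2 - d ^ 2) = (α * (4 * r ^ 2 - d ^ 2)) ^ 2 by ring, hαD]; ring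
      nlinarith [key, h4, hD]
    nlinarith [dist_nonneg (x := p) (y := c)]

set_option maxHeartbeats 1600000 in
/-- For a closed curve of unit thickness, if `p` lies on the subarc from `a` to `b`
and both `a` and `b` lie outside the open unit ball `B(p)`, then the complementary
subarc from `b` to `a` lies entirely outside `B(p)`. -/
theorem stmt15 (γ : ℝ → E3) (L : ℝ) (hL : 0 < L) (hcont : Continuous γ)
    (hper : Function.Periodic γ L) (hinj : Set.InjOn γ (Set.Ico 0 L))
    (hthick : ThickOne (Set.range γ))
    (s t : ℝ) (hst : s < t) (htL : t < s + L)
    (a b p : E3) (hγs : γ s = a) (hγt : γ t = b)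
    (hp : p ∈ γ '' Set.Icc s t)
    (hap : 1 ≤ dist a p) (hbp : 1 ≤ dist b p) :
    ∀ u ∈ Set.Icc t (s + L), 1 ≤ dist (γ u) p := by
  intro u hu
  by_contra hbad
  push_neg at hbad
  obtain ⟨w, hw, hpw⟩ := hp
  -- minimize distance to p over the complementary arc
  have hhc : Continuous (fun x : ℝ => dist (γ x) p) := hcont.dist continuous_const
  have hts : t ≤ s + L := le_of_lt htL
  obtain ⟨u0, hu0mem, hu0min'⟩ :=
    isCompact_Icc.exists_isMinOn ⟨t, le_refl t, hts⟩ hhc.continuousOn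
  have hu0min : ∀ x ∈ Set.Icc t (s + L), dist (γ u0) p ≤ dist (γ x) p :=
    fun x hx => hu0min' hx
  set r0 : ℝ := dist (γ u0) p with hr0def
  clear_value r0
  have hr0lt1 : r0 < 1 := lt_of_le_of_lt (hu0min u hu) hbad
  have hht : 1 ≤ dist (γ t) p := by rw [hγt]; exact hbp
  have hhsL : 1 ≤ dist (γ (s + L)) p := by rw [hper s, hγs]; exact hap
  have hu0t : t < u0 := by
    rcases lt_or_eq_of_le hu0mem.1 with h | h
    · exact h
    · exfalso
      have e : (1:ℝ) ≤ r0 := by rw [hr0def, ← h]; exact hht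
      linarith
  have hu0sL : u0 < s + L := by
    rcases lt_or_eq_of_le hu0mem.2 with h | h
    · exact h
    · exfalso
      have e : (1:ℝ) ≤ r0 := by rw [hr0def, h]; exact hhsL
      linarith
  have hr0pos : 0 < r0 := by
    have hne : γ w ≠ γ u0 := by
      apply gammaNe γ L hL hper hinj
      · have := hw.2; linarith
      · have := hw.1; linarith
    rw [hr0def, ← hpw]
    exact dist_pos.mpr fun h => hne h.symm
  set r1 : ℝ := (1 + r0) / 2 with hr1def
  have hr0r1 : r0 < r1 := by rw [hr1def]; linarith
  have hr11 : r1 < 1 := by rw [hr1def]; linarith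
  have hr1pos : 0 < r1 := by rw [hr1def]; linarith
  have hr1sq : (0:ℝ) < 1 - r1 ^ 2 := by nlinarith
  clear_value r1
  set ε : ℝ := r0 * Real.sqrt (1 - r1 ^ 2) with hεdef
  have hεpos : 0 < ε := mul_pos hr0pos (Real.sqrt_pos.mpr hr1sq)
  clear_value ε
  -- continuity at u0
  obtain ⟨δ, hδpos, hδ⟩ := Metric.continuous_iff.mp hcont u0 (ε / 2) (by positivity)
  set η : ℝ := min (δ / 2) (min ((u0 - t) / 2) (min ((s + L - u0) / 2) (L / 4))) with hηdef
  have hηδ : η ≤ δ / 2 := min_le_left _ _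
  have hηt : η ≤ (u0 - t) / 2 := le_trans (min_le_right _ _) (min_le_left _ _)
  have hηs : η ≤ (s + L - u0) / 2 :=
    le_trans (min_le_right _ _) (le_trans (min_le_right _ _) (min_le_left _ _))
  have hηL : η ≤ L / 4 :=
    le_trans (min_le_right _ _) (le_trans (min_le_right _ _) (min_le_right _ _))
  have hηpos : 0 < η := by
    apply lt_min (by linarith)
    apply lt_min (by linarith)
    exact lt_min (by linarith) (by linarith)
  clear_value η
  have hnear : ∀ x : ℝ, |x - u0| ≤ η → dist (γ x) (γ u0) < ε / 2 := by
    intro x hx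
    apply hδ
    rw [Real.dist_eq]
    linarith
  have hmem1 : u0 - η ∈ Set.Icc t (s + L) := ⟨by linarith, by linarith⟩
  have hmem2 : u0 + η ∈ Set.Icc t (s + L) := ⟨by linarith, by linarith⟩
  have hc1 : r0 ≤ dist (γ (u0 - η)) p := hu0min _ hmem1
  have hc2 : r0 ≤ dist (γ (u0 + η)) p := hu0min _ hmem2
  -- produce two nearby distinct points at the same distance r from p
  obtain ⟨u1, u2, r, h12, hdiffL, hv1, hv2, hrge, hrle, hd1, hd2⟩ :
      ∃ u1 u2 r, 0 < u2 - u1 ∧ u2 - u1 < L ∧ dist (γ u1) p = r ∧ dist (γ u2) p = r ∧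
        r0 ≤ r ∧ r ≤ r1 ∧ dist (γ u1) (γ u0) < ε / 2 ∧ dist (γ u2) (γ u0) < ε / 2 := by
    by_cases hcase1 : dist (γ (u0 - η)) p = r0
    · refine ⟨u0 - η, u0, r0, by linarith, by linarith, hcase1, hr0def.symm, le_refl _,
        le_of_lt hr0r1, ?_, ?_⟩
      · apply hnear; rw [abs_of_nonpos (by linarith)]; simp
      · rw [dist_self]; positivity
    by_cases hcase2 : dist (γ (u0 + η)) p = r0
    · refine ⟨u0, u0 + η, r0, by linarith, by linarith, hr0def.symm, hcase2, le_refl _,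
        le_of_lt hr0r1, ?_, ?_⟩
      · rw [dist_self]; positivity
      · apply hnear; rw [abs_of_nonneg (by linarith)]; linarith
    · have hc1' : r0 < dist (γ (u0 - η)) p := lt_of_le_of_ne hc1 (Ne.symm hcase1)
      have hc2' : r0 < dist (γ (u0 + η)) p := lt_of_le_of_ne hc2 (Ne.symm hcase2)
      set r : ℝ := min (min (dist (γ (u0 - η)) p) (dist (γ (u0 + η)) p)) r1 with hrdef
      have hrgt : r0 < r := lt_min (lt_min hc1' hc2') hr0r1
      have hrler1 : r ≤ r1 := min_le_right _ _
      have hr_le1 : r ≤ dist (γ (u0 - η)) p :=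
        le_trans (min_le_left _ _) (min_le_left _ _)
      have hr_le2 : r ≤ dist (γ (u0 + η)) p :=
        le_trans (min_le_left _ _) (min_le_right _ _)
      clear_value r
      obtain ⟨u1, hu1mem, hu1val⟩ :=
        intermediate_value_Icc' (by linarith : u0 - η ≤ u0) hhc.continuousOn
          (⟨by rw [← hr0def]; exact le_of_lt hrgt, hr_le1⟩ :
            r ∈ Set.Icc (dist (γ u0) p) (dist (γ (u0 - η)) p))
      obtain ⟨u2, hu2mem, hu2val⟩ :=
        intermediate_value_Icc (by linarith : u0 ≤ u0 + η) hhc.continuousOn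
          (⟨by rw [← hr0def]; exact le_of_lt hrgt, hr_le2⟩ :
            r ∈ Set.Icc (dist (γ u0) p) (dist (γ (u0 + η)) p))
      have hu1ne : u1 ≠ u0 := by
        intro h
        rw [h] at hu1val
        have e : dist (γ u0) p = r := hu1val
        have e2 := hrgt
        rw [hr0def] at e2
        linarith
      have hu1lt : u1 < u0 := lt_of_le_of_ne hu1mem.2 hu1ne
      refine ⟨u1, u2, r, by linarith [hu2mem.1], ?_, hu1val, hu2val, le_of_lt hrgt,
        hrler1, ?_, ?_⟩
      · have := hu1mem.1; have := hu2mem.2; linarith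
      · apply hnear; rw [abs_of_nonpos (by linarith)]; have := hu1mem.1; linarith
      · apply hnear; rw [abs_of_nonneg (by linarith [hu2mem.1])]; have := hu2mem.2; linarith
  have hrpos : 0 < r := lt_of_lt_of_le hr0pos hrge
  -- the two points are distinct and close
  have hzne : γ u1 ≠ γ u2 := gammaNe γ L hL hper hinj h12 hdiffL
  have hdlt : dist (γ u1) (γ u2) < ε := by
    calc dist (γ u1) (γ u2) ≤ dist (γ u1) (γ u0) + dist (γ u0) (γ u2) := dist_triangle _ _ _
      _ = dist (γ u1) (γ u0) + dist (γ u2) (γ u0) := by rw [dist_comm (γ u0)]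
      _ < ε / 2 + ε / 2 := by linarith
      _ = ε := by ring
  have hεsq : ε ^ 2 = r0 ^ 2 * (1 - r1 ^ 2) := by
    rw [hεdef, mul_pow, Real.sq_sqrt (le_of_lt hr1sq)]
  have hdsq : dist (γ u1) (γ u2) ^ 2 < r ^ 2 * (1 - r ^ 2) := by
    have h1 : dist (γ u1) (γ u2) ^ 2 < ε ^ 2 := by
      nlinarith [dist_nonneg (x := γ u1) (y := γ u2)]
    have e1 : r0 ^ 2 ≤ r ^ 2 := by nlinarith
    have e2 : 1 - r1 ^ 2 ≤ 1 - r ^ 2 := by nlinarith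
    have e3 : r0 ^ 2 * (1 - r1 ^ 2) ≤ r ^ 2 * (1 - r ^ 2) :=
      mul_le_mul e1 e2 (le_of_lt hr1sq) (by positivity)
    linarith [hεsq ▸ h1]
  obtain ⟨c, ρ, e0, e1, e2, hρ⟩ := circum p (γ u1) (γ u2) r hrpos hv1 hv2 hdsq
  have hp1 : p ≠ γ u1 := by
    intro h
    rw [← h] at hv1
    rw [dist_self] at hv1
    linarith
  have hp2 : p ≠ γ u2 := by
    intro h
    rw [← h] at hv2
    rw [dist_self] at hv2
    linarith
  have hpmem : p ∈ Set.range γ := ⟨w, hpw⟩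
  have := hthick p hpmem (γ u1) ⟨u1, rfl⟩ (γ u2) ⟨u2, rfl⟩ hp1 hzne hp2 c ρ e0 e1 e2
  linarith
end
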